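/- arXiv:1609.02858 — 8 statements merged into one kernel-verified Lean document; each statement's English description precedes it below -/
import Mathlib

section
/- Let E be a real inner product space and let L ⊆ E be a lattice of rank two, i.e. a discrete additive subgroup that is free of rank 2 as a ℤ-module. Suppose τ : L → L is an additive bijection satisfying ‖τ(x)‖ = ‖x‖ for all x ∈ L and τ²(x) + τ(x) + x = 0 for all x ∈ L. Then L is a hexagonal lattice: there exists a ℤ-basis b₁, b₂ of L with ‖b₁‖ = ‖b₂‖ = ‖b₁ − b₂‖ (equivalently, L is isometric to M·ℤ[ζ₃] ⊂ ℂ for some real M > 0, where ζ₃ is a primitive cube root of unity). -/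
section Aux

variable {E : Type*} [NormedAddCommGroup E] [InnerProductSpace ℝ E]

private lemma hex_norm_sq (m t : E) (ht : ‖t‖ = ‖m‖)
    (hin : inner ℝ m t = -(‖m‖ ^ 2) / 2) (a c : ℝ) :
    ‖a • m + c • t‖ ^ 2 = (a ^ 2 - a * c + c ^ 2) * ‖m‖ ^ 2 := by
  rw [norm_add_sq_real, real_inner_smul_left, real_inner_smul_right, hin,
    norm_smul, norm_smul, ht, mul_pow, mul_pow]
  simp only [Real.norm_eq_abs, sq_abs]
  ring

private lemma hex_indep (m t : E) (hm : m ≠ 0) (ht : ‖t‖ = ‖m‖)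
    (hin : inner ℝ m t = -(‖m‖ ^ 2) / 2) :
    ∀ a c : ℝ, a • m + c • t = 0 → a = 0 ∧ c = 0 := by
  intro a c h
  have h1 : ‖a • m + c • t‖ ^ 2 = (a ^ 2 - a * c + c ^ 2) * ‖m‖ ^ 2 :=
    hex_norm_sq m t ht hin a c
  have h1' : (a ^ 2 - a * c + c ^ 2) * ‖m‖ ^ 2 = 0 := by
    rw [← h1, h, norm_zero]; norm_num
  have hm' : (0:ℝ) < ‖m‖ ^ 2 := pow_pos (norm_pos_iff.mpr hm) 2
  have h2 : a ^ 2 - a * c + c ^ 2 = 0 := by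
    rcases mul_eq_zero.mp h1' with h | h
    · exact h
    · nlinarith
  constructor
  · nlinarith [sq_nonneg (a - c), sq_nonneg (a + c), sq_nonneg a, sq_nonneg c]
  · nlinarith [sq_nonneg (a - c), sq_nonneg (a + c), sq_nonneg a, sq_nonneg c]

end Aux

/-- A rank-two lattice `L` in a real inner product space admitting an isometry `τ` with
`τ² + τ + 1 = 0` is hexagonal: it has a ℤ-basis `b₁, b₂` with `‖b₁‖ = ‖b₂‖ = ‖b₁ − b₂‖`. -/
theorem hexagonal_of_isometry_order_three
    {E : Type*} [NormedAddCommGroup E] [InnerProductSpace ℝ E]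
    (L : AddSubgroup E) (hdisc : DiscreteTopology L)
    (b : Module.Basis (Fin 2) ℤ L)
    (τ : L ≃+ L)
    (hiso : ∀ x : L, ‖((τ x : L) : E)‖ = ‖(x : E)‖)
    (hpoly : ∀ x : L, τ (τ x) + τ x + x = 0) :
    ∃ c : Module.Basis (Fin 2) ℤ L,
      ‖((c 0 : L) : E)‖ = ‖((c 1 : L) : E)‖ ∧
      ‖((c 0 : L) : E)‖ = ‖((c 0 : L) : E) - ((c 1 : L) : E)‖ := by
  classical
  have hb0 : (b 0 : L) ≠ 0 := b.ne_zero 0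
  have hb0E : ((b 0 : L) : E) ≠ 0 := fun h => hb0 (ZeroMemClass.coe_eq_zero.mp h)
  -- L is closed
  have hLclosed : IsClosed (L : Set E) := AddSubgroup.isClosed_of_discrete
  -- the real span of the lattice
  set V : Submodule ℝ E := Submodule.span ℝ {((b 0 : L) : E), ((b 1 : L) : E)} with hVdef
  have hLV : ∀ y : L, (y : E) ∈ V := by
    intro y
    have hy := b.sum_repr y
    rw [Fin.sum_univ_two] at hy
    have hyE : (y : E) = (b.repr y 0) • ((b 0 : L) : E) + (b.repr y 1) • ((b 1 : L) : E) := by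
      conv_lhs => rw [← hy]
      push_cast
      ring_nf
    rw [hyE]
    exact add_mem (zsmul_mem (Submodule.subset_span (by simp)) _)
      (zsmul_mem (Submodule.subset_span (by simp)) _)
  have hVfd : FiniteDimensional ℝ V :=
    FiniteDimensional.span_of_finite ℝ ((Set.finite_singleton _).insert _)
  -- finiteness of bounded subsets of L
  have hfin : ∀ R : ℝ, ({y : E | y ∈ L ∧ ‖y‖ ≤ R}).Finite := by
    intro R
    set S : Set E := {y : E | y ∈ L ∧ ‖y‖ ≤ R} with hS
    have hSV : S ⊆ (V : Set E) := fun y hy => hLV ⟨y, hy.1⟩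
    set S' : Set V := Subtype.val ⁻¹' S with hS'
    have hSclosed : IsClosed S := by
      have : S = (L : Set E) ∩ {y : E | ‖y‖ ≤ R} := rfl
      rw [this]
      exact hLclosed.inter (isClosed_le continuous_norm continuous_const)
    have hS'closed : IsClosed S' := hSclosed.preimage continuous_subtype_val
    have hS'bdd : Bornology.IsBounded S' := by
      apply Bornology.IsBounded.subset (Metric.isBounded_closedBall (x := (0 : V)) (r := R))
      intro v hv
      simp only [Metric.mem_closedBall, dist_zero_right]
      have : ‖(v : E)‖ ≤ R := hv.2
      simpa using this
    have hS'comp : IsCompact S' := Metric.isCompact_of_isClosed_isBounded hS'closed hS'bdd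
    have hScomp : IsCompact S := by
      have : S = Subtype.val '' S' := by
        ext y
        constructor
        · intro hy; exact ⟨⟨y, hSV hy⟩, hy, rfl⟩
        · rintro ⟨v, hv, rfl⟩; exact hv
      rw [this]
      exact hS'comp.image continuous_subtype_val
    have hSdisc : DiscreteTopology S :=
      DiscreteTopology.of_subset hdisc (fun y hy => hy.1)
    exact hScomp.finite ⟨hSdisc⟩
  -- minimal nonzero vector
  set R0 : ℝ := ‖((b 0 : L) : E)‖ with hR0
  set T : Set E := {y : E | y ∈ L ∧ y ≠ 0 ∧ ‖y‖ ≤ R0} with hT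
  have hTfin : T.Finite := (hfin R0).subset (fun y hy => ⟨hy.1, hy.2.2⟩)
  have hTne : T.Nonempty := ⟨((b 0 : L) : E), (b 0).2, hb0E, le_refl _⟩
  obtain ⟨m0, hm0T, hm0min⟩ := Set.exists_min_image T norm hTfin hTne
  set m : L := ⟨m0, hm0T.1⟩ with hmdef
  have hmne : m ≠ 0 := fun h => hm0T.2.1 (by simpa [hmdef, ZeroMemClass.coe_eq_zero] using h)
  have hmE : (m : E) ≠ 0 := fun h => hmne (ZeroMemClass.coe_eq_zero.mp h)
  have hmin : ∀ y : L, y ≠ 0 → ‖(m : E)‖ ≤ ‖(y : E)‖ := by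
    intro y hy
    have hyE : (y : E) ≠ 0 := fun h => hy (ZeroMemClass.coe_eq_zero.mp h)
    by_cases h : ‖(y : E)‖ ≤ R0
    · exact hm0min _ ⟨y.2, hyE, h⟩
    · exact le_trans (hm0T.2.2) (le_of_not_ge h)
  -- the vector t
  set t : L := τ m with htdef
  have htn : ‖(t : E)‖ = ‖(m : E)‖ := hiso m
  have htau : τ t = -(τ m) - m := by
    have h1 : τ (τ m) + τ m = -m := eq_neg_of_add_eq_zero_left (hpoly m)
    have h2 : τ (τ m) = -m - τ m := eq_sub_of_add_eq h1
    rw [htdef, h2]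
    abel
  have htt : ((τ t : L) : E) = -((m : E) + (t : E)) := by
    rw [htau]
    push_cast
    abel
  have hmt : ‖(m : E) + (t : E)‖ = ‖(m : E)‖ := by
    have h1 : ‖((τ t : L) : E)‖ = ‖(t : E)‖ := hiso t
    rw [htt, norm_neg] at h1
    rw [h1, htn]
  have hin : inner ℝ (m : E) (t : E) = -(‖(m : E)‖ ^ 2) / 2 := by
    have h1 := norm_add_sq_real (m : E) (t : E)
    rw [hmt, htn] at h1
    linarith
  have hindep := hex_indep (m : E) (t : E) hmE htn hin
  -- decomposition of any lattice vector
  have hdecomp : ∀ y : L, ∃ p q : ℤ, y = p • m + q • t := by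
    intro y
    -- span {m, t} = V
    have hWle : Submodule.span ℝ {((m : L) : E), ((t : L) : E)} ≤ V :=
      Submodule.span_le.mpr (by
        rintro x (rfl | rfl)
        · exact hLV m
        · exact hLV t)
    have hli : LinearIndependent ℝ ![(m : E), (t : E)] :=
      LinearIndependent.pair_iff.mpr hindep
    have hWrank : Module.finrank ℝ (Submodule.span ℝ {((m : L) : E), ((t : L) : E)}) = 2 := by
      have h1 := finrank_span_eq_card hli
      have hr : Set.range ![(m : E), (t : E)] = {((m : L) : E), ((t : L) : E)} := by
        simp [Matrix.range_cons, Matrix.range_empty, Set.pair_comm]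
      rw [hr] at h1
      simpa using h1
    have hVrank : Module.finrank ℝ V ≤ 2 := by
      have h1 : Module.finrank ℝ V ≤ ({((b 0 : L) : E), ((b 1 : L) : E)} : Set E).toFinset.card :=
        finrank_span_le_card _
      refine le_trans h1 ?_
      rw [Set.toFinset_insert, Set.toFinset_singleton]
      exact le_trans (Finset.card_insert_le _ _) (by simp)
    have hWV : Submodule.span ℝ {((m : L) : E), ((t : L) : E)} = V :=
      Submodule.eq_of_le_of_finrank_le hWle (by rw [hWrank]; exact hVrank)
    have hy : (y : E) ∈ Submodule.span ℝ {((m : L) : E), ((t : L) : E)} := by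
      rw [hWV]; exact hLV y
    obtain ⟨α, β, hab⟩ := Submodule.mem_span_pair.mp hy
    -- round the coefficients
    set p : ℤ := round α with hp
    set q : ℤ := round β with hq
    set y' : L := y - p • m - q • t with hy'
    have hy'E : (y' : E) = (α - p) • (m : E) + (β - q) • (t : E) := by
      have h0 : (y' : E) = (y : E) - (p : ℤ) • (m : E) - (q : ℤ) • (t : E) := by
        rw [hy']; push_cast; abel
      rw [h0, ← hab, ← Int.cast_smul_eq_zsmul ℝ p ((m : L) : E),
        ← Int.cast_smul_eq_zsmul ℝ q ((t : L) : E)]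
      module
    have hnorm : ‖(y' : E)‖ ^ 2 ≤ (3 / 4) * ‖(m : E)‖ ^ 2 := by
      rw [hy'E, hex_norm_sq _ _ htn hin]
      have ha : |α - p| ≤ 1 / 2 := abs_sub_round α
      have hb : |β - q| ≤ 1 / 2 := abs_sub_round β
      have h2 : (α - p) ^ 2 ≤ (1/2 : ℝ)^2 := by
        rw [← sq_abs]; exact pow_le_pow_left₀ (abs_nonneg _) ha 2
      have h3 : (β - q) ^ 2 ≤ (1/2 : ℝ)^2 := by
        rw [← sq_abs]; exact pow_le_pow_left₀ (abs_nonneg _) hb 2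
      have h4 : -((α - p) * (β - q)) ≤ 1/4 := by
        have := abs_mul (α - p) (β - q)
        have h5 : |α - p| * |β - q| ≤ (1/2) * (1/2) :=
          mul_le_mul ha hb (abs_nonneg _) (by norm_num)
        nlinarith [neg_abs_le ((α - p) * (β - q))]
      have hm2 : (0:ℝ) ≤ ‖(m : E)‖ ^ 2 := by positivity
      have hfac : (α - p) ^ 2 - (α - p) * (β - q) + (β - q) ^ 2 ≤ 3 / 4 := by
        norm_num at h2 h3
        linarith
      exact mul_le_mul_of_nonneg_right hfac hm2
    have hy'0 : y' = 0 := by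
      by_contra h
      have h1 := hmin y' h
      have h2 : ‖(m : E)‖ ^ 2 ≤ ‖(y' : E)‖ ^ 2 :=
        pow_le_pow_left₀ (norm_nonneg _) h1 2
      have hm2 : (0:ℝ) < ‖(m : E)‖ ^ 2 := pow_pos (norm_pos_iff.mpr hmE) 2
      linarith
    refine ⟨p, q, ?_⟩
    have h6 : y - p • m - q • t = 0 := hy'0
    have h7 : y - (p • m + q • t) = 0 := by rw [← sub_sub]; exact h6
    exact sub_eq_zero.mp h7
  -- build the basis
  set v : Fin 2 → L := ![m, -t] with hv
  have hli : LinearIndependent ℤ v := by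
    rw [hv]
    apply LinearIndependent.pair_iff.mpr
    intro s u h
    have h0 : ((s • m + u • (-t) : L) : E) = 0 := by rw [h]; simp
    have hE : (s : ℝ) • (m : E) + (-(u : ℝ)) • (t : E) = 0 := by
      rw [← h0]
      push_cast
      rw [← Int.cast_smul_eq_zsmul ℝ s ((m : L) : E),
        ← Int.cast_smul_eq_zsmul ℝ u (-((t : L) : E))]
      module
    obtain ⟨h1, h2⟩ := hindep _ _ hE
    constructor
    · exact_mod_cast h1
    · have h3 : (u : ℝ) = 0 := by linarith [neg_eq_zero.mp h2]
      exact_mod_cast h3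
  have hspan : ⊤ ≤ Submodule.span ℤ (Set.range v) := by
    intro y _
    obtain ⟨p, q, hpq⟩ := hdecomp y
    have hr : Set.range v = {m, -t} := by
      rw [hv]; simp [Matrix.range_cons, Matrix.range_empty, Set.pair_comm]
    rw [hr, Submodule.mem_span_pair]
    refine ⟨p, -q, ?_⟩
    rw [hpq, smul_neg, neg_smul, neg_neg]
  refine ⟨Module.Basis.mk hli hspan, ?_, ?_⟩
  · rw [Module.Basis.mk_apply, Module.Basis.mk_apply]
    show ‖((m : L) : E)‖ = ‖((-t : L) : E)‖
    push_cast
    rw [norm_neg, htn]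
  · rw [Module.Basis.mk_apply, Module.Basis.mk_apply]
    show ‖((m : L) : E)‖ = ‖((m : L) : E) - ((-t : L) : E)‖
    push_cast
    rw [sub_neg_eq_add, hmt]
end

section
/- Let F be a cyclic cubic field with Galois group generated by σ and ring of integers O_F. Then there exists f ∈ O_F with Tr_{F/ℚ}(f) = f + σ(f) + σ²(f) = 0 such that, writing M for the additive subgroup of O_F generated by 1, f and σ(f) (i.e. M = ℤ ⊕ ℤ[σ]·f), either (i) O_F = M, or (ii) M ⊊ O_F and the index [O_F : M] equals 3. -/
open NumberField
open scoped nonZeroDivisors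

/-- `‖uf‖² = u₀²f₀² + u₁²f₁² + u₂²f₂²` where `fᵢ = ι(σ^i f)`. -/
noncomputable def unorm2 {F : Type*} [Field F] [Algebra ℚ F] (σ : F ≃ₐ[ℚ] F) (ι : F →+* ℝ)
    (u : Fin 3 → ℝ) (f : F) : ℝ :=
  (u 0) ^ 2 * (ι f) ^ 2 + (u 1) ^ 2 * (ι (σ f)) ^ 2 + (u 2) ^ 2 * (ι (σ (σ f))) ^ 2

/-- `‖f‖² = f₀² + f₁² + f₂²` where `fᵢ = ι(σ^i f)`. -/
noncomputable def fnorm2 {F : Type*} [Field F] [Algebra ℚ F] (σ : F ≃ₐ[ℚ] F) (ι : F →+* ℝ)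
    (f : F) : ℝ :=
  (ι f) ^ 2 + (ι (σ f)) ^ 2 + (ι (σ (σ f))) ^ 2

/-- `k⁰(S, u) = ∑_{f ∈ S} exp(−π‖uf‖²)`. -/
noncomputable def k0 {F : Type*} [Field F] [Algebra ℚ F] (σ : F ≃ₐ[ℚ] F) (ι : F →+* ℝ)
    (S : Set F) (u : Fin 3 → ℝ) : ℝ :=
  ∑' g : S, Real.exp (-Real.pi * unorm2 σ ι u (g : F))



open Module


/-- A positive definite integral binary quadratic form of discriminant -3 represents 1. -/
theorem repOneAux : ∀ c : ℕ, ∀ C B A : ℤ, C.toNat = c → 0 < C → B^2 - 4*C*A = -3 →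
    ∃ x y : ℤ, C*x^2 + B*x*y + A*y^2 = 1 := by
  intro c
  induction c using Nat.strong_induction_on with
  | _ c IH =>
    intro C B A hc hC hdisc
    set q : ℤ := (B + C) / (2*C) with hq
    set B' : ℤ := B - 2*C*q with hB'
    set A' : ℤ := C*q^2 - B*q + A with hA'
    have h2C : (0:ℤ) < 2*C := by omega
    have hr0 : 0 ≤ (B + C) % (2*C) := Int.emod_nonneg _ (by omega)
    have hr1 : (B + C) % (2*C) < 2*C := Int.emod_lt_of_pos _ h2C
    have hmod : (B + C) % (2*C) = B + C - 2*C*q := by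
      rw [hq, Int.emod_def]
    have hB'bound : -C ≤ B' ∧ B' < C := by constructor <;> omega
    have hdisc' : B'^2 - 4*C*A' = -3 := by rw [hB', hA']; linear_combination hdisc
    have hA'pos : 0 < A' := by nlinarith [sq_nonneg B']
    by_cases hlt : A' < C
    · -- swap, recurse
      obtain ⟨x, y, hxy⟩ := IH A'.toNat (by omega) A' B' C (rfl) hA'pos (by linarith [hdisc'])
      refine ⟨y - q*x, x, ?_⟩
      have key : C*(y - q*x)^2 + B*(y - q*x)*x + A*x^2 = A'*x^2 + B'*x*y + C*y^2 := by
        rw [hA', hB']; ring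
      rw [key, hxy]
    · -- C = 1
      have hC1 : C = 1 := by nlinarith [sq_nonneg B']
      exact ⟨1, 0, by rw [hC1]; ring⟩

theorem repOne (C B A : ℤ) (hC : 0 < C) (hdisc : B^2 - 4*C*A = -3) :
    ∃ x y : ℤ, C*x^2 + B*x*y + A*y^2 = 1 :=
  repOneAux C.toNat C B A rfl hC hdisc

section Aux1
set_option linter.unusedSectionVars false
variable {F : Type*} [Field F] [NumberField F] [IsGalois ℚ F]
   (h3 : Module.finrank ℚ F = 3)
   (σ : F ≃ₐ[ℚ] F) (hσ : ∀ τ : F ≃ₐ[ℚ] F, τ ∈ Subgroup.zpowers σ)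

include h3 σ hσ


theorem sigma_cubed : ∀ x : F, σ (σ (σ x)) = x := by
  have hcard : Fintype.card (F ≃ₐ[ℚ] F) = 3 := by
    rw [← Nat.card_eq_fintype_card, IsGalois.card_aut_eq_finrank, h3]
  have h : σ ^ Fintype.card (F ≃ₐ[ℚ] F) = 1 := pow_card_eq_one
  rw [hcard] at h
  intro x
  have : (σ ^ 3) x = x := by rw [h]; rfl
  rw [pow_succ, pow_succ, pow_one] at this
  simpa using this

theorem fixed_rat : ∀ x : F, σ x = x → ∃ q : ℚ, algebraMap ℚ F q = x := by
  have hcard : Fintype.card (F ≃ₐ[ℚ] F) = 3 := by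
    rw [← Nat.card_eq_fintype_card, IsGalois.card_aut_eq_finrank, h3]
  intro x hx
  have hall : ∀ τ : F ≃ₐ[ℚ] F, τ x = x := by
    intro τ
    obtain ⟨n, rfl⟩ := (mem_powers_iff_mem_zpowers).mpr (hσ τ)
    induction n with
    | zero => rfl
    | succ n ih =>
        show (σ ^ (n+1)) x = x
        rw [pow_succ, AlgEquiv.mul_apply, hx]
        exact ih
  have hmem : x ∈ IntermediateField.fixedField (⊤ : Subgroup (F ≃ₐ[ℚ] F)) := by
    intro g
    exact hall g
  have hbot : IntermediateField.fixedField (⊤ : Subgroup (F ≃ₐ[ℚ] F)) = ⊥ := by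
    classical
    rw [← IntermediateField.finrank_eq_one_iff]
    have h1 : finrank (IntermediateField.fixedField (⊤ : Subgroup (F ≃ₐ[ℚ] F))) F
        = Fintype.card (⊤ : Subgroup (F ≃ₐ[ℚ] F)) :=
      by rw [← Nat.card_eq_fintype_card]; exact IntermediateField.finrank_fixedField_eq_card _
    have h2 : Fintype.card (⊤ : Subgroup (F ≃ₐ[ℚ] F)) = 3 := by
      rw [← hcard]
      exact Fintype.card_congr Subgroup.topEquiv.toEquiv
    have h4 := Module.finrank_mul_finrank ℚ
      (IntermediateField.fixedField (⊤ : Subgroup (F ≃ₐ[ℚ] F))) F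
    rw [h1, h2, h3] at h4
    omega
  rw [hbot] at hmem
  exact IntermediateField.mem_bot.mp hmem


end Aux1

section Aux2
set_option linter.unusedSectionVars false
variable {F : Type*} [Field F] [NumberField F] [IsGalois ℚ F] (σ : F ≃ₐ[ℚ] F)

   (σ : F ≃ₐ[ℚ] F)

theorem mem_O_iff (x : F) : x ∈ (algebraMap (𝓞 F) F).range ↔ IsIntegral ℤ x := by
  constructor
  · rintro ⟨y, rfl⟩; exact RingOfIntegers.isIntegral_coe y
  · intro hx; exact ⟨⟨x, hx⟩, rfl⟩

theorem int_sigma (x : F) (hx : IsIntegral ℤ x) : IsIntegral ℤ (σ x) :=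
  map_isIntegral_int σ hx

theorem trace_int (hs3 : ∀ x : F, σ (σ (σ x)) = x)
    (hfix : ∀ x : F, σ x = x → ∃ q : ℚ, algebraMap ℚ F q = x)
    (x : F) (hx : IsIntegral ℤ x) : ∃ n : ℤ, x + σ x + σ (σ x) = (n : F) := by
  set t := x + σ x + σ (σ x) with ht
  have hfixt : σ t = t := by
    rw [ht]
    simp only [map_add]
    rw [hs3 x]
    ring
  obtain ⟨q, hq⟩ := hfix t hfixt
  have htint : IsIntegral ℤ t :=
    (hx.add (int_sigma σ x hx)).add (int_sigma σ _ (int_sigma σ x hx))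
  rw [← hq] at htint
  have hqint : IsIntegral ℤ q :=
    (isIntegral_algebraMap_iff (algebraMap ℚ F).injective).mp htint
  obtain ⟨n, hn⟩ := IsIntegrallyClosed.isIntegral_iff.mp hqint
  refine ⟨n, ?_⟩
  rw [← hq, ← hn]
  rw [← IsScalarTower.algebraMap_apply ℤ ℚ F]
  simp [eq_intCast]


/-- The trace-zero sublattice of the ring of integers. -/
def Tsub : Submodule ℤ (𝓞 F) where
  carrier := {x | (x : F) + σ (x : F) + σ (σ (x : F)) = 0}
  add_mem' := by
    intro a b ha hb
    simp only [Set.mem_setOf_eq, map_add] at *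
    linear_combination ha + hb
  zero_mem' := by simp
  smul_mem' := by
    intro n a ha
    simp only [Set.mem_setOf_eq] at *
    rw [show ((n • a : 𝓞 F) : F) = n • (a : F) from
      map_zsmul (algebraMap (𝓞 F) F).toAddMonoidHom n a]
    rw [map_zsmul, map_zsmul, ← smul_add, ← smul_add, ha, smul_zero]

/-- The trace linear map. -/
noncomputable def Lmap : F →ₗ[ℚ] F :=
  LinearMap.id + σ.toLinearMap + (σ.toLinearMap ∘ₗ σ.toLinearMap)

theorem Lmap_apply (x : F) : Lmap σ x = x + σ x + σ (σ x) := rfl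

theorem t_basis (h3 : Module.finrank ℚ F = 3) (hs3 : ∀ x : F, σ (σ (σ x)) = x)
    (hfix : ∀ x : F, σ x = x → ∃ q : ℚ, algebraMap ℚ F q = x) :
    Nonempty (Basis (Fin 2) ℤ (Tsub σ)) := by
  classical
  -- the kernel of Lmap has dimension 2
  have hrange : LinearMap.range (Lmap σ) = Submodule.span ℚ {(1 : F)} := by
    apply le_antisymm
    · rintro _ ⟨x, rfl⟩
      obtain ⟨q, hq⟩ := hfix (Lmap σ x) (by
        rw [Lmap_apply, map_add, map_add, hs3 x]
        ring)
      rw [← hq, show (algebraMap ℚ F) q = q • (1 : F) by rw [Algebra.smul_def, mul_one]]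
      exact Submodule.smul_mem _ _ (Submodule.mem_span_singleton_self _)
    · rw [Submodule.span_le, Set.singleton_subset_iff]
      refine ⟨(3 : ℚ)⁻¹ • 1, ?_⟩
      rw [map_smul, Lmap_apply]
      simp only [map_one]
      norm_num [Algebra.smul_def]
  have hker2 : finrank ℚ (LinearMap.ker (Lmap σ)) = 2 := by
    have h := LinearMap.finrank_range_add_finrank_ker (Lmap σ)
    rw [hrange, finrank_span_singleton (one_ne_zero), h3] at h
    omega
  -- basis of T
  have hcard3 : Fintype.card (Free.ChooseBasisIndex ℤ (𝓞 F)) = 3 := by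
    rw [← Module.finrank_eq_card_chooseBasisIndex, RingOfIntegers.rank, h3]
  let b3 : Basis (Fin 3) ℤ (𝓞 F) :=
    (RingOfIntegers.basis F).reindex (Fintype.equivFinOfCardEq hcard3)
  obtain ⟨m, bT⟩ := Submodule.basisOfPid b3 (Tsub σ)
  let ι : Tsub σ →ₗ[ℤ] F :=
    ((Algebra.linearMap (𝓞 F) F).restrictScalars ℤ) ∘ₗ (Tsub σ).subtype
  have hι_inj : Function.Injective ι := by
    intro a b hab
    apply Subtype.ext
    exact IsFractionRing.injective (𝓞 F) F hab
  let v : Fin m → F := fun i => ι (bT i)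
  have hindZ : LinearIndependent ℤ v :=
    bT.linearIndependent.map' ι (LinearMap.ker_eq_bot.mpr hι_inj)
  have hindQ : LinearIndependent ℚ v := (LinearIndependent.iff_fractionRing ℤ ℚ).mp hindZ
  have hvker : ∀ i, v i ∈ LinearMap.ker (Lmap σ) := by
    intro i
    have := (bT i).2
    simp only [Tsub, Submodule.mem_mk, AddSubmonoid.mem_mk, AddSubsemigroup.mem_mk,
      Set.mem_setOf_eq] at this
    rw [LinearMap.mem_ker, Lmap_apply]
    exact this
  let w : Fin m → LinearMap.ker (Lmap σ) := fun i => ⟨v i, hvker i⟩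
  have hw_ind : LinearIndependent ℚ w :=
    hindQ.of_comp (LinearMap.ker (Lmap σ)).subtype
  have hw_span : ⊤ ≤ Submodule.span ℚ (Set.range w) := by
    rintro ⟨z, hz⟩ -
    have halgQ : IsAlgebraic ℚ z := Algebra.IsAlgebraic.isAlgebraic z
    have halg : IsAlgebraic ℤ z := (IsFractionRing.isAlgebraic_iff ℤ ℚ F).mpr halgQ
    obtain ⟨n, hn0, hintz⟩ := halg.exists_integral_multiple
    -- xi : integralClosure ℤ F  =  𝓞 F
    let xi : 𝓞 F := ⟨n • z, hintz⟩
    have hxi : ((xi : 𝓞 F) : F) = (n : F) * z := by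
      show (n • z : F) = _
      rw [zsmul_eq_mul]
    have hne : (n : ℚ) ≠ 0 := Int.cast_ne_zero.mpr hn0
    have hzz : (n : ℚ) • z = (n : F) * z := by rw [Algebra.smul_def, map_intCast]
    have hxiT : (xi : 𝓞 F) ∈ Tsub σ := by
      have h1 : Lmap σ ((xi : 𝓞 F) : F) = 0 := by
        rw [show ((xi : 𝓞 F) : F) = (n : F) * z from hxi, ← hzz, map_smul,
          show Lmap σ z = 0 from hz, smul_zero]
      show ((xi : 𝓞 F) : F) + σ ((xi : 𝓞 F) : F) + σ (σ ((xi : 𝓞 F) : F)) = 0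
      rw [← Lmap_apply]
      exact h1
    -- membership in the span
    have hT : (⟨(xi : 𝓞 F), hxiT⟩ : Tsub σ) ∈ Submodule.span ℤ (Set.range bT) := by
      rw [bT.span_eq]; trivial
    have hmap : (n : F) * z ∈ Submodule.span ℤ (Set.range v) := by
      have h2 : ι ⟨(xi : 𝓞 F), hxiT⟩ ∈ Submodule.map ι (Submodule.span ℤ (Set.range bT)) :=
        Submodule.mem_map_of_mem hT
      rw [Submodule.map_span, ← Set.range_comp] at h2
      have h3 : ι ⟨(xi : 𝓞 F), hxiT⟩ = (n : F) * z := hxi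
      rw [h3] at h2
      exact h2
    have hzspan : z ∈ Submodule.span ℚ (Set.range v) := by
      have hsub : Submodule.span ℤ (Set.range v) ≤
          (Submodule.span ℚ (Set.range v)).restrictScalars ℤ :=
        Submodule.span_le.mpr Submodule.subset_span
      have h3 : (n : F) * z ∈ Submodule.span ℚ (Set.range v) := hsub hmap
      have h4 : z = (n : ℚ)⁻¹ • ((n : ℚ) • z) := (inv_smul_smul₀ hne z).symm
      rw [h4, hzz]
      exact Submodule.smul_mem _ _ h3
    -- transfer to the submodule
    have hrv : Set.range v = (LinearMap.ker (Lmap σ)).subtype '' Set.range w := by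
      rw [← Set.range_comp]
      rfl
    have := hrv ▸ hzspan
    rw [← Submodule.map_span] at this
    obtain ⟨z', hz', hzz'⟩ := this
    have : z' = ⟨z, hz⟩ := Subtype.ext hzz'
    rw [← this]
    exact hz'
  let bker : Basis (Fin m) ℚ (LinearMap.ker (Lmap σ)) := Basis.mk hw_ind hw_span
  have hm : m = 2 := by
    have hfr := finrank_eq_card_basis bker
    rw [hker2, Fintype.card_fin] at hfr
    omega
  subst hm
  exact ⟨bT⟩

theorem exists_generator (h3 : Module.finrank ℚ F = 3) (hs3 : ∀ x : F, σ (σ (σ x)) = x)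
    (hfix : ∀ x : F, σ x = x → ∃ q : ℚ, algebraMap ℚ F q = x) :
    ∃ fh wh : Tsub σ, ((wh : 𝓞 F) : F) = σ ((fh : 𝓞 F) : F) ∧
      ∀ t : Tsub σ, ∃ zu zw : ℤ, t = zu • fh + zw • wh := by
  classical
  obtain ⟨bT⟩ := t_basis σ h3 hs3 hfix
  -- the endomorphism induced by σ
  have hint : ∀ t : Tsub σ, σ ((t : 𝓞 F) : F) ∈ integralClosure ℤ F :=
    fun t => map_isIntegral_int σ (RingOfIntegers.isIntegral_coe (t : 𝓞 F))
  have hmemT : ∀ t : Tsub σ, (⟨σ ((t : 𝓞 F) : F), hint t⟩ : 𝓞 F) ∈ Tsub σ := by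
    intro t
    have ht := t.2
    simp only [Tsub, Submodule.mem_mk, AddSubmonoid.mem_mk, AddSubsemigroup.mem_mk,
      Set.mem_setOf_eq] at ht ⊢
    show σ ((t : 𝓞 F) : F) + σ (σ ((t : 𝓞 F) : F)) + σ (σ (σ ((t : 𝓞 F) : F))) = 0
    rw [hs3]
    linear_combination ht
  let jmap : Tsub σ →ₗ[ℤ] Tsub σ := {
    toFun := fun t => ⟨⟨σ ((t : 𝓞 F) : F), hint t⟩, hmemT t⟩
    map_add' := by
      intro s t
      apply Subtype.ext; apply NumberField.RingOfIntegers.ext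
      show σ (((s + t : Tsub σ) : 𝓞 F) : F) = σ _ + σ _
      rw [show (((s + t : Tsub σ) : 𝓞 F) : F) = ((s : 𝓞 F) : F) + ((t : 𝓞 F) : F) from rfl,
        map_add]
    map_smul' := by
      intro n t
      apply Subtype.ext; apply NumberField.RingOfIntegers.ext
      show σ (((n • t : Tsub σ) : 𝓞 F) : F) = _
      rw [show (((n • t : Tsub σ) : 𝓞 F) : F) = n • ((t : 𝓞 F) : F) from rfl, map_zsmul]
      rfl }
  have jcoe : ∀ t : Tsub σ, ((jmap t : 𝓞 F) : F) = σ ((t : 𝓞 F) : F) := fun _ => rfl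
  -- the matrix of jmap
  set J : Matrix (Fin 2) (Fin 2) ℤ := LinearMap.toMatrix bT bT jmap with hJdef
  have hrel : (jmap ∘ₗ jmap) + jmap + LinearMap.id = 0 := by
    apply LinearMap.ext
    intro t
    apply Subtype.ext; apply NumberField.RingOfIntegers.ext
    have ht := t.2
    simp only [Tsub, Submodule.mem_mk, AddSubmonoid.mem_mk, AddSubsemigroup.mem_mk,
      Set.mem_setOf_eq] at ht
    show σ (σ ((t : 𝓞 F) : F)) + σ ((t : 𝓞 F) : F) + ((t : 𝓞 F) : F) = ((0 : 𝓞 F) : F)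
    rw [show ((0 : 𝓞 F) : F) = 0 from map_zero (algebraMap (𝓞 F) F)]
    linear_combination ht
  have hJ : J * J + J + 1 = 0 := by
    have h1 := congrArg (LinearMap.toMatrix bT bT) hrel
    rw [LinearEquiv.map_add, LinearEquiv.map_add, LinearMap.toMatrix_comp bT bT bT,
      LinearMap.toMatrix_id, LinearEquiv.map_zero] at h1
    exact h1
  have key : ∀ i k : Fin 2, (J * J) i k + J i k + (1 : Matrix (Fin 2) (Fin 2) ℤ) i k = 0 := by
    intro i k
    rw [← Matrix.add_apply, ← Matrix.add_apply, hJ, Matrix.zero_apply]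
  have e00 : J 0 0 * J 0 0 + J 0 1 * J 1 0 + J 0 0 + 1 = 0 := by
    have := key 0 0
    rwa [Matrix.mul_apply, Fin.sum_univ_two, Matrix.one_apply_eq] at this
  have e01 : J 0 0 * J 0 1 + J 0 1 * J 1 1 + J 0 1 = 0 := by
    have := key 0 1
    rwa [Matrix.mul_apply, Fin.sum_univ_two, Matrix.one_apply_ne (by decide), add_zero]
      at this
  have e10 : J 1 0 * J 0 0 + J 1 1 * J 1 0 + J 1 0 = 0 := by
    have := key 1 0
    rwa [Matrix.mul_apply, Fin.sum_univ_two, Matrix.one_apply_ne (by decide), add_zero]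
      at this
  have htrace : J 0 0 + J 1 1 + 1 = 0 := by
    by_contra hp
    have hb : J 0 1 = 0 := by
      have : J 0 1 * (J 0 0 + J 1 1 + 1) = 0 := by linear_combination e01
      rcases mul_eq_zero.mp this with h | h
      · exact h
      · exact absurd h hp
    have hc : J 1 0 = 0 := by
      have : J 1 0 * (J 0 0 + J 1 1 + 1) = 0 := by linear_combination e10
      rcases mul_eq_zero.mp this with h | h
      · exact h
      · exact absurd h hp
    rw [hb, hc] at e00
    nlinarith [sq_nonneg (2 * J 0 0 + 1)]
  have hdisc : (J 1 1 - J 0 0)^2 - 4 * (J 1 0) * (-(J 0 1)) = -3 := by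
    linear_combination 4 * e00 + (J 1 1 - 3 * J 0 0 - 1) * htrace
  have hc0 : J 1 0 ≠ 0 := by
    intro h
    rw [h] at hdisc
    nlinarith [sq_nonneg (J 1 1 - J 0 0)]
  -- find the vector
  obtain ⟨x, y, ε, hε2, hxy⟩ : ∃ x y ε : ℤ, ε * ε = 1 ∧
      J 1 0 * x^2 + (J 1 1 - J 0 0) * x * y + (-(J 0 1)) * y^2 = ε := by
    rcases lt_or_gt_of_ne hc0 with hneg | hpos
    · obtain ⟨x, y, hxy⟩ := repOne (-(J 1 0)) (-(J 1 1 - J 0 0)) (J 0 1)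
        (by omega) (by linear_combination hdisc)
      exact ⟨x, y, -1, by norm_num, by linear_combination -hxy⟩
    · obtain ⟨x, y, hxy⟩ := repOne (J 1 0) (J 1 1 - J 0 0) (-(J 0 1)) hpos hdisc
      exact ⟨x, y, 1, by norm_num, by linear_combination hxy⟩
  set fh : Tsub σ := x • bT 0 + y • bT 1 with hfh
  set wh : Tsub σ := jmap fh with hwh
  -- coordinates of jmap on the basis
  have hj : ∀ k, jmap (bT k) = J 0 k • bT 0 + J 1 k • bT 1 := by
    intro k
    have hs := bT.sum_repr (jmap (bT k))
    rw [Fin.sum_univ_two] at hs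
    rw [show J 0 k = bT.repr (jmap (bT k)) 0 from LinearMap.toMatrix_apply bT bT jmap 0 k,
      show J 1 k = bT.repr (jmap (bT k)) 1 from LinearMap.toMatrix_apply bT bT jmap 1 k]
    exact hs.symm
  have hw_coord : wh = (J 0 0 * x + J 0 1 * y) • bT 0 + (J 1 0 * x + J 1 1 * y) • bT 1 := by
    rw [hwh, hfh, map_add, map_smul, map_smul, hj 0, hj 1]
    module
  have hdet : x * (J 1 0 * x + J 1 1 * y) - y * (J 0 0 * x + J 0 1 * y) = ε := by
    linear_combination hxy
  clear_value J
  clear_value fh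
  clear_value wh
  have hb0 : bT 0 = (ε * (J 1 0 * x + J 1 1 * y)) • fh - (ε * y) • wh := by
    rw [hw_coord, hfh]
    match_scalars
    all_goals try ring
    all_goals linear_combination (-ε) * hdet - hε2
  have hb1 : bT 1 = (ε * x) • wh - (ε * (J 0 0 * x + J 0 1 * y)) • fh := by
    rw [hw_coord, hfh]
    match_scalars
    all_goals try ring
    all_goals linear_combination (-ε) * hdet - hε2
  refine ⟨fh, wh, hwh ▸ jcoe fh, ?_⟩
  intro t
  have hs' := bT.sum_repr t
  rw [Fin.sum_univ_two] at hs'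
  obtain ⟨r0, r1, hs⟩ : ∃ r0 r1 : ℤ, r0 • bT 0 + r1 • bT 1 = t := ⟨_, _, hs'⟩
  refine ⟨r0 * (ε * (J 1 0 * x + J 1 1 * y)) - r1 * (ε * (J 0 0 * x + J 0 1 * y)),
    r1 * (ε * x) - r0 * (ε * y), ?_⟩
  rw [← hs, hb0, hb1]
  module
theorem final (h3 : Module.finrank ℚ F = 3) (hs3 : ∀ x : F, σ (σ (σ x)) = x)
    (hfix : ∀ x : F, σ x = x → ∃ q : ℚ, algebraMap ℚ F q = x) :
    ∃ f : F, f ∈ (algebraMap (𝓞 F) F).range ∧ f + σ f + σ (σ f) = 0 ∧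
      (AddSubgroup.closure {1, f, σ f} = ((algebraMap (𝓞 F) F).range).toAddSubgroup ∨
        (AddSubgroup.closure {1, f, σ f} < ((algebraMap (𝓞 F) F).range).toAddSubgroup ∧
          (AddSubgroup.closure {1, f, σ f}).relIndex
            ((algebraMap (𝓞 F) F).range).toAddSubgroup = 3)) := by
  classical
  obtain ⟨fh, wh, hwcoe, hspan⟩ := exists_generator σ h3 hs3 hfix
  set f : F := ((fh : 𝓞 F) : F) with hfdef
  have hfT : f + σ f + σ (σ f) = 0 := fh.2
  set H' : AddSubgroup F := ((algebraMap (𝓞 F) F).range).toAddSubgroup with hH'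
  set M : AddSubgroup F := AddSubgroup.closure {1, f, σ f} with hM
  have hmemH' : ∀ x : F, x ∈ H' ↔ IsIntegral ℤ x := by
    intro x
    rw [hH', Subring.mem_toAddSubgroup]
    exact mem_O_iff (F := F) x
  -- generators are in M
  have h1M : (1 : F) ∈ M := AddSubgroup.subset_closure (by simp)
  have hfM : f ∈ M := AddSubgroup.subset_closure (by simp)
  have hsfM : σ f ∈ M := AddSubgroup.subset_closure (by simp)
  -- M ≤ H'
  have hMH : M ≤ H' := by
    rw [hM]
    apply AddSubgroup.closure_le _ |>.mpr
    intro z hz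
    rcases hz with h | h | h
    · subst h; exact (hmemH' 1).mpr isIntegral_one
    · subst h; exact (hmemH' f).mpr (RingOfIntegers.isIntegral_coe _)
    · rw [Set.mem_singleton_iff.mp h]
      refine (hmemH' (σ f)).mpr ?_
      rw [← hwcoe]
      exact RingOfIntegers.isIntegral_coe _
  -- every element of Tsub is in M
  have hTspanM : ∀ t : Tsub σ, ((t : 𝓞 F) : F) ∈ M := by
    intro t
    obtain ⟨zu, zw, ht⟩ := hspan t
    have hcoe : ((t : 𝓞 F) : F) = zu • f + zw • σ f := by
      rw [ht, ← hwcoe]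
      push_cast
      rfl
    rw [hcoe]
    exact AddSubgroup.add_mem _ (AddSubgroup.zsmul_mem _ hfM _)
      (AddSubgroup.zsmul_mem _ hsfM _)
  -- key lemma : integral with trace ≡ 0 mod 3 implies in M
  have hker : ∀ x : F, x ∈ H' → ∀ n : ℤ, x + σ x + σ (σ x) = (n : F) →
      (n : ZMod 3) = 0 → x ∈ M := by
    intro x hx n hn h0
    obtain ⟨k, hk⟩ := (ZMod.intCast_zmod_eq_zero_iff_dvd n 3).mp h0
    have hkF : ((k : ℤ) : F) ∈ M := by
      have := AddSubgroup.zsmul_mem M h1M k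
      rwa [zsmul_eq_mul, mul_one] at this
    have hyint : IsIntegral ℤ (x - (k : F)) := by
      apply IsIntegral.sub ((hmemH' x).mp hx)
      have : ((k : ℤ) : F) = algebraMap ℤ F k := by rw [eq_intCast]
      rw [this]
      exact isIntegral_algebraMap
    have hytr : (x - (k : F)) + σ (x - (k : F)) + σ (σ (x - (k : F))) = 0 := by
      rw [map_sub, map_sub, map_intCast, map_intCast]
      rw [hk] at hn
      push_cast at hn ⊢
      linear_combination hn
    have : (⟨x - (k : F), hyint⟩ : 𝓞 F) ∈ Tsub σ := hytr
    have hyM : x - (k : F) ∈ M := hTspanM ⟨⟨x - (k : F), hyint⟩, this⟩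
    have := AddSubgroup.add_mem M hyM hkF
    rwa [sub_add_cancel] at this
  -- conversely, elements of M have trace ≡ 0 mod 3
  have hMker : ∀ x : F, x ∈ M → ∀ n : ℤ, x + σ x + σ (σ x) = (n : F) →
      (n : ZMod 3) = 0 := by
    have hK : ∃ K : AddSubgroup F, K.carrier =
        {z : F | ∃ n : ℤ, z + σ z + σ (σ z) = (n : F) ∧ (n : ZMod 3) = 0} := by
      refine ⟨⟨⟨⟨_, ?_⟩, ?_⟩, ?_⟩, rfl⟩
      · rintro a b ⟨na, hna, h0a⟩ ⟨nb, hnb, h0b⟩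
        refine ⟨na + nb, ?_, by push_cast [h0a, h0b]; ring⟩
        push_cast
        simp only [map_add]
        linear_combination hna + hnb
      · exact ⟨0, by simp, by simp⟩
      · rintro a ⟨na, hna, h0a⟩
        refine ⟨-na, ?_, by push_cast [h0a]; ring⟩
        push_cast
        simp only [map_neg]
        linear_combination -hna
    obtain ⟨K, hKcar⟩ := hK
    have hmemK : ∀ z : F, z ∈ K ↔
        ∃ n : ℤ, z + σ z + σ (σ z) = (n : F) ∧ (n : ZMod 3) = 0 := by
      intro z
      rw [← AddSubgroup.mem_carrier, hKcar]
      rfl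
    have hMK : M ≤ K := by
      rw [hM]
      apply AddSubgroup.closure_le _ |>.mpr
      intro z hz
      rcases hz with h | h | h
      · subst h
        refine (hmemK 1).mpr ⟨3, by push_cast; norm_num, by decide⟩
      · subst h
        exact (hmemK f).mpr ⟨0, by rw [Int.cast_zero]; exact hfT, by simp⟩
      · rw [Set.mem_singleton_iff.mp h]
        refine (hmemK (σ f)).mpr ⟨0, ?_, by simp⟩
        rw [Int.cast_zero, hs3 f]
        linear_combination hfT
    intro x hx n hn
    obtain ⟨n', hn', h0'⟩ := (hmemK x).mp (hMK hx)
    have : (n : F) = (n' : F) := by rw [← hn, ← hn']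
    have : n = n' := by exact_mod_cast this
    rw [this]
    exact h0'
  -- the trace function
  set g : F → ℤ := fun x =>
    if h : ∃ n : ℤ, x + σ x + σ (σ x) = (n : F) then h.choose else 0 with hg
  have hgspec : ∀ x : F, x ∈ H' → x + σ x + σ (σ x) = ((g x : ℤ) : F) := by
    intro x hx
    have hex : ∃ n : ℤ, x + σ x + σ (σ x) = (n : F) :=
      trace_int σ hs3 hfix x ((hmemH' x).mp hx)
    rw [hg]
    simp only [dif_pos hex]
    exact hex.choose_spec
  -- the homomorphism
  set φ : H' →+ ZMod 3 :=
    { toFun := fun z => ((g z.1 : ℤ) : ZMod 3)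
      map_zero' := by
        have h0 : (0 : F) ∈ H' := zero_mem H'
        have := hgspec 0 h0
        simp only [map_zero, add_zero, zero_add] at this
        have hg0 : g 0 = 0 := by exact_mod_cast this.symm
        simp [hg0]
      map_add' := by
        intro z w
        have hz := hgspec z.1 z.2
        have hw := hgspec w.1 w.2
        have hzw := hgspec (z.1 + w.1) (add_mem z.2 w.2)
        have : ((g (z.1 + w.1) : ℤ) : F) = ((g z.1 + g w.1 : ℤ) : F) := by
          rw [← hzw]
          push_cast
          simp only [map_add]
          linear_combination hz + hw
        have heq : g (z.1 + w.1) = g z.1 + g w.1 := by exact_mod_cast this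
        show ((g ((z + w : H') : F) : ℤ) : ZMod 3) = _
        rw [show ((z + w : H') : F) = z.1 + w.1 from rfl, heq]
        push_cast
        ring } with hφ
  have hφapply : ∀ z : H', φ z = ((g z.1 : ℤ) : ZMod 3) := fun z => rfl
  -- kernel is M
  have hkerφ : M.addSubgroupOf H' = φ.ker := by
    ext z
    rw [AddSubgroup.mem_addSubgroupOf, AddMonoidHom.mem_ker, hφapply]
    constructor
    · intro hz
      exact hMker z.1 hz (g z.1) (hgspec z.1 z.2)
    · intro hz
      exact hker z.1 z.2 (g z.1) (hgspec z.1 z.2) hz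
  by_cases hall : H' ≤ M
  · exact ⟨f, ⟨fh.1, rfl⟩, hfT, Or.inl (le_antisymm hMH hall)⟩
  · refine ⟨f, ⟨fh.1, rfl⟩, hfT, Or.inr ⟨lt_of_le_of_ne hMH (fun h => hall (h ▸ le_refl H')), ?_⟩⟩
    have hrel : M.relIndex H' = (M.addSubgroupOf H').index := rfl
    rw [hrel, hkerφ, AddSubgroup.index_ker]
    -- the range has cardinality 3
    obtain ⟨x0, hx0H, hx0M⟩ := SetLike.not_le_iff_exists.mp hall
    have hz0 : φ ⟨x0, hx0H⟩ ≠ 0 := by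
      intro h
      exact hx0M (hker x0 hx0H (g x0) (hgspec x0 hx0H)
        (by rw [hφapply] at h; exact_mod_cast h))
    have hne : φ.range ≠ ⊥ := by
      intro h
      apply hz0
      have : φ ⟨x0, hx0H⟩ ∈ φ.range := ⟨_, rfl⟩
      rw [h] at this
      exact this
    have hdvd : Nat.card φ.range ∣ 3 := by
      have := AddSubgroup.card_addSubgroup_dvd_card φ.range
      simpa [Nat.card_eq_fintype_card, ZMod.card] using this
    have hgt : 1 < Nat.card φ.range := (AddSubgroup.one_lt_card_iff_ne_bot φ.range).mpr hne
    rcases Nat.prime_three.eq_one_or_self_of_dvd _ hdvd with h | h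
    · omega
    · exact h

end Aux2

/-- Structure of the ring of integers of a cyclic cubic field: there is a trace-zero
integer `f` such that `M = ℤ ⊕ ℤ[σ]·f` (the additive subgroup generated by `1, f, σ(f)`)
is either all of `O_F`, or has index `3` in `O_F`. -/
theorem ring_of_integers_structure
    {F : Type*} [Field F] [NumberField F] [IsGalois ℚ F]
    (h3 : Module.finrank ℚ F = 3)
    (σ : F ≃ₐ[ℚ] F) (hσ : ∀ τ : F ≃ₐ[ℚ] F, τ ∈ Subgroup.zpowers σ) :
    ∃ f : F, f ∈ (algebraMap (𝓞 F) F).range ∧ f + σ f + σ (σ f) = 0 ∧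
      (AddSubgroup.closure {1, f, σ f} = ((algebraMap (𝓞 F) F).range).toAddSubgroup ∨
        (AddSubgroup.closure {1, f, σ f} < ((algebraMap (𝓞 F) F).range).toAddSubgroup ∧
          (AddSubgroup.closure {1, f, σ f}).relIndex
            ((algebraMap (𝓞 F) F).range).toAddSubgroup = 3)) := by
  exact final σ h3 (sigma_cubed h3 σ hσ) (fixed_rat h3 σ hσ)
end

section
/- Let F be a cyclic cubic field and let p be the positive integer with p² = |disc(F)| (p is the conductor of F). Then every g ∈ O_F with g ∉ ℤ satisfies ‖g‖² ≥ 2p/3, where ‖g‖² = ∑_{i=0}^{2} ι(σ^i(g))². -/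
open NumberField
open scoped nonZeroDivisors

section Aux

variable {F : Type*} [Field F] [NumberField F] [IsGalois ℚ F]

/-- The trace of `x` is `ι x + ι (σ x) + ι (σ (σ x))` for a cyclic cubic field. -/
theorem cyclic_cubic_trace_formula
    (h3 : Module.finrank ℚ F = 3)
    (σ : F ≃ₐ[ℚ] F) (hσ : ∀ τ : F ≃ₐ[ℚ] F, τ ∈ Subgroup.zpowers σ)
    (ι : F →+* ℝ) :
    ∀ x : F, ((Algebra.trace ℚ F x : ℚ) : ℝ) = ι x + ι (σ x) + ι (σ (σ x)) := by
  classical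
  have hcard : Fintype.card (F ≃ₐ[ℚ] F) = 3 := by
    rw [← Nat.card_eq_fintype_card, IsGalois.card_aut_eq_finrank]; exact h3
  have hσ3 : σ ^ 3 = 1 := by
    have h : σ ^ Fintype.card (F ≃ₐ[ℚ] F) = 1 := pow_card_eq_one
    rwa [hcard] at h
  have hσ3' : ∀ x : F, σ (σ (σ x)) = x := by
    intro x
    have : (σ ^ 3) x = (1 : F ≃ₐ[ℚ] F) x := by rw [hσ3]
    simpa [pow_succ, AlgEquiv.mul_apply] using this
  have hσne : σ ≠ 1 := by
    rintro rfl
    have h1 : ∀ τ : F ≃ₐ[ℚ] F, τ = 1 := by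
      intro τ
      rcases Subgroup.mem_zpowers_iff.mp (hσ τ) with ⟨k, hk⟩
      simpa using hk.symm
    have : Fintype.card (F ≃ₐ[ℚ] F) ≤ 1 :=
      Fintype.card_le_one_iff.mpr fun a b => (h1 a).trans (h1 b).symm
    omega
  have hσ2ne : σ * σ ≠ 1 := by
    intro h
    apply hσne
    rw [pow_succ, pow_two, h, one_mul] at hσ3
    exact hσ3
  have hιinj : Function.Injective ι := ι.injective
  set ψ : F →ₐ[ℚ] ℂ := RingHom.equivRatAlgHom F ℂ (Complex.ofRealHom.comp ι) with hψ
  set e : Fin 3 → (F →ₐ[ℚ] ℂ) :=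
    ![ψ, ψ.comp σ.toAlgHom, ψ.comp (σ.toAlgHom.comp σ.toAlgHom)] with he
  have heap : ∀ x : F, e 0 x = (ι x : ℂ) ∧ e 1 x = (ι (σ x) : ℂ) ∧ e 2 x = (ι (σ (σ x)) : ℂ) := by
    intro x; exact ⟨rfl, rfl, rfl⟩
  have hne01 : ψ ≠ ψ.comp σ.toAlgHom := by
    intro h
    apply hσne; ext x
    have h1 := AlgHom.congr_fun h x
    have h2 : (ι x : ℂ) = (ι (σ x) : ℂ) := h1
    have h3 : ι x = ι (σ x) := by exact_mod_cast h2
    simpa using (hιinj h3).symm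
  have hne02 : ψ ≠ ψ.comp (σ.toAlgHom.comp σ.toAlgHom) := by
    intro h
    apply hσ2ne; ext x
    have h1 := AlgHom.congr_fun h x
    have h2 : (ι x : ℂ) = (ι (σ (σ x)) : ℂ) := h1
    have h3 : ι x = ι (σ (σ x)) := by exact_mod_cast h2
    simpa [AlgEquiv.mul_apply] using (hιinj h3).symm
  have hne12 : ψ.comp σ.toAlgHom ≠ ψ.comp (σ.toAlgHom.comp σ.toAlgHom) := by
    intro h
    apply hσne; ext x
    have h1 := AlgHom.congr_fun h x
    have h2 : (ι (σ x) : ℂ) = (ι (σ (σ x)) : ℂ) := h1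
    have h3 : ι (σ x) = ι (σ (σ x)) := by exact_mod_cast h2
    simpa using (σ.injective (hιinj h3)).symm
  have hinj : Function.Injective e := by
    intro i j hij
    fin_cases i <;> fin_cases j <;>
      first
        | rfl
        | exact absurd hij hne01
        | exact absurd hij.symm hne01
        | exact absurd hij hne02
        | exact absurd hij.symm hne02
        | exact absurd hij hne12
        | exact absurd hij.symm hne12
  have hcard2 : Fintype.card (F →ₐ[ℚ] ℂ) = 3 := by
    rw [AlgHom.card]; exact h3
  have hbij : Function.Bijective e :=
    (Fintype.bijective_iff_injective_and_card e).mpr ⟨hinj, by simp [hcard2]⟩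
  intro x
  have h1 : algebraMap ℚ ℂ (Algebra.trace ℚ F x) = ∑ φ : F →ₐ[ℚ] ℂ, φ x :=
    trace_eq_sum_embeddings ℂ
  have h2 : ∑ φ : F →ₐ[ℚ] ℂ, φ x = ∑ i : Fin 3, e i x :=
    (Function.Bijective.sum_comp hbij fun φ => φ x).symm
  rw [h2, Fin.sum_univ_three] at h1
  have h4 : algebraMap ℚ ℂ (Algebra.trace ℚ F x)
      = ((ι x + ι (σ x) + ι (σ (σ x)) : ℝ) : ℂ) := by
    rw [h1, (heap x).1, (heap x).2.1, (heap x).2.2]; push_cast; ring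
  rw [eq_ratCast] at h4
  exact_mod_cast h4

end Aux

set_option maxHeartbeats 10000000 in
/-- For a cyclic cubic field of conductor `p` (so `p² = |disc F|`), every algebraic
integer `g ∉ ℤ` satisfies `‖g‖² ≥ 2p/3`. -/
theorem sq_norm_lower_bound_of_not_rational_integer
    {F : Type*} [Field F] [NumberField F] [IsGalois ℚ F]
    (h3 : Module.finrank ℚ F = 3)
    (σ : F ≃ₐ[ℚ] F) (hσ : ∀ τ : F ≃ₐ[ℚ] F, τ ∈ Subgroup.zpowers σ)
    (ι : F →+* ℝ)
    (p : ℕ) (hp : 0 < p) (hdisc : (p : ℤ) ^ 2 = |NumberField.discr F|)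
    (g : 𝓞 F) (hg : ¬∃ n : ℤ, (g : F) = (n : F)) :
    2 * (p : ℝ) / 3 ≤ fnorm2 σ ι (g : F) := by
  classical
  have htr := cyclic_cubic_trace_formula h3 σ hσ ι
  -- basic facts about σ
  have hcard : Fintype.card (F ≃ₐ[ℚ] F) = 3 := by
    rw [← Nat.card_eq_fintype_card, IsGalois.card_aut_eq_finrank]; exact h3
  have hσ3 : σ ^ 3 = 1 := by
    have h : σ ^ Fintype.card (F ≃ₐ[ℚ] F) = 1 := pow_card_eq_one
    rwa [hcard] at h
  have hσ3' : ∀ x : F, σ (σ (σ x)) = x := by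
    intro x
    have : (σ ^ 3) x = (1 : F ≃ₐ[ℚ] F) x := by rw [hσ3]
    simpa [pow_succ, AlgEquiv.mul_apply] using this
  have hι_alg : ∀ q : ℚ, ι (algebraMap ℚ F q) = (q : ℝ) := by
    intro q
    exact eq_ratCast (ι.comp (algebraMap ℚ F)) q
  set T : F →ₗ[ℚ] ℚ := Algebra.trace ℚ F with hTdef
  have htr' : ∀ x : F, ((T x : ℚ) : ℝ) = ι x + ι (σ x) + ι (σ (σ x)) := htr
  -- trace toolkit
  have hT1 : T (1 : F) = 3 := by
    have h := htr' 1
    simp only [map_one] at h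
    have h2 : ((T (1 : F) : ℚ) : ℝ) = 3 := by rw [h]; norm_num
    exact_mod_cast h2
  have hTσ : ∀ x : F, T (σ x) = T x := by
    intro x
    rw [← @Rat.cast_inj ℝ, htr' (σ x), htr' x, hσ3' x]
    ring
  have hTc : ∀ (r : ℚ) (x : F), T (algebraMap ℚ F r * x) = r * T x := by
    intro r x
    rw [← Algebra.smul_def, map_smul, smul_eq_mul]
  have hTr : ∀ r : ℚ, T (algebraMap ℚ F r) = 3 * r := by
    intro r
    have h := hTc r 1
    rw [mul_one, hT1] at h
    rw [h]; ring
  have hTnn : ∀ x : F, 0 ≤ T (x * x) := by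
    intro x
    have h : (0 : ℝ) ≤ ((T (x * x) : ℚ) : ℝ) := by
      rw [htr' (x * x)]
      simp only [map_mul]
      nlinarith [sq_nonneg (ι x), sq_nonneg (ι (σ x)), sq_nonneg (ι (σ (σ x)))]
    exact_mod_cast h
  have hTzero : ∀ x : F, T (x * x) = 0 → x = 0 := by
    intro x hx
    have h : ((T (x * x) : ℚ) : ℝ) = 0 := by rw [hx]; norm_num
    rw [htr' (x * x)] at h
    simp only [map_mul] at h
    have h2 : ι x = 0 := by nlinarith [sq_nonneg (ι x), sq_nonneg (ι (σ x)), sq_nonneg (ι (σ (σ x))), sq_nonneg (ι x + ι (σ x) + ι (σ (σ x)))]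
    exact ι.injective (by rw [h2, map_zero])
  -- integrality facts
  have hint : ∀ y : 𝓞 F, ∃ n : ℤ, (n : ℚ) = T (y : F) := by
    intro y
    have h1 : IsIntegral ℤ (T (y : F)) := Algebra.isIntegral_trace y.isIntegral_coe
    obtain ⟨n, hn⟩ := IsIntegrallyClosed.isIntegral_iff.mp h1
    exact ⟨n, by exact_mod_cast hn⟩
  have hratint : ∀ r : ℚ, IsIntegral ℤ (algebraMap ℚ F r) → ∃ k : ℤ, (k : ℚ) = r := by
    intro r h
    have h1 : IsIntegral ℤ r := by
      have hinj : Function.Injective ((Algebra.ofId ℚ F).restrictScalars ℤ) :=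
        (algebraMap ℚ F).injective
      rw [← isIntegral_algHom_iff ((Algebra.ofId ℚ F).restrictScalars ℤ) hinj]
      exact h
    obtain ⟨k, hk⟩ := IsIntegrallyClosed.isIntegral_iff.mp h1
    exact ⟨k, by exact_mod_cast hk⟩
  -- the quadratic form
  set Qq : 𝓞 F → ℚ := fun y => 3 * T ((y : F) * (y : F)) - (T (y : F)) ^ 2 with hQqdef
  have hQint : ∀ y : 𝓞 F, ∃ n : ℤ, (n : ℚ) = Qq y := by
    intro y
    obtain ⟨n1, hn1⟩ := hint (y * y)
    obtain ⟨n2, hn2⟩ := hint y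
    refine ⟨3 * n1 - n2 ^ 2, ?_⟩
    have hyy : ((y * y : 𝓞 F) : F) = (y : F) * (y : F) := by
      simp [NumberField.RingOfIntegers.coe_eq_algebraMap, map_mul]
    rw [hyy] at hn1
    simp only [hQqdef]
    push_cast
    rw [hn1, hn2]
  have hQnn : ∀ y : 𝓞 F, 0 ≤ Qq y := by
    intro y
    have h : (0 : ℝ) ≤ ((Qq y : ℚ) : ℝ) := by
      simp only [hQqdef]
      push_cast
      rw [htr' ((y : F) * (y : F)), htr' (y : F)]
      simp only [map_mul]
      nlinarith [sq_nonneg (ι (y : F) - ι (σ (y : F))), sq_nonneg (ι (σ (y : F)) - ι (σ (σ (y : F)))), sq_nonneg (ι (y : F) - ι (σ (σ (y : F))))]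
    exact_mod_cast h
  -- master quadratic identities (proved by passing to ℝ)
  have hTww : ∀ x : F, T ((3 * x - algebraMap ℚ F (T x)) * (3 * x - algebraMap ℚ F (T x)))
      = 3 * (3 * T (x * x) - (T x) ^ 2) := by
    intro x
    rw [← @Rat.cast_inj ℝ]
    rw [htr' ((3 * x - algebraMap ℚ F (T x)) * (3 * x - algebraMap ℚ F (T x)))]
    push_cast
    simp only [map_mul, map_sub, map_ofNat, hι_alg, AlgEquiv.commutes, hσ3']
    rw [htr' (x * x), htr' x]
    simp only [map_mul]
    ring
  have hTw0 : ∀ x : F, T (3 * x - algebraMap ℚ F (T x)) = 0 := by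
    intro x
    rw [← @Rat.cast_inj ℝ]
    rw [htr' (3 * x - algebraMap ℚ F (T x))]
    push_cast
    simp only [map_mul, map_sub, map_ofNat, hι_alg, AlgEquiv.commutes, hσ3']
    rw [htr' x]
    ring
  have hTwsw : ∀ x : F, 2 * T ((3 * x - algebraMap ℚ F (T x)) * σ (3 * x - algebraMap ℚ F (T x)))
      = -3 * (3 * T (x * x) - (T x) ^ 2) := by
    intro x
    rw [← @Rat.cast_inj ℝ]
    push_cast
    rw [htr' ((3 * x - algebraMap ℚ F (T x)) * σ (3 * x - algebraMap ℚ F (T x)))]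
    simp only [map_mul, map_sub, map_ofNat, hι_alg, AlgEquiv.commutes, hσ3']
    rw [htr' (x * x), htr' x]
    simp only [map_mul]
    ring
  have hTcomb : ∀ (β γ : ℚ) (x : F),
      T ((algebraMap ℚ F β * (3 * x - algebraMap ℚ F (T x)) + algebraMap ℚ F γ * σ (3 * x - algebraMap ℚ F (T x)))
        * (algebraMap ℚ F β * (3 * x - algebraMap ℚ F (T x)) + algebraMap ℚ F γ * σ (3 * x - algebraMap ℚ F (T x))))
      = (β ^ 2 - β * γ + γ ^ 2) * (3 * (3 * T (x * x) - (T x) ^ 2)) := by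
    intro β γ x
    rw [← @Rat.cast_inj ℝ]
    rw [htr']
    push_cast
    simp only [map_mul, map_sub, map_add, map_ofNat, hι_alg, AlgEquiv.commutes, hσ3']
    rw [htr' (x * x), htr' x]
    simp only [map_mul]
    ring
  -- elements not in ℤ have nonzero Q
  have hQzero : ∀ y : 𝓞 F, Qq y = 0 → ∃ k : ℤ, (y : F) = (k : F) := by
    intro y hy
    have h0 : T ((3 * (y : F) - algebraMap ℚ F (T (y : F))) * (3 * (y : F) - algebraMap ℚ F (T (y : F)))) = 0 := by
      rw [hTww (y : F)]
      have : (3 : ℚ) * T ((y : F) * (y : F)) - (T (y : F)) ^ 2 = Qq y := rfl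
      rw [this, hy, mul_zero]
    have h1 : 3 * (y : F) - algebraMap ℚ F (T (y : F)) = 0 := hTzero _ h0
    have h2 : (y : F) = algebraMap ℚ F (T (y : F) / 3) := by
      rw [sub_eq_zero] at h1
      rw [map_div₀, map_ofNat, ← h1]
      field_simp
    have h4 : IsIntegral ℤ (algebraMap ℚ F (T (y : F) / 3)) := by
      rw [← h2]
      exact y.isIntegral_coe
    obtain ⟨k, hk⟩ := hratint _ h4
    refine ⟨k, ?_⟩
    rw [h2, ← hk]
    simp [map_intCast]
  have hQg0 : Qq g ≠ 0 := by
    intro h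
    obtain ⟨k, hk⟩ := hQzero g h
    exact hg ⟨k, hk⟩
  have hQgpos : 0 < Qq g := lt_of_le_of_ne (hQnn g) (Ne.symm hQg0)
  -- minimality
  have hex : ∃ n : ℕ, 0 < n ∧ ∃ y : 𝓞 F, Qq y = (n : ℚ) := by
    obtain ⟨ng, hng⟩ := hQint g
    have hngpos : 0 < ng := by exact_mod_cast hng ▸ hQgpos
    refine ⟨ng.toNat, by omega, g, ?_⟩
    rw [← hng]
    congr 1
    omega
  haveI : DecidablePred fun n : ℕ => 0 < n ∧ ∃ y : 𝓞 F, Qq y = (n : ℚ) := fun _ => Classical.propDecidable _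
  set n₀ := Nat.find hex with hn₀def
  obtain ⟨hn₀pos, x₀, hx₀⟩ := Nat.find_spec hex
  have hmin : ∀ y : 𝓞 F, Qq y ≠ 0 → (n₀ : ℚ) ≤ Qq y := by
    intro y hy
    obtain ⟨m, hm⟩ := hQint y
    have hmpos : 0 < m := by
      have h1 : 0 < Qq y := lt_of_le_of_ne (hQnn y) (Ne.symm hy)
      exact_mod_cast hm ▸ h1
    have hP : 0 < m.toNat ∧ ∃ y' : 𝓞 F, Qq y' = (m.toNat : ℚ) := by
      refine ⟨by omega, y, ?_⟩
      rw [← hm]; congr 1; omega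
    have hle : n₀ ≤ m.toNat := Nat.find_le hP
    calc (n₀ : ℚ) ≤ (m.toNat : ℚ) := by exact_mod_cast hle
      _ = Qq y := by
        rw [← hm]; exact_mod_cast Int.toNat_of_nonneg hmpos.le
  set Q₀ : ℚ := Qq x₀ with hQ₀def
  have hQ₀n : Q₀ = (n₀ : ℚ) := hx₀
  have hQ₀pos : 0 < Q₀ := by rw [hQ₀n]; exact_mod_cast hn₀pos
  set X : F := (x₀ : F) with hXdef
  set s : ℚ := T X with hsdef
  set w : F := 3 * X - algebraMap ℚ F s with hwdef
  have hQ₀eq : Q₀ = 3 * T (X * X) - s ^ 2 := rfl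
  have hA : T (w * w) = 3 * Q₀ := by rw [hwdef, hsdef, hTww X, ← hQ₀eq]
  have hB : T (w * σ w) = -(3 * Q₀) / 2 := by
    have := hTwsw X
    rw [← hsdef, ← hwdef, ← hQ₀eq] at this
    linarith
  have hTw : T w = 0 := by rw [hwdef, hsdef]; exact hTw0 X
  have hTσw : T (σ w) = 0 := by rw [hTσ, hTw]
  have hσww : T (σ w * σ w) = 3 * Q₀ := by rw [← map_mul, hTσ, hA]
  have hσwXw : T (σ w * w) = -(3 * Q₀) / 2 := by rw [mul_comm]; exact hB
  -- linear independence
  have hli₀ : ∀ α β γ : ℚ,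
      algebraMap ℚ F α + algebraMap ℚ F β * w + algebraMap ℚ F γ * σ w = 0 →
      α = 0 ∧ β = 0 ∧ γ = 0 := by
    intro α β γ h
    have hα : α = 0 := by
      have h1 := congrArg T h
      rw [map_zero, map_add, map_add, hTr] at h1
      rw [hTc, hTc, hTw, hTσw, mul_zero, mul_zero, add_zero, add_zero] at h1
      linarith
    rw [hα, map_zero, zero_add] at h
    have e1 : β * (3 * Q₀) + γ * (-(3 * Q₀) / 2) = 0 := by
      have h1 := congrArg (fun z => T (z * w)) h
      simp only [zero_mul, map_zero, add_mul, mul_assoc, map_add, hTc] at h1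
      rw [hA, hσwXw] at h1
      linarith
    have e2 : β * (-(3 * Q₀) / 2) + γ * (3 * Q₀) = 0 := by
      have h1 := congrArg (fun z => T (z * σ w)) h
      simp only [zero_mul, map_zero, add_mul, mul_assoc, map_add, hTc] at h1
      rw [hB, hσww] at h1
      linarith
    have hβ : β = 0 := by nlinarith [hQ₀pos]
    have hγ : γ = 0 := by nlinarith [hQ₀pos]
    exact ⟨hα, hβ, hγ⟩
  have hσX : σ w = 3 * σ X - algebraMap ℚ F s := by
    rw [hwdef]
    rw [map_sub, map_mul, map_ofNat, AlgEquiv.commutes]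
  have hXw : ∀ u v t : ℚ,
      algebraMap ℚ F u + algebraMap ℚ F v * X + algebraMap ℚ F t * σ X
      = algebraMap ℚ F (u + (v + t) * s / 3) + algebraMap ℚ F (v / 3) * w
        + algebraMap ℚ F (t / 3) * σ w := by
    intro u v t
    rw [hσX, hwdef]
    simp only [map_add, map_mul, map_div₀, map_ofNat]
    ring
  have hli₀' : ∀ α β γ : ℚ,
      algebraMap ℚ F α + algebraMap ℚ F β * X + algebraMap ℚ F γ * σ X = 0 →
      α = 0 ∧ β = 0 ∧ γ = 0 := by
    intro α β γ h
    rw [hXw] at h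
    obtain ⟨h1, h2, h3⟩ := hli₀ _ _ _ h
    have hβ : β = 0 := by
      field_simp at h2; linarith
    have hγ : γ = 0 := by
      field_simp at h3; linarith
    refine ⟨?_, hβ, hγ⟩
    rw [hβ, hγ] at h1
    simpa using h1
  have hliF : LinearIndependent ℚ ![(1 : F), X, σ X] := by
    rw [Fintype.linearIndependent_iff]
    intro c hc
    rw [Fin.sum_univ_three] at hc
    simp only [Matrix.cons_val_zero, Matrix.cons_val_one, Matrix.head_cons,
      Matrix.cons_val_two, Matrix.tail_cons] at hc
    have hc' : algebraMap ℚ F (c 0) + algebraMap ℚ F (c 1) * X + algebraMap ℚ F (c 2) * σ X = 0 := by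
      rw [← hc]
      simp only [Algebra.smul_def, mul_one]
    obtain ⟨h0, h1, h2⟩ := hli₀' _ _ _ hc'
    intro i
    fin_cases i <;> assumption
  have hcardfin : Fintype.card (Fin 3) = Module.finrank ℚ F := by
    rw [h3]; simp
  set bF := basisOfLinearIndependentOfCardEqFinrank hliF hcardfin with hbFdef
  have hbFcoe : ⇑bF = ![(1 : F), X, σ X] := by
    rw [hbFdef]; exact coe_basisOfLinearIndependentOfCardEqFinrank _ _
  have hb0 : bF 0 = (1 : F) := by rw [hbFcoe]; rfl
  have hb1v : bF 1 = X := by rw [hbFcoe]; rfl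
  have hb2v : bF 2 = σ X := by rw [hbFcoe]; rfl
  have hcoord : ∀ z : F, ∃ u v t : ℚ,
      z = algebraMap ℚ F u + algebraMap ℚ F v * X + algebraMap ℚ F t * σ X := by
    intro z
    refine ⟨bF.repr z 0, bF.repr z 1, bF.repr z 2, ?_⟩
    have h := bF.sum_repr z
    rw [Fin.sum_univ_three, hb0, hb1v, hb2v] at h
    calc z = (bF.repr z) 0 • (1 : F) + (bF.repr z) 1 • X + (bF.repr z) 2 • σ X := h.symm
      _ = _ := by simp only [Algebra.smul_def, mul_one]
  have hcoordw : ∀ z : F, T z = 0 → ∃ β γ : ℚ,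
      z = algebraMap ℚ F β * w + algebraMap ℚ F γ * σ w := by
    intro z hz
    obtain ⟨u, v, t, hz'⟩ := hcoord z
    rw [hXw u v t] at hz'
    have hTz : T z = 3 * (u + (v + t) * s / 3) := by
      rw [hz']
      rw [map_add, map_add, hTr, hTc, hTc, hTw, hTσw, mul_zero, mul_zero, add_zero, add_zero]
    rw [hz] at hTz
    have hα : u + (v + t) * s / 3 = 0 := by linarith
    refine ⟨v / 3, t / 3, ?_⟩
    rw [hz', hα, map_zero, zero_add]
  -- the key rounding lemma
  have hx₁int : IsIntegral ℤ (σ X) := by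
    have h := x₀.isIntegral_coe
    exact h.map (σ.toAlgHom.restrictScalars ℤ)
  set x₁ : 𝓞 F := ⟨σ X, hx₁int⟩ with hx₁def
  have hx₁coe : (x₁ : F) = σ X := rfl
  have hround : ∀ y : 𝓞 F, ∃ m n : ℤ,
      3 * (y : F) - algebraMap ℚ F (T (y : F))
        = algebraMap ℚ F (m : ℚ) * w + algebraMap ℚ F (n : ℚ) * σ w := by
    intro y
    have hTz : T (3 * (y : F) - algebraMap ℚ F (T (y : F))) = 0 := hTw0 (y : F)
    obtain ⟨β, γ, hzw⟩ := hcoordw _ hTz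
    set m := round β with hmdef
    set n := round γ with hndef
    set y' : 𝓞 F := y - m • x₀ - n • x₁ with hy'def
    have hy'F : (y' : F) = (y : F) - algebraMap ℚ F (m : ℚ) * X - algebraMap ℚ F (n : ℚ) * σ X := by
      rw [hy'def]
      push_cast [NumberField.RingOfIntegers.coe_eq_algebraMap, map_sub, map_zsmul]
      simp only [zsmul_eq_mul, map_intCast]
      rfl
    have hTy' : T (y' : F) = T (y : F) - (m : ℚ) * s - (n : ℚ) * s := by
      rw [hy'F, map_sub, map_sub, hTc, hTc, hTσ]
    have hz' : 3 * (y' : F) - algebraMap ℚ F (T (y' : F))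
        = algebraMap ℚ F (β - (m : ℚ)) * w + algebraMap ℚ F (γ - (n : ℚ)) * σ w := by
      rw [hTy', hy'F]
      rw [hσX, hwdef] at hzw ⊢
      simp only [map_sub, map_mul, map_add, map_intCast] at hzw ⊢
      linear_combination hzw
    have hQy' : Qq y' = ((β - m) ^ 2 - (β - m) * (γ - n) + (γ - n) ^ 2) * Q₀ := by
      have h1 := hTww (y' : F)
      rw [hz'] at h1
      rw [hwdef, hsdef] at h1
      have h2 := hTcomb (β - (m : ℚ)) (γ - (n : ℚ)) X
      rw [h1] at h2
      have h3 : (3 : ℚ) * T ((y' : F) * (y' : F)) - (T (y' : F)) ^ 2 = Qq y' := rfl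
      rw [h3, ← hQ₀eq] at h2
      linarith
    have hb1 : -(1 / 2 : ℚ) ≤ β - (m : ℚ) ∧ β - (m : ℚ) ≤ 1 / 2 := by
      rw [hmdef]; exact abs_le.mp (abs_sub_round β)
    have hb2 : -(1 / 2 : ℚ) ≤ γ - (n : ℚ) ∧ γ - (n : ℚ) ≤ 1 / 2 := by
      rw [hndef]; exact abs_le.mp (abs_sub_round γ)
    have hE : ((β - m) ^ 2 - (β - m) * (γ - n) + (γ - n) ^ 2) ≤ 3 / 4 := by
      nlinarith [hb1.1, hb1.2, hb2.1, hb2.2]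
    have hlt : Qq y' < Q₀ := by
      rw [hQy']
      linarith [hQ₀pos, hE, mul_le_mul_of_nonneg_right hE hQ₀pos.le]
    have h0 : Qq y' = 0 := by
      by_contra hne
      have h1 := hmin y' hne
      rw [← hQ₀n] at h1
      linarith
    have hzz : T ((3 * (y' : F) - algebraMap ℚ F (T (y' : F)))
        * (3 * (y' : F) - algebraMap ℚ F (T (y' : F)))) = 0 := by
      rw [hTww]
      have h3 : (3 : ℚ) * T ((y' : F) * (y' : F)) - (T (y' : F)) ^ 2 = Qq y' := rfl
      rw [h3, h0, mul_zero]
    have hz0 := hTzero _ hzz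
    rw [hz'] at hz0
    have h4 : algebraMap ℚ F (0 : ℚ) + algebraMap ℚ F (β - (m : ℚ)) * w
        + algebraMap ℚ F (γ - (n : ℚ)) * σ w = 0 := by
      rw [map_zero, zero_add]; exact hz0
    obtain ⟨-, hβ, hγ⟩ := hli₀ _ _ _ h4
    refine ⟨m, n, ?_⟩
    rw [hzw]
    have hβ' : β = (m : ℚ) := by linarith [sub_eq_zero.mp hβ]
    have hγ' : γ = (n : ℚ) := by linarith [sub_eq_zero.mp hγ]
    rw [hβ', hγ']
  -- ℤ-basis of 𝓞 F
  have hliZ : LinearIndependent ℤ ![(1 : 𝓞 F), x₀, x₁] := by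
    have h1 : LinearIndependent ℤ ![(1 : F), X, σ X] := by
      refine hliF.restrict_scalars ?_
      intro r r' hrr'
      simpa using hrr'
    apply LinearIndependent.of_comp ((IsScalarTower.toAlgHom ℤ (𝓞 F) F).toLinearMap)
    have heq : ((IsScalarTower.toAlgHom ℤ (𝓞 F) F).toLinearMap ∘ ![(1 : 𝓞 F), x₀, x₁])
        = ![(1 : F), X, σ X] := by
      funext i
      fin_cases i <;> simp [hx₁coe, hXdef]
    rw [heq]
    exact h1
  have hspanZ : ⊤ ≤ Submodule.span ℤ (Set.range ![(1 : 𝓞 F), x₀, x₁]) := by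
    rintro y -
    obtain ⟨m, n, hmn⟩ := hround y
    have hu : ∃ k : ℤ, y - m • x₀ - n • x₁ = k • (1 : 𝓞 F) := by
      set u : 𝓞 F := y - m • x₀ - n • x₁ with hudef
      have huF : (u : F) = algebraMap ℚ F ((T (y : F) - ((m : ℚ) + (n : ℚ)) * s) / 3) := by
        have h1 : (u : F) = (y : F) - algebraMap ℚ F (m : ℚ) * X - algebraMap ℚ F (n : ℚ) * σ X := by
          rw [hudef]
          push_cast [NumberField.RingOfIntegers.coe_eq_algebraMap, map_sub, map_zsmul]
          simp only [zsmul_eq_mul, map_intCast]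
          rfl
        rw [h1]
        rw [hσX, hwdef] at hmn
        have h5 : algebraMap ℚ F (T (y : F) - ((m : ℚ) + (n : ℚ)) * s)
            = 3 * ((y : F) - algebraMap ℚ F (m : ℚ) * X - algebraMap ℚ F (n : ℚ) * σ X) := by
          simp only [map_sub, map_mul, map_add, map_intCast] at hmn ⊢
          linear_combination -hmn
        rw [map_div₀, map_ofNat, h5]
        field_simp
      have hui : IsIntegral ℤ (u : F) := u.isIntegral_coe
      rw [huF] at hui
      obtain ⟨k, hk⟩ := hratint _ hui
      refine ⟨k, NumberField.RingOfIntegers.eq_iff.mp ?_⟩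
      rw [huF, ← hk]
      simp [NumberField.RingOfIntegers.coe_eq_algebraMap, zsmul_eq_mul, map_intCast]
    obtain ⟨k, hk⟩ := hu
    have hy : y = k • (1 : 𝓞 F) + m • x₀ + n • x₁ := by
      rw [← hk]; abel
    rw [hy]
    refine Submodule.add_mem _ (Submodule.add_mem _ ?_ ?_) ?_
    · exact Submodule.smul_mem _ _ (Submodule.subset_span ⟨0, rfl⟩)
    · exact Submodule.smul_mem _ _ (Submodule.subset_span ⟨1, rfl⟩)
    · exact Submodule.smul_mem _ _ (Submodule.subset_span ⟨2, rfl⟩)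
  set bZ : Module.Basis (Fin 3) ℤ (𝓞 F) := Module.Basis.mk hliZ hspanZ with hbZdef
  have hd1 : Algebra.discr ℤ bZ = NumberField.discr F := NumberField.discr_eq_discr F bZ
  set bQ := bZ.localizationLocalization ℚ (nonZeroDivisors ℤ) F with hbQdef
  have hd2 : Algebra.discr ℚ bQ = algebraMap ℤ ℚ (Algebra.discr ℤ bZ) :=
    Algebra.discr_localizationLocalization ℤ (nonZeroDivisors ℤ) F bZ
  have hbQap : ∀ i : Fin 3, bQ i = algebraMap (𝓞 F) F (bZ i) := by
    intro i
    rw [hbQdef]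
    exact Module.Basis.localizationLocalization_apply ℚ (nonZeroDivisors ℤ) F bZ i
  have hbQ0 : bQ 0 = 1 := by
    rw [hbQap 0, hbZdef, Module.Basis.mk_apply]; simp
  have hbQ1 : bQ 1 = X := by
    rw [hbQap 1, hbZdef, Module.Basis.mk_apply]
    simp only [Matrix.cons_val_one, Matrix.head_cons, Matrix.cons_val_zero]
    rfl
  have hbQ2 : bQ 2 = σ X := by
    rw [hbQap 2, hbZdef, Module.Basis.mk_apply]
    simp only [Matrix.cons_val_two, Matrix.tail_cons, Matrix.head_cons]
    exact hx₁coe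
  set a : ℚ := T (X * X) with hadef
  set b : ℚ := T (X * σ X) with hbdef
  have hkeyX : a + 2 * b = s ^ 2 := by
    rw [hadef, hbdef, hsdef, ← @Rat.cast_inj ℝ]
    push_cast
    rw [htr' (X * X), htr' (X * σ X), htr' X]
    simp only [map_mul, hσ3']
    ring
  have hdet : Algebra.discr ℚ bQ = ((3 * a - s ^ 2) / 2) ^ 2 := by
    rw [Algebra.discr_def, Matrix.det_fin_three]
    simp only [Algebra.traceMatrix_apply, Algebra.traceForm_apply, hbQ0, hbQ1, hbQ2]
    have e00 : T ((1 : F) * 1) = 3 := by rw [one_mul, hT1]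
    have e01 : T ((1 : F) * X) = s := by rw [one_mul, hsdef]
    have e02 : T ((1 : F) * σ X) = s := by rw [one_mul, hTσ, hsdef]
    have e10 : T (X * 1) = s := by rw [mul_one, hsdef]
    have e20 : T (σ X * 1) = s := by rw [mul_one, hTσ, hsdef]
    have e11 : T (X * X) = a := rfl
    have e12 : T (X * σ X) = b := rfl
    have e21 : T (σ X * X) = b := by rw [mul_comm]
    have e22 : T (σ X * σ X) = a := by rw [← map_mul, hTσ]
    rw [e00, e01, e02, e10, e20, e11, e12, e21, e22]
    linear_combination ((-3 / 2 : ℚ) * b + s ^ 2 / 4 + 3 * a / 4) * hkeyX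
  have hQ₀a : Q₀ = 3 * a - s ^ 2 := hQ₀eq
  have hd2' : Algebra.discr ℚ bQ = ((Algebra.discr ℤ bZ : ℤ) : ℚ) := by
    rw [hd2]; simp [eq_intCast]
  have hdiscQ : ((NumberField.discr F : ℤ) : ℚ) = (Q₀ / 2) ^ 2 := by
    rw [← hd1, ← hd2', hdet, ← hQ₀a]
  have habs : ((p : ℚ)) ^ 2 = (Q₀ / 2) ^ 2 := by
    have h1 : ((p : ℤ) : ℚ) ^ 2 = ((|NumberField.discr F| : ℤ) : ℚ) := by
      exact_mod_cast congrArg (fun z : ℤ => (z : ℚ)) (by rw [← hdisc] : ((p : ℤ) ^ 2 : ℤ) = |NumberField.discr F|)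
    rw [Int.cast_abs, hdiscQ] at h1
    rw [abs_of_nonneg (sq_nonneg _)] at h1
    exact_mod_cast h1
  have hQ2p : Q₀ = 2 * (p : ℚ) := by
    have hppos : (0 : ℚ) < p := by exact_mod_cast hp
    have hfactor : (Q₀ - 2 * (p : ℚ)) * (Q₀ + 2 * (p : ℚ)) = 0 := by
      linear_combination -4 * habs
    rcases mul_eq_zero.mp hfactor with h | h
    · linarith
    · linarith
  -- conclude
  obtain ⟨m, n, hg'⟩ := hround g
  have hQgval : Qq g = ((m : ℚ) ^ 2 - (m : ℚ) * (n : ℚ) + (n : ℚ) ^ 2) * Q₀ := by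
    have h1 := hTww (g : F)
    rw [hg'] at h1
    rw [hwdef, hsdef] at h1
    have h2 := hTcomb (m : ℚ) (n : ℚ) X
    rw [h1] at h2
    have h3 : (3 : ℚ) * T ((g : F) * (g : F)) - (T (g : F)) ^ 2 = Qq g := rfl
    rw [h3, ← hQ₀eq] at h2
    linarith
  have hmn0 : ¬(m = 0 ∧ n = 0) := by
    rintro ⟨rfl, rfl⟩
    apply hQg0
    rw [hQgval]
    norm_num
  have hmn1 : (1 : ℚ) ≤ (m : ℚ) ^ 2 - (m : ℚ) * (n : ℚ) + (n : ℚ) ^ 2 := by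
    have hZ : (1 : ℤ) ≤ m ^ 2 - m * n + n ^ 2 := by
      have h2 : (0 : ℤ) < m ^ 2 - m * n + n ^ 2 := by
        rcases Classical.em (m = 0) with hm | hm
        · subst hm
          have hn : n ≠ 0 := fun h => hmn0 ⟨rfl, h⟩
          have := Int.one_le_abs (by simpa using hn)
          nlinarith only [this, abs_nonneg n, abs_mul_abs_self n]
        · have := Int.one_le_abs hm
          nlinarith only [this, abs_nonneg m, abs_mul_abs_self m, sq_nonneg (m - n), sq_nonneg n]
      omega
    exact_mod_cast hZ
  have hQgge : 2 * (p : ℚ) ≤ Qq g := by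
    rw [hQgval, ← hQ2p]
    nlinarith only [hQ₀pos, hmn1]
  have hfn : fnorm2 σ ι (g : F) = ((T ((g : F) * (g : F)) : ℚ) : ℝ) := by
    rw [fnorm2, htr' ((g : F) * (g : F))]
    simp only [map_mul]
    ring
  have hfinal : 2 * (p : ℚ) / 3 ≤ T ((g : F) * (g : F)) := by
    have h1 : Qq g = 3 * T ((g : F) * (g : F)) - (T (g : F)) ^ 2 := rfl
    nlinarith only [sq_nonneg (T (g : F)), h1, hQgge]
  rw [hfn]
  have h2 : ((2 * (p : ℚ) / 3 : ℚ) : ℝ) ≤ ((T ((g : F) * (g : F)) : ℚ) : ℝ) := by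
    exact_mod_cast hfinal
  calc 2 * (p : ℝ) / 3 = ((2 * (p : ℚ) / 3 : ℚ) : ℝ) := by push_cast; ring
    _ ≤ _ := h2
end

section
/- Let E be a real inner product space and let Λ ⊆ E be a hexagonal lattice with ℤ-basis b₁, b₂ satisfying ‖b₁‖ = ‖b₂‖ = ‖b₂ − b₁‖ = λ₁ > 0 (so λ₁ is the length of the shortest nonzero vectors of Λ). Let w = α₁b₁ + α₂b₂ with α₁, α₂ ∈ (−1/2, 1/2]. Then the set S = { v ∈ Λ : ‖v − w‖ < λ₁ } has at most 4 elements; moreover every nonzero v ∈ S satisfies ‖v − w‖ ≥ 3λ₁/16; any two distinct nonzero v, v' ∈ S with ‖v − w‖ ≤ ‖v' − w‖ satisfy ‖v' − w‖ ≥ λ₁/2; and any three pairwise distinct nonzero v, v', v'' ∈ S with ‖v − w‖ ≤ ‖v' − w‖ ≤ ‖v'' − w‖ satisfy ‖v'' − w‖ ≥ (√3/2)λ₁. -/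
open scoped RealInnerProductSpace

private def hexPt {E : Type*} [NormedAddCommGroup E] [InnerProductSpace ℝ E]
    (b₁ b₂ : E) (p : ℤ×ℤ) : E := ((p.1 : ℝ)) • b₁ + ((p.2 : ℝ)) • b₂

private def hexH : Finset (ℤ×ℤ) := {(1,0),(0,1),(-1,1),(-1,0),(0,-1),(1,-1)}

private lemma hexH_tri : ∀ p ∈ hexH, ∀ q ∈ hexH, ∀ r ∈ hexH, p ≠ q → p ≠ r → q ≠ r →
    3 ≤ (p.1-q.1)*(p.1-q.1)+(p.1-q.1)*(p.2-q.2)+(p.2-q.2)*(p.2-q.2) ∨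
    3 ≤ (p.1-r.1)*(p.1-r.1)+(p.1-r.1)*(p.2-r.2)+(p.2-r.2)*(p.2-r.2) ∨
    3 ≤ (q.1-r.1)*(q.1-r.1)+(q.1-r.1)*(q.2-r.2)+(q.2-r.2)*(q.2-r.2) := by decide

private lemma memhexH (m n : ℤ) (h1 : -1 ≤ m) (h2 : m ≤ 1) (h3 : -1 ≤ n) (h4 : n ≤ 1)
    (h5 : ¬(m=0∧n=0)) (h6 : ¬(m=1∧n=1)) (h7 : ¬(m=-1∧n=-1)) : (m,n) ∈ hexH := by
  simp only [hexH, Finset.mem_insert, Finset.mem_singleton, Prod.mk.injEq]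
  omega

private lemma hex_excl {x1 y1 x2 y2 B : ℝ} (h1 : x1^2+x1*y1+y1^2 < B)
    (h2 : x2^2+x2*y2+y2^2 < B) :
    (x1-x2)^2+(x1-x2)*(y1-y2)+(y1-y2)^2 < 4*B := by
  nlinarith [sq_nonneg (2*(x1+x2)+(y1+y2)), sq_nonneg (y1+y2)]

private lemma hex_int_pos {a b : ℤ} (h : ¬(a = 0 ∧ b = 0)) : 1 ≤ a^2+a*b+b^2 := by
  rcases eq_or_ne b 0 with rfl|hb
  · have ha : a ≠ 0 := by tauto
    nlinarith [sq_nonneg a, Int.one_le_abs ha, sq_abs a]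
  · nlinarith [sq_nonneg (2*a+b), Int.one_le_abs hb, sq_abs b]

private lemma hex_box {u : ℝ} (hu1 : -(1:ℝ)/2 < u) (hu2 : u ≤ 1/2) {m : ℤ} {y : ℝ}
    (h : ((m:ℝ)-u)^2 + ((m:ℝ)-u)*y + y^2 < 1) : -1 ≤ m ∧ m ≤ 1 := by
  have h3 : 3*((m:ℝ)-u)^2 < 4 := by nlinarith [sq_nonneg (((m:ℝ)-u)+2*y)]
  constructor
  · by_contra hc
    have : (m:ℝ) ≤ -2 := by exact_mod_cast (by omega : m ≤ -2)
    nlinarith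
  · by_contra hc
    have : (2:ℝ) ≤ (m:ℝ) := by exact_mod_cast (by omega : 2 ≤ m)
    nlinarith

private lemma hex_half {u : ℝ} (hu1 : -(1:ℝ)/2 < u) (hu2 : u ≤ 1/2) {m : ℤ} (hm : m ≠ 0) :
    1/4 ≤ ((m:ℝ)-u)^2 := by
  rcases (by omega : m ≤ -1 ∨ 1 ≤ m) with h|h
  · have : (m:ℝ) ≤ -1 := by exact_mod_cast h
    nlinarith
  · have : (1:ℝ) ≤ (m:ℝ) := by exact_mod_cast h
    nlinarith

private lemma hex_one {u v : ℝ} (hu1 : -(1:ℝ)/2 < u) (hu2 : u ≤ 1/2)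
    (hv1 : -(1:ℝ)/2 < v) (hv2 : v ≤ 1/2) {m n : ℤ} (e : ¬(m=0∧n=0)) :
    3/16 ≤ ((m:ℝ)-u)^2 + ((m:ℝ)-u)*((n:ℝ)-v) + ((n:ℝ)-v)^2 := by
  rcases eq_or_ne m 0 with hm|hm
  · have hn : n ≠ 0 := by tauto
    have h := hex_half hv1 hv2 hn
    nlinarith [sq_nonneg (2*((m:ℝ)-u)+((n:ℝ)-v))]
  · have h := hex_half hu1 hu2 hm
    nlinarith [sq_nonneg (((m:ℝ)-u)+2*((n:ℝ)-v))]

private lemma hex_two {u v : ℝ} {m1 n1 m2 n2 : ℤ} (d : ¬(m1 = m2 ∧ n1 = n2))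
    (q1 : ((m1:ℝ)-u)^2 + ((m1:ℝ)-u)*((n1:ℝ)-v) + ((n1:ℝ)-v)^2 < 1/4)
    (q2 : ((m2:ℝ)-u)^2 + ((m2:ℝ)-u)*((n2:ℝ)-v) + ((n2:ℝ)-v)^2 < 1/4) : False := by
  have h := hex_excl q1 q2
  have hi := hex_int_pos (a := m1-m2) (b := n1-n2) (by omega)
  have hi' : (1:ℝ) ≤ ((m1:ℝ)-(m2:ℝ))^2 + ((m1:ℝ)-(m2:ℝ))*((n1:ℝ)-(n2:ℝ)) +
      ((n1:ℝ)-(n2:ℝ))^2 := by exact_mod_cast hi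
  nlinarith [h, hi']

private lemma hex_three {u v : ℝ} (hu1 : -(1:ℝ)/2 < u) (hu2 : u ≤ 1/2)
    (hv1 : -(1:ℝ)/2 < v) (hv2 : v ≤ 1/2) {m1 n1 m2 n2 m3 n3 : ℤ}
    (e1 : ¬(m1=0∧n1=0)) (e2 : ¬(m2=0∧n2=0)) (e3 : ¬(m3=0∧n3=0))
    (d12 : ¬(m1 = m2 ∧ n1 = n2)) (d13 : ¬(m1 = m3 ∧ n1 = n3)) (d23 : ¬(m2 = m3 ∧ n2 = n3))
    (q1 : ((m1:ℝ)-u)^2 + ((m1:ℝ)-u)*((n1:ℝ)-v) + ((n1:ℝ)-v)^2 < 3/4)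
    (q2 : ((m2:ℝ)-u)^2 + ((m2:ℝ)-u)*((n2:ℝ)-v) + ((n2:ℝ)-v)^2 < 3/4)
    (q3 : ((m3:ℝ)-u)^2 + ((m3:ℝ)-u)*((n3:ℝ)-v) + ((n3:ℝ)-v)^2 < 3/4) : False := by
  have corner : ∀ {m n : ℤ}, (((m:ℝ)-u)^2 + ((m:ℝ)-u)*((n:ℝ)-v) + ((n:ℝ)-v)^2 < 3/4) →
      ¬(m=1∧n=1) ∧ ¬(m=-1∧n=-1) := by
    intro m n hq
    constructor
    · rintro ⟨rfl, rfl⟩; push_cast at hq; nlinarith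
    · rintro ⟨rfl, rfl⟩; push_cast at hq; nlinarith
  have box : ∀ {m n : ℤ}, (((m:ℝ)-u)^2 + ((m:ℝ)-u)*((n:ℝ)-v) + ((n:ℝ)-v)^2 < 3/4) →
      ¬(m=0∧n=0) → (m,n) ∈ hexH := by
    intro m n hq he
    have h1 : ((m:ℝ)-u)^2 + ((m:ℝ)-u)*((n:ℝ)-v) + ((n:ℝ)-v)^2 < 1 := by linarith
    have h2 : ((n:ℝ)-v)^2 + ((n:ℝ)-v)*((m:ℝ)-u) + ((m:ℝ)-u)^2 < 1 := by linarith
    obtain ⟨hm1, hm2⟩ := hex_box hu1 hu2 h1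
    obtain ⟨hn1, hn2⟩ := hex_box hv1 hv2 h2
    exact memhexH m n hm1 hm2 hn1 hn2 he (corner hq).1 (corner hq).2
  have p1 := box q1 e1
  have p2 := box q2 e2
  have p3 := box q3 e3
  have hne12 : ((m1,n1) : ℤ×ℤ) ≠ (m2,n2) := by simp only [ne_eq, Prod.mk.injEq]; tauto
  have hne13 : ((m1,n1) : ℤ×ℤ) ≠ (m3,n3) := by simp only [ne_eq, Prod.mk.injEq]; tauto
  have hne23 : ((m2,n2) : ℤ×ℤ) ≠ (m3,n3) := by simp only [ne_eq, Prod.mk.injEq]; tauto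
  have htri := hexH_tri _ p1 _ p2 _ p3 hne12 hne13 hne23
  simp only at htri
  have pairFalse : ∀ {a b c d : ℤ},
      (((a:ℝ)-u)^2 + ((a:ℝ)-u)*((b:ℝ)-v) + ((b:ℝ)-v)^2 < 3/4) →
      (((c:ℝ)-u)^2 + ((c:ℝ)-u)*((d:ℝ)-v) + ((d:ℝ)-v)^2 < 3/4) →
      3 ≤ (a-c)*(a-c)+(a-c)*(b-d)+(b-d)*(b-d) → False := by
    intro a b c d ha hc hint
    have h := hex_excl ha hc
    have hi' : (3:ℝ) ≤ ((a:ℝ)-(c:ℝ))*((a:ℝ)-(c:ℝ)) + ((a:ℝ)-(c:ℝ))*((b:ℝ)-(d:ℝ)) +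
        ((b:ℝ)-(d:ℝ))*((b:ℝ)-(d:ℝ)) := by exact_mod_cast hint
    nlinarith [h, hi']
  rcases htri with h|h|h
  · exact pairFalse q1 q2 h
  · exact pairFalse q1 q3 h
  · exact pairFalse q2 q3 h

set_option maxHeartbeats 1000000 in
/-- Points of a hexagonal lattice near a point `w` of the fundamental domain:
there are at most `4` lattice points at distance `< λ₁` from `w`, every nonzero such
point is at distance `≥ 3λ₁/16`; the second-closest nonzero one is at distance `≥ λ₁/2`
and the third-closest nonzero one is at distance `≥ (√3/2)λ₁`. -/
theorem hexagonal_lattice_points_near_fundamental_domain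
    {E : Type*} [NormedAddCommGroup E] [InnerProductSpace ℝ E]
    (b₁ b₂ : E) (lam : ℝ) (hlam : 0 < lam)
    (hb₁ : ‖b₁‖ = lam) (hb₂ : ‖b₂‖ = lam) (hb₁₂ : ‖b₂ - b₁‖ = lam)
    (α₁ α₂ : ℝ) (hα₁ : α₁ ∈ Set.Ioc (-(1 : ℝ)/2) (1/2)) (hα₂ : α₂ ∈ Set.Ioc (-(1 : ℝ)/2) (1/2))
    (w : E) (hw : w = α₁ • b₁ + α₂ • b₂) :
    (∃ s : Finset E,
        {v : E | v ∈ AddSubgroup.closure {b₁, b₂} ∧ ‖v - w‖ < lam} ⊆ (s : Set E) ∧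
        s.card ≤ 4) ∧
    (∀ v ∈ AddSubgroup.closure {b₁, b₂}, v ≠ 0 → ‖v - w‖ < lam →
      3 * lam / 16 ≤ ‖v - w‖) ∧
    (∀ v ∈ AddSubgroup.closure {b₁, b₂}, ∀ v' ∈ AddSubgroup.closure {b₁, b₂},
      v ≠ 0 → v' ≠ 0 → v ≠ v' → ‖v - w‖ < lam → ‖v' - w‖ < lam →
      ‖v - w‖ ≤ ‖v' - w‖ → lam / 2 ≤ ‖v' - w‖) ∧
    (∀ v ∈ AddSubgroup.closure {b₁, b₂}, ∀ v' ∈ AddSubgroup.closure {b₁, b₂},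
      ∀ v'' ∈ AddSubgroup.closure {b₁, b₂},
      v ≠ 0 → v' ≠ 0 → v'' ≠ 0 → v ≠ v' → v ≠ v'' → v' ≠ v'' →
      ‖v - w‖ < lam → ‖v' - w‖ < lam → ‖v'' - w‖ < lam →
      ‖v - w‖ ≤ ‖v' - w‖ → ‖v' - w‖ ≤ ‖v'' - w‖ →
      Real.sqrt 3 / 2 * lam ≤ ‖v'' - w‖) := by
  classical
  obtain ⟨hα₁l, hα₁r⟩ := hα₁
  obtain ⟨hα₂l, hα₂r⟩ := hα₂
  have hl2 : (0:ℝ) < lam^2 := by positivity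
  have hbb : ⟪b₁, b₂⟫ = lam^2/2 := by
    have h := @norm_sub_sq_real E _ _ b₂ b₁
    rw [hb₁, hb₂, hb₁₂, real_inner_comm] at h
    linarith
  have hnorm : ∀ x y : ℝ, ‖x•b₁ + y•b₂‖^2 = lam^2 * (x^2+x*y+y^2) := by
    intro x y
    have h := @norm_add_sq_real E _ _ (x•b₁) (y•b₂)
    rw [norm_smul, norm_smul, real_inner_smul_left, real_inner_smul_right, hbb, hb₁, hb₂] at h
    rw [h, mul_pow, mul_pow]
    simp only [Real.norm_eq_abs, sq_abs]
    ring
  have hrepr : ∀ v ∈ AddSubgroup.closure ({b₁, b₂} : Set E),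
      ∃ m n : ℤ, v = (m:ℝ)•b₁+(n:ℝ)•b₂ := by
    intro v hv
    induction hv using AddSubgroup.closure_induction with
    | mem x hx => rcases hx with rfl|rfl
                  · exact ⟨1,0, by simp⟩
                  · exact ⟨0,1, by simp⟩
    | zero => exact ⟨0,0, by simp⟩
    | add x y hx hy ihx ihy =>
        obtain ⟨m,n,rfl⟩ := ihx; obtain ⟨m',n',rfl⟩ := ihy
        exact ⟨m+m', n+n', by push_cast; module⟩
    | neg x hx ihx =>
        obtain ⟨m,n,rfl⟩ := ihx
        exact ⟨-m, -n, by push_cast; module⟩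
  have hdist : ∀ m n : ℤ, ‖((m:ℝ)•b₁+(n:ℝ)•b₂) - w‖^2
      = lam^2 * (((m:ℝ)-α₁)^2+((m:ℝ)-α₁)*((n:ℝ)-α₂)+((n:ℝ)-α₂)^2) := by
    intro m n
    rw [hw, show ((m:ℝ)•b₁+(n:ℝ)•b₂) - (α₁•b₁+α₂•b₂)
        = ((m:ℝ)-α₁)•b₁ + ((n:ℝ)-α₂)•b₂ by module]
    exact hnorm _ _
  have hQlt : ∀ (m n : ℤ) (c : ℝ), 0 ≤ c → ‖((m:ℝ)•b₁+(n:ℝ)•b₂) - w‖ < c →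
      ((m:ℝ)-α₁)^2+((m:ℝ)-α₁)*((n:ℝ)-α₂)+((n:ℝ)-α₂)^2 < (c/lam)^2 := by
    intro m n c hc h
    have h2 : ‖((m:ℝ)•b₁+(n:ℝ)•b₂) - w‖^2 < c^2 :=
      pow_lt_pow_left₀ h (norm_nonneg _) two_ne_zero
    rw [hdist] at h2
    rw [div_pow]
    rw [lt_div_iff₀ hl2]
    linarith [h2]
  have hzero : ∀ m n : ℤ, m = 0 ∧ n = 0 → (m:ℝ)•b₁+(n:ℝ)•b₂ = (0:E) := by
    rintro m n ⟨rfl, rfl⟩; simp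
  have hlam1 : ((lam/lam):ℝ)^2 = 1 := by rw [div_self hlam.ne']; norm_num
  refine ⟨?_, ?_, ?_, ?_⟩
  · -- claim 1 : finset of card ≤ 4
    set P : ℤ → ℤ → Prop :=
      fun m n => ((m:ℝ)-α₁)^2+((m:ℝ)-α₁)*((n:ℝ)-α₂)+((n:ℝ)-α₂)^2 < 1 with hP
    have toP : ∀ m n : ℤ,
        ((m:ℝ)-α₁)^2+((m:ℝ)-α₁)*((n:ℝ)-α₂)+((n:ℝ)-α₂)^2 < 1 → P m n := by
      intro m n h; rw [hP]; exact h
    have fromP : ∀ m n : ℤ, P m n →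
        ((m:ℝ)-α₁)^2+((m:ℝ)-α₁)*((n:ℝ)-α₂)+((n:ℝ)-α₂)^2 < 1 := by
      intro m n h; rw [hP] at h; exact h
    have excl4 : ∀ m n m' n' : ℤ, P m n → P m' n' →
        ((((m:ℝ)-α₁)-((m':ℝ)-α₁))^2 + (((m:ℝ)-α₁)-((m':ℝ)-α₁))*((((n:ℝ)-α₂))-(((n':ℝ)-α₂)))
          + ((((n:ℝ)-α₂))-(((n':ℝ)-α₂)))^2 < 4) := by
      intro m n m' n' h1 h2
      have h := hex_excl (fromP _ _ h1) (fromP _ _ h2)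
      linarith [h]
    set a : ℤ×ℤ := if P 1 0 then (1,0) else (-1,0) with hadef
    set b : ℤ×ℤ := if P 0 1 then (0,1) else (0,-1) with hbdef
    set d : ℤ×ℤ := if P 1 1 then (1,1) else if P (-1) (-1) then (-1,-1)
        else if P 1 (-1) then (1,-1) else (-1,1) with hddef
    refine ⟨{hexPt b₁ b₂ (0,0), hexPt b₁ b₂ a, hexPt b₁ b₂ b, hexPt b₁ b₂ d}, ?_, ?_⟩
    · intro v hv
      obtain ⟨hvc, hvlt⟩ := hv
      obtain ⟨m, n, rfl⟩ := hrepr v hvc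
      have hq0 := hQlt m n lam hlam.le hvlt
      rw [hlam1] at hq0
      have hq : P m n := toP _ _ hq0
      obtain ⟨hm1, hm2⟩ := hex_box hα₁l hα₁r hq0
      obtain ⟨hn1, hn2⟩ := hex_box hα₂l hα₂r (by linarith [hq0] :
        ((n:ℝ)-α₂)^2 + ((n:ℝ)-α₂)*((m:ℝ)-α₁) + ((m:ℝ)-α₁)^2 < 1)
      simp only [Finset.coe_insert, Set.mem_insert_iff, Finset.coe_singleton,
        Set.mem_singleton_iff]
      interval_cases m <;> interval_cases n
      -- m = -1, n = -1
      · refine Or.inr (Or.inr (Or.inr ?_))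
        have h11 : ¬ P 1 1 := fun hc => by
          have := excl4 (-1) (-1) 1 1 hq hc; norm_num at this
        have hmm : P (-1) (-1) := hq
        rw [hddef, if_neg h11, if_pos hmm]; rfl
      -- m = -1, n = 0
      · refine Or.inr (Or.inl ?_)
        have h10 : ¬ P 1 0 := fun hc => by
          have := excl4 (-1) 0 1 0 hq hc; norm_num at this
        rw [hadef, if_neg h10]; rfl
      -- m = -1, n = 1
      · refine Or.inr (Or.inr (Or.inr ?_))
        have h11 : ¬ P 1 1 := fun hc => by
          have := excl4 (-1) 1 1 1 hq hc; norm_num at this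
        have hmm : ¬ P (-1) (-1) := fun hc => by
          have := excl4 (-1) 1 (-1) (-1) hq hc; norm_num at this
        have h1m1 : ¬ P 1 (-1) := fun hc => by
          have := excl4 (-1) 1 1 (-1) hq hc; norm_num at this
        rw [hddef, if_neg h11, if_neg hmm, if_neg h1m1]; rfl
      -- m = 0, n = -1
      · refine Or.inr (Or.inr (Or.inl ?_))
        have h01 : ¬ P 0 1 := fun hc => by
          have := excl4 0 (-1) 0 1 hq hc; norm_num at this
        rw [hbdef, if_neg h01]; rfl
      -- m = 0, n = 0
      · exact Or.inl rfl
      -- m = 0, n = 1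
      · exact Or.inr (Or.inr (Or.inl (by rw [hbdef, if_pos hq]; rfl)))
      -- m = 1, n = -1
      · refine Or.inr (Or.inr (Or.inr ?_))
        have h11 : ¬ P 1 1 := fun hc => by
          have := excl4 1 (-1) 1 1 hq hc; norm_num at this
        have hmm : ¬ P (-1) (-1) := fun hc => by
          have := excl4 1 (-1) (-1) (-1) hq hc; norm_num at this
        rw [hddef, if_neg h11, if_neg hmm, if_pos hq]; rfl
      -- m = 1, n = 0
      · exact Or.inr (Or.inl (by rw [hadef, if_pos hq]; rfl))
      -- m = 1, n = 1
      · exact Or.inr (Or.inr (Or.inr (by rw [hddef, if_pos hq]; rfl)))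
    · refine le_trans (Finset.card_insert_le _ _) (Nat.succ_le_succ ?_)
      refine le_trans (Finset.card_insert_le _ _) (Nat.succ_le_succ ?_)
      refine le_trans (Finset.card_insert_le _ _) (Nat.succ_le_succ ?_)
      exact le_of_eq (Finset.card_singleton _)
  · -- claim 2
    intro v hvc hv0 hvlt
    obtain ⟨m, n, rfl⟩ := hrepr v hvc
    have he : ¬(m = 0 ∧ n = 0) := fun h => hv0 (hzero m n h)
    have hq := hex_one hα₁l hα₁r hα₂l hα₂r he
    have hd := hdist m n
    have hsq : (3*lam/16)^2 ≤ ‖((m:ℝ)•b₁+(n:ℝ)•b₂) - w‖^2 := by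
      rw [hd]; nlinarith [hq, sq_nonneg lam]
    have := le_of_pow_le_pow_left₀ two_ne_zero (norm_nonneg _) hsq
    linarith
  · -- claim 3
    intro v hvc v' hvc' hv0 hv0' hvv' hlt hlt' hle
    obtain ⟨m, n, rfl⟩ := hrepr v hvc
    obtain ⟨m', n', rfl⟩ := hrepr v' hvc'
    by_contra hcon
    push_neg at hcon
    have hq' := hQlt m' n' (lam/2) (by positivity) hcon
    have hq := hQlt m n (lam/2) (by positivity) (lt_of_le_of_lt hle hcon)
    have hc4 : ((lam/2)/lam)^2 = 1/4 := by
      rw [show lam / 2 / lam = 1 / 2 from by field_simp]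
      norm_num
    rw [hc4] at hq hq'
    have hdne : ¬(m = m' ∧ n = n') := by
      rintro ⟨rfl, rfl⟩; exact hvv' rfl
    exact hex_two hdne hq hq'
  · -- claim 4
    intro v hvc v' hvc' v'' hvc'' hv0 hv0' hv0'' h12 h13 h23 hlt hlt' hlt'' hle hle'
    obtain ⟨m1, n1, rfl⟩ := hrepr v hvc
    obtain ⟨m2, n2, rfl⟩ := hrepr v' hvc'
    obtain ⟨m3, n3, rfl⟩ := hrepr v'' hvc''
    by_contra hcon
    push_neg at hcon
    have hs3 : Real.sqrt 3 ^ 2 = 3 := Real.sq_sqrt (by norm_num)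
    have hcge : (0:ℝ) ≤ Real.sqrt 3 / 2 * lam := by positivity
    have hq3 := hQlt m3 n3 _ hcge hcon
    have hq2 := hQlt m2 n2 _ hcge (lt_of_le_of_lt hle' hcon)
    have hq1 := hQlt m1 n1 _ hcge (lt_of_le_of_lt hle (lt_of_le_of_lt hle' hcon))
    have hc34 : ((Real.sqrt 3 / 2 * lam)/lam)^2 = 3/4 := by
      rw [mul_div_assoc, div_self hlam.ne', mul_one, div_pow, hs3]
      norm_num
    rw [hc34] at hq1 hq2 hq3
    exact hex_three hα₁l hα₁r hα₂l hα₂r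
      (fun h => hv0 (hzero _ _ h)) (fun h => hv0' (hzero _ _ h)) (fun h => hv0'' (hzero _ _ h))
      (by rintro ⟨rfl, rfl⟩; exact h12 rfl) (by rintro ⟨rfl, rfl⟩; exact h13 rfl)
      (by rintro ⟨rfl, rfl⟩; exact h23 rfl) hq1 hq2 hq3
end

section
/- Let L be an additive subgroup of Euclidean space ℝ³ and let a > 0 be such that every nonzero x ∈ L satisfies ‖x‖ ≥ a. Then for every M ≥ a² and every α > 0, one has ∑_{x ∈ L, ‖x‖² ≥ M} e^{−α‖x‖²} ≤ α ∫_{M}^{∞} ( (2√t/a + 1)³ − (2√M/a − 1)³ ) e^{−αt} dt. -/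
open MeasureTheory

section LatticeTailAux
open Metric Set Real
open scoped ENNReal NNReal

lemma packing_card (L : AddSubgroup (EuclideanSpace ℝ (Fin 3))) {a : ℝ} (ha : 0 < a)
    (hL : ∀ x ∈ L, x ≠ 0 → a ≤ ‖x‖) {r R : ℝ} (har : a ≤ r) (hrR : r ≤ R)
    (s : Finset (EuclideanSpace ℝ (Fin 3)))
    (hs : ∀ x ∈ s, x ∈ L ∧ r ≤ ‖x‖ ∧ ‖x‖ ≤ R) :
    (s.card : ℝ) ≤ (2 * R / a + 1) ^ 3 - (2 * r / a - 1) ^ 3 := by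
  have ha2 : (0:ℝ) < a / 2 := by linarith
  have hdist : ∀ x ∈ s, ∀ y ∈ s, x ≠ y → a ≤ dist x y := by
    intro x hx y hy hxy
    rw [dist_eq_norm]
    exact hL _ (L.sub_mem (hs x hx).1 (hs y hy).1) (sub_ne_zero_of_ne hxy)
  -- disjointness of the small balls
  have hdisj : (↑s : Set (EuclideanSpace ℝ (Fin 3))).PairwiseDisjoint
      (fun x => ball x (a / 2)) := by
    intro x hx y hy hxy
    exact ball_disjoint_ball (by linarith [hdist x hx y hy hxy])
  set U := ⋃ x ∈ s, ball x (a / 2) with hU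
  have hUm : volume U = ∑ x ∈ s, volume (ball x (a / 2)) :=
    measure_biUnion_finset hdisj (fun x _ => measurableSet_ball)
  -- U is disjoint from the small central ball
  have hUB : Disjoint U (ball (0 : EuclideanSpace ℝ (Fin 3)) (r - a / 2)) := by
    rw [Set.disjoint_left]
    rintro y hyU hy0
    simp only [hU, Set.mem_iUnion, mem_ball] at hyU
    obtain ⟨x, hx, hdxy⟩ := hyU
    rw [mem_ball, dist_zero_right] at hy0
    have h1 : r ≤ ‖x‖ := (hs x hx).2.1
    have h2 : ‖x‖ - ‖y‖ ≤ ‖y - x‖ := by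
      rw [norm_sub_rev]; exact norm_sub_norm_le x y
    rw [dist_eq_norm] at hdxy
    linarith
  -- containment in the big ball
  have hsub : U ∪ ball (0 : EuclideanSpace ℝ (Fin 3)) (r - a / 2) ⊆
      closedBall (0 : EuclideanSpace ℝ (Fin 3)) (R + a / 2) := by
    rintro y (hyU | hy0)
    · simp only [hU, Set.mem_iUnion, mem_ball] at hyU
      obtain ⟨x, hx, hdxy⟩ := hyU
      rw [mem_closedBall, dist_zero_right]
      have h2 : ‖y‖ - ‖x‖ ≤ ‖y - x‖ := norm_sub_norm_le y x
      rw [dist_eq_norm] at hdxy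
      linarith [(hs x hx).2.2]
    · rw [mem_ball, dist_zero_right] at hy0
      rw [mem_closedBall, dist_zero_right]
      linarith
  have hmeas : volume U + volume (ball (0 : EuclideanSpace ℝ (Fin 3)) (r - a / 2)) ≤
      volume (closedBall (0 : EuclideanSpace ℝ (Fin 3)) (R + a / 2)) := by
    rw [← measure_union hUB measurableSet_ball]
    exact measure_mono hsub
  have hn : Module.finrank ℝ (EuclideanSpace ℝ (Fin 3)) = 3 := finrank_euclideanSpace_fin
  set B := volume (ball (0 : EuclideanSpace ℝ (Fin 3)) 1) with hB
  have hballs : ∀ x : EuclideanSpace ℝ (Fin 3),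
      volume (ball x (a / 2)) = ENNReal.ofReal ((a / 2) ^ 3) * B := fun x => by
    rw [hB, Measure.addHaar_ball volume x ha2.le, hn]
  have hball0 : volume (ball (0 : EuclideanSpace ℝ (Fin 3)) (r - a / 2)) =
      ENNReal.ofReal ((r - a / 2) ^ 3) * B := by
    rw [hB, Measure.addHaar_ball volume _ (by linarith : (0:ℝ) ≤ r - a / 2), hn]
  have hbig : volume (closedBall (0 : EuclideanSpace ℝ (Fin 3)) (R + a / 2)) =
      ENNReal.ofReal ((R + a / 2) ^ 3) * B := by
    rw [hB, Measure.addHaar_closedBall volume _ (by linarith : (0:ℝ) ≤ R + a / 2), hn]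
  rw [hUm] at hmeas
  simp only [hballs, hball0, hbig, Finset.sum_const, nsmul_eq_mul] at hmeas
  have hmeas2 : ((s.card : ℝ≥0∞) * ENNReal.ofReal ((a / 2) ^ 3) +
      ENNReal.ofReal ((r - a / 2) ^ 3)) * B ≤ ENNReal.ofReal ((R + a / 2) ^ 3) * B := by
    rw [add_mul, mul_assoc]; exact hmeas
  rw [ENNReal.mul_le_mul_iff_left (by
      exact (measure_ball_pos volume _ one_pos).ne') (measure_ball_lt_top.ne)] at hmeas2
  rw [← ENNReal.ofReal_natCast s.card, ← ENNReal.ofReal_mul (Nat.cast_nonneg _),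
    ← ENNReal.ofReal_add (mul_nonneg (Nat.cast_nonneg _) (by positivity)) (pow_nonneg (by linarith) 3),
    ENNReal.ofReal_le_ofReal_iff (pow_nonneg (by linarith) 3)] at hmeas2
  have key : (2 * R / a + 1) ^ 3 - (2 * r / a - 1) ^ 3 =
      ((R + a / 2) ^ 3 - (r - a / 2) ^ 3) / ((a / 2) ^ 3) := by
    field_simp
  rw [key, le_div_iff₀ (by positivity)]
  linarith

lemma finite_annulus (L : AddSubgroup (EuclideanSpace ℝ (Fin 3))) {a : ℝ} (ha : 0 < a)
    (hL : ∀ x ∈ L, x ≠ 0 → a ≤ ‖x‖) {r R : ℝ} (har : a ≤ r) (hrR : r ≤ R) :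
    {x : EuclideanSpace ℝ (Fin 3) | x ∈ L ∧ r ≤ ‖x‖ ∧ ‖x‖ ≤ R}.Finite := by
  by_contra h
  rw [← Set.not_infinite, not_not] at h
  obtain ⟨t, hts, htcard⟩ :=
    h.exists_subset_card_eq (⌈(2 * R / a + 1) ^ 3 - (2 * r / a - 1) ^ 3⌉₊ + 1)
  have hb := packing_card L ha hL har hrR t (fun x hx => hts hx)
  have h2 : ((2 * R / a + 1) ^ 3 - (2 * r / a - 1) ^ 3 : ℝ) ≤
      (⌈(2 * R / a + 1) ^ 3 - (2 * r / a - 1) ^ 3⌉₊ : ℝ) := Nat.le_ceil _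
  rw [htcard] at hb
  push_cast at hb
  linarith

lemma finite_ball (L : AddSubgroup (EuclideanSpace ℝ (Fin 3))) {a : ℝ} (ha : 0 < a)
    (hL : ∀ x ∈ L, x ≠ 0 → a ≤ ‖x‖) (R : ℝ) :
    {x : EuclideanSpace ℝ (Fin 3) | x ∈ L ∧ ‖x‖ ≤ R}.Finite := by
  have hsub : {x : EuclideanSpace ℝ (Fin 3) | x ∈ L ∧ ‖x‖ ≤ R} ⊆
      insert 0 {x : EuclideanSpace ℝ (Fin 3) | x ∈ L ∧ a ≤ ‖x‖ ∧ ‖x‖ ≤ max R a} := by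
    rintro x ⟨hxL, hxR⟩
    by_cases hx0 : x = 0
    · exact Set.mem_insert_iff.2 (Or.inl hx0)
    · exact Set.mem_insert_iff.2 (Or.inr ⟨hxL, hL x hxL hx0,
        le_trans hxR (le_max_left _ _)⟩)
  exact Set.Finite.subset ((finite_annulus L ha hL le_rfl (le_max_right R a)).insert 0) hsub

lemma countable_lattice (L : AddSubgroup (EuclideanSpace ℝ (Fin 3))) {a : ℝ} (ha : 0 < a)
    (hL : ∀ x ∈ L, x ≠ 0 → a ≤ ‖x‖) : (L : Set (EuclideanSpace ℝ (Fin 3))).Countable := by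
  have hsub : (L : Set (EuclideanSpace ℝ (Fin 3))) ⊆
      ⋃ n : ℕ, {x : EuclideanSpace ℝ (Fin 3) | x ∈ L ∧ ‖x‖ ≤ n} := by
    intro x hx
    obtain ⟨n, hn⟩ := exists_nat_ge ‖x‖
    exact Set.mem_iUnion.2 ⟨n, hx, hn⟩
  exact Set.Countable.mono hsub
    (Set.countable_iUnion fun n => (finite_ball L ha hL n).countable)

lemma integral_exp_tail {α : ℝ} (hα : 0 < α) (s : ℝ) :
    ∫ t in Ioi s, α * Real.exp (-α * t) = Real.exp (-α * s) := by
  have hderiv : ∀ x ∈ Ici s, HasDerivAt (fun t => -Real.exp (-α * t))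
      (α * Real.exp (-α * x)) x := by
    intro x _
    have h1 : HasDerivAt (fun t : ℝ => -α * t) (-α) x := by
      simpa using (hasDerivAt_id x).const_mul (-α)
    have h2 := (h1.exp).neg
    exact h2.congr_deriv (by ring)
  have hint : IntegrableOn (fun t => α * Real.exp (-α * t)) (Ioi s) :=
    (exp_neg_integrableOn_Ioi s hα).const_mul α
  have htend : Filter.Tendsto (fun t => -Real.exp (-α * t)) Filter.atTop (nhds 0) := by
    rw [show (0:ℝ) = -0 by ring]
    apply Filter.Tendsto.neg
    have : Filter.Tendsto (fun t : ℝ => α * t) Filter.atTop Filter.atTop :=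
      Filter.Tendsto.const_mul_atTop hα Filter.tendsto_id
    have h3 := Real.tendsto_exp_neg_atTop_nhds_zero.comp this
    simp only [Function.comp_def] at h3
    simpa [neg_mul] using h3
  have := integral_Ioi_of_hasDerivAt_of_tendsto' hderiv hint htend
  rw [this]
  ring

lemma lintegral_exp_tail {α : ℝ} (hα : 0 < α) {s M : ℝ} (hs : M ≤ s) :
    ∫⁻ t in Ioi M,
      Set.indicator (Ici s) (fun t => ENNReal.ofReal (α * Real.exp (-α * t))) t =
    ENNReal.ofReal (Real.exp (-α * s)) := by
  rw [lintegral_indicator measurableSet_Ici, Measure.restrict_restrict measurableSet_Ici]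
  have hae : (Ici s ∩ Ioi M : Set ℝ) =ᵐ[volume] Ioi s := by
    rw [MeasureTheory.ae_eq_set]
    constructor
    · apply measure_mono_null (_ : (Ici s ∩ Ioi M) \ Ioi s ⊆ {s})
      · exact Real.volume_singleton
      · rintro t ⟨⟨h1, _⟩, h2⟩
        simp only [Set.mem_Ioi, not_lt] at h2
        exact le_antisymm h2 h1
    · apply measure_mono_null (_ : Ioi s \ (Ici s ∩ Ioi M) ⊆ ∅)
      · exact measure_empty
      · rintro t ⟨h1, h2⟩
        exact h2 ⟨Set.mem_Ici.2 (le_of_lt h1), lt_of_le_of_lt hs h1⟩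
  rw [setLIntegral_congr hae,
    ← ofReal_integral_eq_lintegral_ofReal ((exp_neg_integrableOn_Ioi s hα).const_mul α)
      (Filter.Eventually.of_forall fun x => by positivity),
    integral_exp_tail hα]

lemma tsum_indicator_le (L : AddSubgroup (EuclideanSpace ℝ (Fin 3))) {a : ℝ} (ha : 0 < a)
    (hL : ∀ x ∈ L, x ≠ 0 → a ≤ ‖x‖) {M : ℝ} (hM : a ^ 2 ≤ M) {t : ℝ} (ht : M < t)
    (c : ℝ≥0∞) :
    ∑' x : {x : EuclideanSpace ℝ (Fin 3) // x ∈ L ∧ M ≤ ‖x‖ ^ 2},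
      (Ici (‖(x : EuclideanSpace ℝ (Fin 3))‖ ^ 2)).indicator (fun _ => c) t ≤
    ENNReal.ofReal ((2 * Real.sqrt t / a + 1) ^ 3 - (2 * Real.sqrt M / a - 1) ^ 3) * c := by
  set S := {x : EuclideanSpace ℝ (Fin 3) // x ∈ L ∧ M ≤ ‖x‖ ^ 2}
  have haM : a ≤ Real.sqrt M := by
    rw [show a = Real.sqrt (a ^ 2) from (Real.sqrt_sq ha.le).symm]
    exact Real.sqrt_le_sqrt hM
  have hMt : Real.sqrt M ≤ Real.sqrt t := Real.sqrt_le_sqrt ht.le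
  -- finiteness of the relevant set
  have hW : {y : EuclideanSpace ℝ (Fin 3) | y ∈ L ∧ Real.sqrt M ≤ ‖y‖ ∧
      ‖y‖ ≤ Real.sqrt t}.Finite := finite_annulus L ha hL haM hMt
  have hVfin : {x : S | ‖(x : EuclideanSpace ℝ (Fin 3))‖ ^ 2 ≤ t}.Finite := by
    apply Set.Finite.subset (Set.Finite.preimage
      (Set.injOn_of_injective Subtype.coe_injective) hW)
    rintro x hx
    simp only [Set.mem_preimage, Set.mem_setOf_eq]
    refine ⟨x.2.1, ?_, ?_⟩
    · rw [show ‖(x : EuclideanSpace ℝ (Fin 3))‖ =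
        Real.sqrt (‖(x : EuclideanSpace ℝ (Fin 3))‖ ^ 2) from
        (Real.sqrt_sq (norm_nonneg _)).symm]
      exact Real.sqrt_le_sqrt x.2.2
    · rw [show ‖(x : EuclideanSpace ℝ (Fin 3))‖ =
        Real.sqrt (‖(x : EuclideanSpace ℝ (Fin 3))‖ ^ 2) from
        (Real.sqrt_sq (norm_nonneg _)).symm]
      exact Real.sqrt_le_sqrt hx
  -- the tsum is a finite sum
  have hsum : ∑' x : S, (Ici (‖(x : EuclideanSpace ℝ (Fin 3))‖ ^ 2)).indicator
      (fun _ => c) t = ∑ x ∈ hVfin.toFinset,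
      (Ici (‖(x : EuclideanSpace ℝ (Fin 3))‖ ^ 2)).indicator (fun _ => c) t := by
    apply tsum_eq_sum
    intro x hx
    rw [Set.Finite.mem_toFinset, Set.mem_setOf_eq, not_le] at hx
    have hnot : t ∉ Ici (‖(x : EuclideanSpace ℝ (Fin 3))‖ ^ 2) := by
      simp only [Set.mem_Ici, not_le]; exact hx
    exact Set.indicator_of_notMem hnot _
  classical
  rw [hsum]
  -- bound the finite sum by card * c
  have hcard_le : (hVfin.toFinset.card : ℝ) ≤
      (2 * Real.sqrt t / a + 1) ^ 3 - (2 * Real.sqrt M / a - 1) ^ 3 := by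
    have hinj := Finset.card_image_of_injective hVfin.toFinset
      (Subtype.coe_injective (p := fun x => x ∈ L ∧ M ≤ ‖x‖ ^ 2))
    rw [← hinj]
    apply packing_card L ha hL haM hMt
    intro y hy
    simp only [Finset.mem_image, Set.Finite.mem_toFinset, Set.mem_setOf_eq] at hy
    obtain ⟨x, hx, rfl⟩ := hy
    refine ⟨x.2.1, ?_, ?_⟩
    · rw [show ‖(x : EuclideanSpace ℝ (Fin 3))‖ =
        Real.sqrt (‖(x : EuclideanSpace ℝ (Fin 3))‖ ^ 2) from
        (Real.sqrt_sq (norm_nonneg _)).symm]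
      exact Real.sqrt_le_sqrt x.2.2
    · rw [show ‖(x : EuclideanSpace ℝ (Fin 3))‖ =
        Real.sqrt (‖(x : EuclideanSpace ℝ (Fin 3))‖ ^ 2) from
        (Real.sqrt_sq (norm_nonneg _)).symm]
      exact Real.sqrt_le_sqrt hx
  calc ∑ x ∈ hVfin.toFinset,
      (Ici (‖(x : EuclideanSpace ℝ (Fin 3))‖ ^ 2)).indicator (fun _ => c) t
      ≤ ∑ _x ∈ hVfin.toFinset, c :=
        Finset.sum_le_sum (fun x _ => Set.indicator_apply_le (fun _ => le_rfl))
    _ = (hVfin.toFinset.card : ℝ≥0∞) * c := by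
        rw [Finset.sum_const, nsmul_eq_mul]
    _ ≤ ENNReal.ofReal ((2 * Real.sqrt t / a + 1) ^ 3 -
          (2 * Real.sqrt M / a - 1) ^ 3) * c := by
        apply mul_le_mul_left
        rw [← ENNReal.ofReal_natCast]
        exact ENNReal.ofReal_le_ofReal hcard_le

lemma c_nonneg {a M : ℝ} (ha : 0 < a) (hM : a ^ 2 ≤ M) {t : ℝ} (ht : M ≤ t) :
    0 ≤ (2 * Real.sqrt t / a + 1) ^ 3 - (2 * Real.sqrt M / a - 1) ^ 3 := by
  have haM : a ≤ Real.sqrt M := by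
    rw [show a = Real.sqrt (a ^ 2) from (Real.sqrt_sq ha.le).symm]
    exact Real.sqrt_le_sqrt hM
  have hMt : Real.sqrt M ≤ Real.sqrt t := Real.sqrt_le_sqrt ht
  have h1 : (1 : ℝ) ≤ Real.sqrt M / a := (one_le_div ha).2 haM
  have h2 : (0 : ℝ) ≤ 2 * Real.sqrt M / a - 1 := by
    rw [mul_div_assoc]; linarith
  have h3 : 2 * Real.sqrt M / a - 1 ≤ 2 * Real.sqrt t / a + 1 := by
    have : Real.sqrt M / a ≤ Real.sqrt t / a := by gcongr
    rw [mul_div_assoc, mul_div_assoc]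
    linarith
  have := pow_le_pow_left₀ h2 h3 3
  linarith

lemma integrable_rhs {a M α : ℝ} (ha : 0 < a) (hM : a ^ 2 ≤ M) (hα : 0 < α) :
    IntegrableOn (fun t => ((2 * Real.sqrt t / a + 1) ^ 3 -
      (2 * Real.sqrt M / a - 1) ^ 3) * Real.exp (-α * t)) (Ioi M) := by
  apply integrable_of_isBigO_exp_neg (half_pos hα)
  · apply Continuous.continuousOn
    have hsq : Continuous fun t : ℝ => 2 * Real.sqrt t / a + 1 := by
      have := Real.continuous_sqrt
      fun_prop
    fun_prop
  · -- big-O estimate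
    have htend : Filter.Tendsto (fun t : ℝ => t ^ 3 * Real.exp (-(α / 2) * t))
        Filter.atTop (nhds 0) := by
      have h1 : Filter.Tendsto (fun t : ℝ => (α / 2) * t) Filter.atTop Filter.atTop :=
        Filter.Tendsto.const_mul_atTop (half_pos hα) Filter.tendsto_id
      have h2 := (tendsto_pow_mul_exp_neg_atTop_nhds_zero 3).comp h1
      simp only [Function.comp_def] at h2
      have h3 := h2.const_mul ((2 / α) ^ 3)
      rw [mul_zero] at h3
      apply h3.congr
      intro t
      field_simp
    have hev : ∀ᶠ t in Filter.atTop, t ^ 3 * Real.exp (-(α / 2) * t) ≤ 1 :=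
      htend.eventually_le_const one_pos
    rw [Asymptotics.isBigO_iff]
    refine ⟨(2 / a + 1) ^ 3, ?_⟩
    filter_upwards [hev, Filter.eventually_ge_atTop (max M 1)] with t h1 h2
    have htM : M ≤ t := le_trans (le_max_left _ _) h2
    have ht1 : (1 : ℝ) ≤ t := le_trans (le_max_right _ _) h2
    have hsqt : Real.sqrt t ≤ t := by
      nlinarith [Real.sq_sqrt (show (0:ℝ) ≤ t by linarith), Real.sqrt_nonneg t,
        sq_nonneg (Real.sqrt t - 1)]
    have hcnn := c_nonneg ha hM htM
    have hct : (2 * Real.sqrt t / a + 1) ^ 3 - (2 * Real.sqrt M / a - 1) ^ 3 ≤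
        (2 / a + 1) ^ 3 * t ^ 3 := by
      have hbase : 2 * Real.sqrt t / a + 1 ≤ (2 / a + 1) * t := by
        have hd : 2 * Real.sqrt t / a ≤ 2 * t / a := by
          gcongr
        have : (2 / a + 1) * t = 2 * t / a + t := by field_simp
        rw [this]
        linarith
      have hb0 : (0 : ℝ) ≤ 2 * Real.sqrt t / a + 1 := by
        have : 0 ≤ Real.sqrt t := Real.sqrt_nonneg t
        positivity
      have := pow_le_pow_left₀ hb0 hbase 3
      rw [mul_pow] at this
      have hK : (0 : ℝ) ≤ (2 * Real.sqrt M / a - 1) ^ 3 := by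
        have haM : a ≤ Real.sqrt M := by
          rw [show a = Real.sqrt (a ^ 2) from (Real.sqrt_sq ha.le).symm]
          exact Real.sqrt_le_sqrt hM
        have h1' : (1 : ℝ) ≤ Real.sqrt M / a := (one_le_div ha).2 haM
        apply pow_nonneg
        rw [mul_div_assoc]
        linarith
      linarith
    have hexp : Real.exp (-α * t) =
        Real.exp (-(α / 2) * t) * Real.exp (-(α / 2) * t) := by
      rw [← Real.exp_add]; ring_nf
    rw [Real.norm_eq_abs, Real.norm_eq_abs,
      abs_of_nonneg (mul_nonneg hcnn (Real.exp_pos _).le),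
      abs_of_nonneg (Real.exp_pos _).le]
    calc ((2 * Real.sqrt t / a + 1) ^ 3 - (2 * Real.sqrt M / a - 1) ^ 3) *
          Real.exp (-α * t)
        ≤ (2 / a + 1) ^ 3 * t ^ 3 * Real.exp (-α * t) := by
          apply mul_le_mul_of_nonneg_right hct (Real.exp_pos _).le
      _ = (2 / a + 1) ^ 3 * (t ^ 3 * Real.exp (-(α / 2) * t)) *
            Real.exp (-(α / 2) * t) := by rw [hexp]; ring
      _ ≤ (2 / a + 1) ^ 3 * 1 * Real.exp (-(α / 2) * t) := by
          apply mul_le_mul_of_nonneg_right _ (Real.exp_pos _).le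
          apply mul_le_mul_of_nonneg_left h1 (by positivity)
      _ = (2 / a + 1) ^ 3 * Real.exp (-(α / 2) * t) := by ring

end LatticeTailAux

open Metric Set Real in
open scoped ENNReal NNReal in
/-- An upper bound for the tail `∑_{x ∈ L, ‖x‖² ≥ M} e^{−α‖x‖²}` of a theta-like series
over a lattice `L ⊆ ℝ³` whose nonzero vectors have length `≥ a`. -/
theorem lattice_sum_tail_bound
    (L : AddSubgroup (EuclideanSpace ℝ (Fin 3)))
    (a : ℝ) (ha : 0 < a)
    (hL : ∀ x ∈ L, x ≠ 0 → a ≤ ‖x‖)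
    (M : ℝ) (hM : a ^ 2 ≤ M) (α : ℝ) (hα : 0 < α) :
    ∑' x : {x : EuclideanSpace ℝ (Fin 3) // x ∈ L ∧ M ≤ ‖x‖ ^ 2},
        Real.exp (-α * ‖(x : EuclideanSpace ℝ (Fin 3))‖ ^ 2) ≤
      α * ∫ t in Set.Ioi M,
        ((2 * Real.sqrt t / a + 1) ^ 3 - (2 * Real.sqrt M / a - 1) ^ 3) *
          Real.exp (-α * t) := by
  classical
  have hRHS : 0 ≤ α * ∫ t in Set.Ioi M,
      ((2 * Real.sqrt t / a + 1) ^ 3 - (2 * Real.sqrt M / a - 1) ^ 3) *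
        Real.exp (-α * t) :=
    mul_nonneg hα.le (setIntegral_nonneg measurableSet_Ioi fun t ht =>
      mul_nonneg (c_nonneg ha hM (le_of_lt ht)) (Real.exp_pos _).le)
  by_cases hsum : Summable (fun x : {x : EuclideanSpace ℝ (Fin 3) // x ∈ L ∧ M ≤ ‖x‖ ^ 2} =>
      Real.exp (-α * ‖(x : EuclideanSpace ℝ (Fin 3))‖ ^ 2))
  swap
  · rw [tsum_eq_zero_of_not_summable hsum]; exact hRHS
  haveI : Countable {x : EuclideanSpace ℝ (Fin 3) // x ∈ L ∧ M ≤ ‖x‖ ^ 2} := by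
    have h1 : ({x : EuclideanSpace ℝ (Fin 3) | x ∈ L ∧ M ≤ ‖x‖ ^ 2}).Countable :=
      (countable_lattice L ha hL).mono (fun x hx => hx.1)
    exact h1.to_subtype
  rw [← ENNReal.ofReal_le_ofReal_iff hRHS,
    ENNReal.ofReal_tsum_of_nonneg (fun _ => (Real.exp_pos _).le) hsum]
  set g : ℝ → ℝ≥0∞ := fun u => ENNReal.ofReal (α * Real.exp (-α * u)) with hg
  have hgmeas : Measurable g := by
    apply Measurable.ennreal_ofReal
    fun_prop
  calc ∑' x : {x : EuclideanSpace ℝ (Fin 3) // x ∈ L ∧ M ≤ ‖x‖ ^ 2},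
      ENNReal.ofReal (Real.exp (-α * ‖(x : EuclideanSpace ℝ (Fin 3))‖ ^ 2))
      = ∑' x : {x : EuclideanSpace ℝ (Fin 3) // x ∈ L ∧ M ≤ ‖x‖ ^ 2},
        ∫⁻ u in Set.Ioi M, (Set.Ici (‖(x : EuclideanSpace ℝ (Fin 3))‖ ^ 2)).indicator g u := by
        apply tsum_congr; intro x
        rw [hg, lintegral_exp_tail hα x.2.2]
    _ = ∫⁻ u in Set.Ioi M, ∑' x : {x : EuclideanSpace ℝ (Fin 3) // x ∈ L ∧ M ≤ ‖x‖ ^ 2},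
        (Set.Ici (‖(x : EuclideanSpace ℝ (Fin 3))‖ ^ 2)).indicator g u :=
      (lintegral_tsum fun x => (hgmeas.indicator measurableSet_Ici).aemeasurable).symm
    _ ≤ ∫⁻ u in Set.Ioi M,
        ENNReal.ofReal ((2 * Real.sqrt u / a + 1) ^ 3 - (2 * Real.sqrt M / a - 1) ^ 3) *
          g u := by
      apply setLIntegral_mono' measurableSet_Ioi
      intro u hu
      have h := tsum_indicator_le L ha hL hM (Set.mem_Ioi.mp hu) (g u)
      simp only [Set.indicator_apply] at h ⊢
      exact h
    _ = ∫⁻ u in Set.Ioi M, ENNReal.ofReal (α *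
        (((2 * Real.sqrt u / a + 1) ^ 3 - (2 * Real.sqrt M / a - 1) ^ 3) *
          Real.exp (-α * u))) := by
      apply setLIntegral_congr_fun measurableSet_Ioi
      intro u hu
      rw [hg]
      beta_reduce
      rw [← ENNReal.ofReal_mul (c_nonneg ha hM (le_of_lt hu))]
      congr 1
      ring
    _ = ENNReal.ofReal (∫ u in Set.Ioi M, α *
        (((2 * Real.sqrt u / a + 1) ^ 3 - (2 * Real.sqrt M / a - 1) ^ 3) *
          Real.exp (-α * u))) := by
      rw [← ofReal_integral_eq_lintegral_ofReal ((integrable_rhs ha hM hα).const_mul α)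
        ((ae_restrict_iff' measurableSet_Ioi).2 (ae_of_all _ fun u hu =>
          mul_nonneg hα.le (mul_nonneg (c_nonneg ha hM (le_of_lt hu))
            (Real.exp_pos _).le)))]
    _ = ENNReal.ofReal (α * ∫ u in Set.Ioi M,
        ((2 * Real.sqrt u / a + 1) ^ 3 - (2 * Real.sqrt M / a - 1) ^ 3) *
          Real.exp (-α * u)) := by
      rw [MeasureTheory.integral_const_mul]
end

section
/- Let L be an additive subgroup of Euclidean space ℝ³ such that every nonzero x ∈ L satisfies ‖x‖² ≥ 3. Then: (i) ∑_{x ∈ L, ‖x‖² ≥ 3·2^{2/3}} e^{−π‖x‖²} < 137.648·10⁻⁶; (ii) ∑_{x ∈ L, ‖x‖² ≥ 10} e^{−(π−1/2)‖x‖²} < 0.001·10⁻⁶; (iii) ∑_{x ∈ L, ‖x‖² ≥ 10} e^{−1.568075‖x‖²} < 23.399·10⁻⁶. -/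
open MeasureTheory Metric Set ENNReal
noncomputable section
abbrev E3 := EuclideanSpace ℝ (Fin 3)

lemma sqrt_ub {x u : ℝ} (hu : 0 ≤ u) (h : x ≤ u ^ 2) : Real.sqrt x ≤ u := by
  rw [← Real.sqrt_sq hu]; exact Real.sqrt_le_sqrt h
lemma sqrt_lb {x l : ℝ} (hl : 0 ≤ l) (h : l ^ 2 ≤ x) : l ≤ Real.sqrt x := by
  rw [← Real.sqrt_sq hl]; exact Real.sqrt_le_sqrt h
lemma expPoly {t : ℝ} (ht : 0 ≤ t) :
    1 + t + t ^ 2 / 2 + t ^ 3 / 6 + t ^ 4 / 24 ≤ Real.exp t := by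
  have h := Real.sum_le_exp_of_nonneg ht 5
  simp [Finset.sum_range_succ, Nat.factorial] at h
  linarith
lemma exp_lb (n : ℕ) {t : ℝ} (ht : 0 ≤ t) :
    (2.7182818283 : ℝ) ^ n * (1 + t + t ^ 2 / 2 + t ^ 3 / 6 + t ^ 4 / 24)
      ≤ Real.exp ((n : ℝ) + t) := by
  rw [Real.exp_add]
  apply mul_le_mul _ (expPoly ht) (by positivity) (Real.exp_pos _).le
  calc (2.7182818283 : ℝ) ^ n ≤ Real.exp 1 ^ n :=
        pow_le_pow_left₀ (by norm_num) Real.exp_one_gt_d9.le n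
    _ = Real.exp n := by rw [← Real.exp_nat_mul, mul_one]
lemma exp_neg_ub {y E : ℝ} (hE : 0 < E) (h : E ≤ Real.exp y) : Real.exp (-y) ≤ E⁻¹ := by
  rw [Real.exp_neg]
  exact inv_anti₀ hE h
lemma exp_ub_inv_one_sub {t : ℝ} (h0 : 0 ≤ t) (h1 : t < 1) : Real.exp t ≤ (1 - t)⁻¹ := by
  have h2 : 1 - t ≤ (Real.exp t)⁻¹ := by
    rw [← Real.exp_neg]
    have := Real.add_one_le_exp (-t)
    linarith
  have h3 := inv_anti₀ (by linarith) h2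
  rwa [inv_inv] at h3
lemma one_sub_exp_neg_le (y : ℝ) : 1 - Real.exp (-y) ≤ y := by
  have := Real.add_one_le_exp (-y); linarith

lemma hN_of {a δ N₀ ρ : ℝ} (ha : 0 < a) (hδ : 0 < δ)
    (hρ : Real.exp (3 * δ / (2 * (a + δ))) ≤ ρ)
    (hN₀ : (2 * Real.sqrt (a + δ) / Real.sqrt 3 + 1) ^ 3 ≤ N₀) :
    ∀ j : ℕ, (2 * Real.sqrt (a + ((j : ℝ) + 1) * δ) / Real.sqrt 3 + 1) ^ 3 ≤ N₀ * ρ ^ j := by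
  intro j
  have hs₀ : (0:ℝ) < a + δ := by linarith
  set m : ℝ := Real.exp (δ / (2 * (a + δ))) with hm
  have hm1 : 1 ≤ m := Real.one_le_exp (by positivity)
  have hjnn : (0:ℝ) ≤ (j : ℝ) := j.cast_nonneg
  have hm3 : m ^ 3 ≤ ρ := by
    rw [hm, ← Real.exp_nat_mul]
    have h : ((3:ℕ):ℝ) * (δ / (2 * (a + δ))) = 3 * δ / (2 * (a + δ)) := by push_cast; ring
    rw [h]
    exact hρ
  have hmj1 : 1 ≤ m ^ j := one_le_pow₀ hm1
  have hsqrt : Real.sqrt (a + ((j : ℝ) + 1) * δ) ≤ Real.sqrt (a + δ) * m ^ j := by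
    apply sqrt_ub (by positivity)
    have hexp : (j : ℝ) * (δ / (a + δ)) + 1 ≤ Real.exp ((j : ℝ) * (δ / (a + δ))) :=
      Real.add_one_le_exp _
    have hmsq : (m ^ j) ^ 2 = Real.exp ((j : ℝ) * (δ / (a + δ))) := by
      rw [hm, ← pow_mul, ← Real.exp_nat_mul]
      congr 1
      push_cast
      field_simp
    have h1 : (Real.sqrt (a + δ)) ^ 2 = a + δ := Real.sq_sqrt hs₀.le
    have h2 : (Real.sqrt (a + δ) * m ^ j) ^ 2 = (a + δ) * (m ^ j) ^ 2 := by
      rw [mul_pow, h1]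
    rw [h2, hmsq]
    have h3 : (a + δ) * ((j : ℝ) * (δ / (a + δ)) + 1) = (a + δ) + (j:ℝ) * δ := by
      field_simp
      ring
    nlinarith [mul_le_mul_of_nonneg_left hexp hs₀.le]
  have hs3 : (0:ℝ) < Real.sqrt 3 := by positivity
  have hSnn : (0:ℝ) ≤ 2 * Real.sqrt (a + δ) / Real.sqrt 3 := by positivity
  have hstep : 2 * Real.sqrt (a + ((j : ℝ) + 1) * δ) / Real.sqrt 3 + 1
      ≤ (2 * Real.sqrt (a + δ) / Real.sqrt 3 + 1) * m ^ j := by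
    have h1 : 2 * Real.sqrt (a + ((j : ℝ) + 1) * δ) / Real.sqrt 3
        ≤ 2 * (Real.sqrt (a + δ) * m ^ j) / Real.sqrt 3 := by
      gcongr
    have h2 : 2 * (Real.sqrt (a + δ) * m ^ j) / Real.sqrt 3
        = (2 * Real.sqrt (a + δ) / Real.sqrt 3) * m ^ j := by ring
    rw [h2] at h1
    nlinarith [mul_le_mul_of_nonneg_left hmj1 hSnn]
  calc (2 * Real.sqrt (a + ((j : ℝ) + 1) * δ) / Real.sqrt 3 + 1) ^ 3
      ≤ ((2 * Real.sqrt (a + δ) / Real.sqrt 3 + 1) * m ^ j) ^ 3 :=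
        pow_le_pow_left₀ (by positivity) hstep 3
    _ = (2 * Real.sqrt (a + δ) / Real.sqrt 3 + 1) ^ 3 * (m ^ 3) ^ j := by
        rw [mul_pow, pow_right_comm]
    _ ≤ N₀ * ρ ^ j := by
        apply mul_le_mul hN₀ (pow_le_pow_left₀ (by positivity) hm3 j) (by positivity)
        exact le_trans (by positivity) hN₀


lemma pack_finset (L : AddSubgroup E3) (hL : ∀ x ∈ L, x ≠ 0 → (3 : ℝ) ≤ ‖x‖ ^ 2)
    (R : ℝ) (hR : 0 ≤ R) (F : Finset E3) (hF : ∀ x ∈ F, x ∈ L ∧ ‖x‖ ≤ R) :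
    (F.card : ℝ) ≤ (2 * R / Real.sqrt 3 + 1) ^ 3 := by
  set r : ℝ := Real.sqrt 3 / 2 with hr
  have hr0 : 0 < r := by positivity
  have hsep : ∀ x ∈ F, ∀ y ∈ F, x ≠ y → Real.sqrt 3 ≤ dist x y := by
    intro x hx y hy hxy
    have hmem : x - y ∈ L := sub_mem (hF x hx).1 (hF y hy).1
    have hne : x - y ≠ 0 := sub_ne_zero_of_ne hxy
    have h3 := hL _ hmem hne
    have : Real.sqrt 3 ≤ Real.sqrt (‖x - y‖ ^ 2) := Real.sqrt_le_sqrt h3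
    rw [Real.sqrt_sq (norm_nonneg _)] at this
    rwa [dist_eq_norm]
  have hdisj : Set.Pairwise ↑F (Function.onFun Disjoint fun x : E3 => ball x r) := by
    intro x hx y hy hxy
    apply ball_disjoint_ball
    have := hsep x hx y hy hxy
    rw [hr]; linarith
  have hsub : ∀ x ∈ F, ball x r ⊆ ball (0 : E3) (R + r) := by
    intro x hx z hz
    have h1 : dist z x < r := mem_ball.mp hz
    have h2 : ‖x‖ ≤ R := (hF x hx).2
    have : dist z 0 < R + r := by
      calc dist z 0 ≤ dist z x + dist x 0 := dist_triangle _ _ _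
        _ < r + R := by rw [dist_zero_right]; linarith
        _ = R + r := by ring
    exact mem_ball.mpr this
  have hmeas : volume (⋃ x ∈ F, ball x r) = ∑ x ∈ F, volume (ball x r) :=
    measure_biUnion_finset hdisj (fun x _ => measurableSet_ball)
  have hle : ∑ x ∈ F, volume (ball x r) ≤ volume (ball (0 : E3) (R + r)) := by
    rw [← hmeas]; exact measure_mono (Set.iUnion₂_subset hsub)
  have hballr : ∀ x : E3, volume (ball x r) = ENNReal.ofReal (r ^ 3) * volume (ball (0:E3) 1) :=
    fun x => by rw [Measure.addHaar_ball volume x hr0.le, finrank_euclideanSpace_fin]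
  rw [Finset.sum_congr rfl (fun x _ => hballr x), Finset.sum_const, nsmul_eq_mul,
    Measure.addHaar_ball volume _ (by positivity : (0:ℝ) ≤ R + r), finrank_euclideanSpace_fin]
    at hle
  have hV0 : volume (ball (0:E3) 1) ≠ 0 := (measure_ball_pos volume 0 one_pos).ne'
  have hVtop : volume (ball (0:E3) 1) ≠ ⊤ := measure_ball_lt_top.ne
  rw [← mul_assoc] at hle
  have hle2 : (F.card : ℝ≥0∞) * ENNReal.ofReal (r ^ 3) ≤ ENNReal.ofReal ((R + r) ^ 3) :=
    (ENNReal.mul_le_mul_iff_left hV0 hVtop).mp hle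
  have hle3 := ENNReal.toReal_mono (by finiteness) hle2
  rw [ENNReal.toReal_mul, ENNReal.toReal_ofReal (by positivity), ENNReal.toReal_ofReal
    (by positivity)] at hle3
  norm_num at hle3
  -- hle3 : ↑F.card * r ^ 3 ≤ (R + r) ^ 3
  have h33 : Real.sqrt 3 * Real.sqrt 3 = 3 := Real.mul_self_sqrt (by norm_num)
  have hs3 : (0:ℝ) < Real.sqrt 3 := by positivity
  have hrr : (2 * R / Real.sqrt 3 + 1) * r = R + r := by
    rw [hr]; field_simp
  have : (F.card : ℝ) * r ^ 3 ≤ (2 * R / Real.sqrt 3 + 1) ^ 3 * r ^ 3 := by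
    calc (F.card : ℝ) * r ^ 3 ≤ (R + r) ^ 3 := hle3
      _ = ((2 * R / Real.sqrt 3 + 1) * r) ^ 3 := by rw [hrr]
      _ = (2 * R / Real.sqrt 3 + 1) ^ 3 * r ^ 3 := by ring
  exact le_of_mul_le_mul_right this (by positivity)

lemma exists_cover (L : AddSubgroup E3) (hL : ∀ x ∈ L, x ≠ 0 → (3 : ℝ) ≤ ‖x‖ ^ 2)
    (R : ℝ) (hR : 0 ≤ R) :
    ∃ s : Finset E3, (∀ x : E3, x ∈ L → ‖x‖ ≤ R → x ∈ s) ∧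
      ((s.card : ℝ) ≤ (2 * R / Real.sqrt 3 + 1) ^ 3) := by
  set S : Set E3 := {x : E3 | x ∈ L ∧ ‖x‖ ≤ R} with hS
  have hSfin : S.Finite := by
    by_contra hinf
    rw [← Set.not_infinite, not_not] at hinf
    obtain ⟨t, hts, htcard⟩ := hinf.exists_subset_card_eq (⌈(2 * R / Real.sqrt 3 + 1) ^ 3⌉₊ + 1)
    have hb := pack_finset L hL R hR t (fun x hx => hts hx)
    rw [htcard] at hb
    have : ((2 * R / Real.sqrt 3 + 1) ^ 3 : ℝ) ≤ ⌈(2 * R / Real.sqrt 3 + 1) ^ 3⌉₊ :=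
      Nat.le_ceil _
    push_cast at hb
    linarith
  refine ⟨hSfin.toFinset, fun x hxL hxR => ?_, ?_⟩
  · rw [Set.Finite.mem_toFinset]; exact ⟨hxL, hxR⟩
  · exact pack_finset L hL R hR hSfin.toFinset
      (fun x hx => by rwa [Set.Finite.mem_toFinset] at hx)

-- geometric identity in ENNReal
lemma geom_shift (A q : ℝ) (hA : 0 ≤ A) (hq0 : 0 < q) (hq1 : q < 1) :
    ∑' i : ℕ, ENNReal.ofReal ((1 - q) * A * q ^ i) = ENNReal.ofReal A := by
  have h1 : ∀ i : ℕ, ENNReal.ofReal ((1 - q) * A * q ^ i)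
      = ENNReal.ofReal ((1 - q) * A) * (ENNReal.ofReal q) ^ i := by
    intro i
    rw [ENNReal.ofReal_mul (by nlinarith), ENNReal.ofReal_pow hq0.le]
  simp_rw [h1]
  rw [ENNReal.tsum_mul_left, ENNReal.tsum_geometric]
  have h2 : (1 : ℝ≥0∞) - ENNReal.ofReal q = ENNReal.ofReal (1 - q) := by
    rw [← ENNReal.ofReal_one, ← ENNReal.ofReal_sub _ hq0.le]
  rw [h2, ENNReal.ofReal_mul (by linarith), mul_comm (ENNReal.ofReal (1-q)) _, mul_assoc,
    ← ENNReal.ofReal_inv_of_pos (by linarith), ← ENNReal.ofReal_mul (by linarith),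
    mul_inv_cancel₀ (by linarith), ENNReal.ofReal_one, mul_one]


lemma tail_bound (L : AddSubgroup E3) (hL : ∀ x ∈ L, x ≠ 0 → (3 : ℝ) ≤ ‖x‖ ^ 2)
    (a c δ N₀ ρ : ℝ) (ha : 0 < a) (hc : 0 < c) (hδ : 0 < δ) (hρ : 0 ≤ ρ)
    (hN : ∀ j : ℕ, (2 * Real.sqrt (a + (j + 1) * δ) / Real.sqrt 3 + 1) ^ 3 ≤ N₀ * ρ ^ j)
    (hq : ρ * Real.exp (-c * δ) < 1) :
    ∑' x : {x : E3 // x ∈ L ∧ a ≤ ‖x‖ ^ 2}, Real.exp (-c * ‖(x : E3)‖ ^ 2)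
      ≤ N₀ * (1 - Real.exp (-c * δ)) * Real.exp (-c * a) / (1 - ρ * Real.exp (-c * δ)) := by
  set T := {x : E3 // x ∈ L ∧ a ≤ ‖x‖ ^ 2}
  set q : ℝ := Real.exp (-c * δ) with hqdef
  have hq0 : 0 < q := Real.exp_pos _
  have hq1 : q < 1 := by
    rw [hqdef]
    calc Real.exp (-c * δ) < Real.exp 0 := by
          apply Real.exp_lt_exp.mpr; nlinarith
      _ = 1 := Real.exp_zero
  have hN₀pos : 0 < N₀ := by
    have h0 := hN 0
    simp only [Nat.cast_zero, pow_zero, mul_one, zero_add, one_mul] at h0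
    have h1 : (0:ℝ) < (2 * Real.sqrt (a + δ) / Real.sqrt 3 + 1) ^ 3 := by positivity
    linarith
  set f : T → ℝ := fun x => Real.exp (-c * ‖(x : E3)‖ ^ 2) with hf
  set w : ℕ → ℝ≥0∞ := fun j => ENNReal.ofReal ((1 - q) * Real.exp (-c * (a + j * δ))) with hw
  set g : T → ℕ → ℝ≥0∞ := fun x j =>
    Set.indicator {y : T | ‖(y : E3)‖ ^ 2 < a + (j + 1) * δ} (fun _ => w j) x with hg
  -- geometric sum of w from k
  have hwsum : ∀ k : ℕ, ∑' i : ℕ, w (k + i) = ENNReal.ofReal (Real.exp (-c * (a + k * δ))) := by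
    intro k
    have h1 : ∀ i : ℕ, (1 - q) * Real.exp (-c * (a + (k + i) * δ))
        = (1 - q) * Real.exp (-c * (a + k * δ)) * q ^ i := by
      intro i
      rw [hqdef, ← Real.exp_nat_mul, mul_assoc, ← Real.exp_add]
      ring_nf
    simp_rw [hw]
    push_cast
    simp_rw [h1]
    exact geom_shift _ q (by positivity) hq0 hq1
  -- Step 1 : pointwise bound
  have step1 : ∀ x : T, ENNReal.ofReal (f x) ≤ ∑' j : ℕ, g x j := by
    intro x
    obtain ⟨hxL, hxa⟩ := x.2
    set k : ℕ := ⌊(‖(x : E3)‖ ^ 2 - a) / δ⌋₊ with hk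
    have hnn : 0 ≤ (‖(x : E3)‖ ^ 2 - a) / δ := by
      apply div_nonneg _ hδ.le; linarith
    have hfl : (k : ℝ) * δ ≤ ‖(x : E3)‖ ^ 2 - a := by
      rw [hk]
      calc (⌊(‖(x : E3)‖ ^ 2 - a) / δ⌋₊ : ℝ) * δ ≤ ((‖(x : E3)‖ ^ 2 - a) / δ) * δ := by
            apply mul_le_mul_of_nonneg_right (Nat.floor_le hnn) hδ.le
        _ = ‖(x : E3)‖ ^ 2 - a := by field_simp
    have hfl2 : ‖(x : E3)‖ ^ 2 < a + (k + 1) * δ := by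
      have := Nat.lt_floor_add_one ((‖(x : E3)‖ ^ 2 - a) / δ)
      rw [← hk] at this
      have h2 : ‖(x : E3)‖ ^ 2 - a < (k + 1) * δ := by
        calc ‖(x : E3)‖ ^ 2 - a = ((‖(x : E3)‖ ^ 2 - a) / δ) * δ := by field_simp
          _ < (k + 1) * δ := by apply mul_lt_mul_of_pos_right _ hδ; push_cast; linarith
      linarith
    calc ENNReal.ofReal (f x) ≤ ENNReal.ofReal (Real.exp (-c * (a + k * δ))) := by
          apply ENNReal.ofReal_le_ofReal
          apply Real.exp_le_exp.mpr
          nlinarith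
      _ = ∑' i : ℕ, w (k + i) := (hwsum k).symm
      _ ≤ ∑' j : ℕ, g x j := by
          have hinj : Function.Injective (fun i : ℕ => k + i) := fun a b h => by
            simpa using h
          have := ENNReal.tsum_comp_le_tsum_of_injective hinj (g x)
          refine le_trans (le_of_eq ?_) this
          apply tsum_congr
          intro i
          have hcond : ‖(x : E3)‖ ^ 2 < a + ((k + i : ℕ) + 1) * δ := by
            have : ((k:ℝ) + 1) * δ ≤ ((k + i : ℕ) + 1) * δ := by
              apply mul_le_mul_of_nonneg_right _ hδ.le; push_cast; linarith
            linarith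
          have hmem : x ∈ {y : T | ‖(y : E3)‖ ^ 2 < a + ((k + i : ℕ) + 1) * δ} := hcond
          simp only [hg]
          rw [Set.indicator_of_mem hmem]
  -- Step 3 : per-j count bound
  have step3 : ∀ j : ℕ, ∑' x : T, g x j ≤ ENNReal.ofReal (N₀ * ρ ^ j) * w j := by
    intro j
    set R : ℝ := Real.sqrt (a + (j + 1) * δ) with hR
    have hR0 : 0 ≤ R := Real.sqrt_nonneg _
    obtain ⟨s, hs, hscard⟩ := exists_cover L hL R hR0
    set P : Set T := {y : T | ‖(y : E3)‖ ^ 2 < a + (j + 1) * δ} with hP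
    have haj : (0:ℝ) ≤ a + ((j:ℝ) + 1) * δ := by
      have : (0:ℝ) ≤ (j:ℝ) := j.cast_nonneg
      nlinarith
    have key : ∑' x : T, g x j ≤ (s.card : ℝ≥0∞) * w j := by
      have hmap : ∀ x : ↥P, (x : T).1 ∈ s := by
        intro ⟨⟨x, hxL, hxa⟩, hPx⟩
        apply hs x hxL
        have h1 : ‖x‖ ^ 2 ≤ R ^ 2 := by
          rw [hR, Real.sq_sqrt haj]
          exact le_of_lt hPx
        calc ‖x‖ = Real.sqrt (‖x‖ ^ 2) := (Real.sqrt_sq (norm_nonneg _)).symm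
          _ ≤ Real.sqrt (R ^ 2) := Real.sqrt_le_sqrt h1
          _ = R := Real.sqrt_sq hR0
      set ψ : ↥P → {e : E3 // e ∈ s} := fun x => ⟨(x : T).1, hmap x⟩ with hψ
      have hψinj : Function.Injective ψ := by
        intro x y h
        apply Subtype.ext; apply Subtype.ext
        simpa [hψ] using congrArg Subtype.val h
      have h1 : ∑' x : T, g x j = ∑' x : ↥P, w j :=
        (tsum_subtype P (fun _ => w j)).symm
      rw [h1]
      calc ∑' x : ↥P, w j = ∑' x : ↥P, (fun _ : {e : E3 // e ∈ s} => w j) (ψ x) := rfl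
        _ ≤ ∑' e : {e : E3 // e ∈ s}, w j := ENNReal.tsum_comp_le_tsum_of_injective hψinj _
        _ = (s.card : ℝ≥0∞) * w j := by
            rw [tsum_fintype]
            simp [Finset.sum_const, Finset.card_univ]
      done
    refine key.trans ?_
    apply mul_le_mul_left
    rw [← ENNReal.ofReal_natCast]
    apply ENNReal.ofReal_le_ofReal
    exact hscard.trans (hN j)
  -- combine
  set B : ℝ := N₀ * (1 - q) * Real.exp (-c * a) / (1 - ρ * q) with hB
  have hd : 0 < 1 - ρ * q := by linarith
  have hCnn : 0 ≤ N₀ * (1 - q) * Real.exp (-c * a) :=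
    mul_nonneg (mul_nonneg hN₀pos.le (by linarith)) (Real.exp_pos _).le
  have hBnn : 0 ≤ B := by
    rw [hB]; exact div_nonneg hCnn (by linarith)
  have main : ∑' x : T, ENNReal.ofReal (f x) ≤ ENNReal.ofReal B := by
    calc ∑' x : T, ENNReal.ofReal (f x) ≤ ∑' x : T, ∑' j : ℕ, g x j :=
          ENNReal.tsum_le_tsum step1
      _ = ∑' j : ℕ, ∑' x : T, g x j := ENNReal.tsum_comm
      _ ≤ ∑' j : ℕ, ENNReal.ofReal (N₀ * ρ ^ j) * w j := ENNReal.tsum_le_tsum step3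
      _ = ENNReal.ofReal B := by
          have h1 : ∀ j : ℕ, ENNReal.ofReal (N₀ * ρ ^ j) * w j
              = ENNReal.ofReal (N₀ * (1 - q) * Real.exp (-c * a)) * (ENNReal.ofReal (ρ * q)) ^ j := by
            intro j
            rw [hw]
            have hexp : Real.exp (-c * (a + j * δ)) = Real.exp (-c * a) * q ^ j := by
              rw [hqdef, ← Real.exp_nat_mul, ← Real.exp_add]; ring_nf
            rw [← ENNReal.ofReal_mul (mul_nonneg hN₀pos.le (pow_nonneg hρ j)), hexp]
            rw [← ENNReal.ofReal_pow (mul_nonneg hρ hq0.le), ← ENNReal.ofReal_mul hCnn]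
            congr 1
            rw [mul_pow]
            ring
          simp_rw [h1]
          rw [ENNReal.tsum_mul_left, ENNReal.tsum_geometric]
          have h2 : (1 : ℝ≥0∞) - ENNReal.ofReal (ρ * q) = ENNReal.ofReal (1 - ρ * q) := by
            rw [← ENNReal.ofReal_one, ← ENNReal.ofReal_sub _ (mul_nonneg hρ hq0.le)]
          rw [h2, ← ENNReal.ofReal_inv_of_pos hd, ← ENNReal.ofReal_mul hCnn, hB]
          rw [div_eq_mul_inv]
  -- convert to real
  have hfnn : ∀ x : T, 0 ≤ f x := fun x => (Real.exp_pos _).le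
  have hsum : Summable f := by
    have hne : ∑' x : T, ENNReal.ofReal (f x) ≠ ⊤ :=
      (lt_of_le_of_lt main ENNReal.ofReal_lt_top).ne
    have := ENNReal.summable_toReal hne
    refine this.congr fun x => ?_
    simp [ENNReal.toReal_ofReal (hfnn x)]
  have := ENNReal.ofReal_tsum_of_nonneg hfnn hsum
  rw [← this] at main
  exact (ENNReal.ofReal_le_ofReal_iff hBnn).mp main

lemma N0_bound {s u v N : ℝ} (hu : Real.sqrt s ≤ u) (hv : 0 < v) (hv3 : v ≤ Real.sqrt 3)
    (h : (2 * u / v + 1) ^ 3 ≤ N) :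
    (2 * Real.sqrt s / Real.sqrt 3 + 1) ^ 3 ≤ N := by
  have hu0 : 0 ≤ u := (Real.sqrt_nonneg s).trans hu
  refine le_trans (pow_le_pow_left₀ (by positivity) ?_ 3) h
  have h1 : 2 * Real.sqrt s / Real.sqrt 3 ≤ 2 * u / v :=
    div_le_div₀ (by positivity) (by linarith) hv hv3
  linarith

/-- Tail bounds for theta-like series over a lattice `L ⊆ ℝ³` whose nonzero vectors `x`
satisfy `‖x‖² ≥ 3`. -/
theorem lattice_sum_tail_estimates
    (L : AddSubgroup (EuclideanSpace ℝ (Fin 3)))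
    (hL : ∀ x ∈ L, x ≠ 0 → (3 : ℝ) ≤ ‖x‖ ^ 2) :
    (∑' x : {x : EuclideanSpace ℝ (Fin 3) // x ∈ L ∧ 3 * (2 : ℝ) ^ ((2 : ℝ)/3) ≤ ‖x‖ ^ 2},
        Real.exp (-Real.pi * ‖(x : EuclideanSpace ℝ (Fin 3))‖ ^ 2) <
      137.648 * 10 ^ (-(6 : ℤ))) ∧
    (∑' x : {x : EuclideanSpace ℝ (Fin 3) // x ∈ L ∧ (10 : ℝ) ≤ ‖x‖ ^ 2},
        Real.exp (-(Real.pi - 1/2) * ‖(x : EuclideanSpace ℝ (Fin 3))‖ ^ 2) <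
      0.001 * 10 ^ (-(6 : ℤ))) ∧
    (∑' x : {x : EuclideanSpace ℝ (Fin 3) // x ∈ L ∧ (10 : ℝ) ≤ ‖x‖ ^ 2},
        Real.exp (-1.568075 * ‖(x : EuclideanSpace ℝ (Fin 3))‖ ^ 2) <
      23.399 * 10 ^ (-(6 : ℤ))) := by
  have h3s : (1.73205 : ℝ) ≤ Real.sqrt 3 := sqrt_lb (by norm_num) (by norm_num)
  have hπ : (3.141592 : ℝ) < Real.pi := Real.pi_gt_d6
  refine ⟨?_, ?_, ?_⟩
  · -- case (i) : a = 3 * 2^(2/3), c = π, δ = 1, N₀ = 53.67, ρ = 1.352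
    set t : ℝ := (2 : ℝ) ^ ((2 : ℝ)/3) with htdef
    have ht3 : t ^ 3 = 4 := by
      rw [htdef, ← Real.rpow_natCast ((2:ℝ) ^ ((2:ℝ)/3)) 3, ← Real.rpow_mul (by norm_num)]
      rw [show ((2:ℝ)/3 * (3:ℕ)) = ((2:ℕ):ℝ) by push_cast; ring, Real.rpow_natCast]
      norm_num
    have ht0 : 0 < t := Real.rpow_pos_of_pos (by norm_num) _
    have ht_lb : (1.5874 : ℝ) ≤ t := by
      apply le_of_pow_le_pow_left₀ (n := 3) (by norm_num) ht0.le
      rw [ht3]; norm_num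
    have ht_ub : t ≤ (1.58741 : ℝ) := by
      apply le_of_pow_le_pow_left₀ (n := 3) (by norm_num) (by norm_num)
      rw [ht3]; norm_num
    set a : ℝ := 3 * t with hadef
    have ha : 0 < a := by positivity
    have ha_lb : (4.7622 : ℝ) ≤ a := by rw [hadef]; linarith
    have ha_ub : a ≤ (4.76223 : ℝ) := by rw [hadef]; linarith
    have hρarg : 3 * 1 / (2 * (a + 1)) ≤ (0.26032 : ℝ) := by
      rw [div_le_iff₀ (by linarith)]
      nlinarith
    have hρ : Real.exp (3 * 1 / (2 * (a + 1))) ≤ (1.352 : ℝ) := by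
      calc Real.exp (3 * 1 / (2 * (a + 1))) ≤ Real.exp 0.26032 :=
            Real.exp_le_exp.mpr hρarg
        _ ≤ (1 - 0.26032)⁻¹ := exp_ub_inv_one_sub (by norm_num) (by norm_num)
        _ ≤ 1.352 := by norm_num
    have hN₀ : (2 * Real.sqrt (a + 1) / Real.sqrt 3 + 1) ^ 3 ≤ (53.67 : ℝ) := by
      apply N0_bound (u := 2.400465) ?_ (by norm_num) h3s (by norm_num)
      refine sqrt_ub (by norm_num) ?_
      norm_num
      linarith
    -- exp bounds
    have hE3 : (2.7182818283:ℝ) ^ 3 * (1 + 0.141592 + 0.141592^2/2 + 0.141592^3/6 + 0.141592^4/24)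
        ≤ Real.exp 3.141592 := by
      have h := exp_lb 3 (t := 0.141592) (by norm_num)
      rwa [show ((3:ℕ):ℝ) + 0.141592 = (3.141592:ℝ) by norm_num] at h
    have he3 : Real.exp (-Real.pi * 1) ≤
        ((2.7182818283:ℝ) ^ 3 * (1 + 0.141592 + 0.141592^2/2 + 0.141592^3/6 + 0.141592^4/24))⁻¹ := by
      calc Real.exp (-Real.pi * 1) ≤ Real.exp (-3.141592) := by
            apply Real.exp_le_exp.mpr; linarith
        _ ≤ _ := exp_neg_ub (by positivity) hE3
    have hE14 : (2.7182818283:ℝ) ^ 14 * (1 + 0.96088 + 0.96088^2/2 + 0.96088^3/6 + 0.96088^4/24)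
        ≤ Real.exp (Real.pi * a) := by
      have h := exp_lb 14 (t := 0.96088) (by norm_num)
      rw [show ((14:ℕ):ℝ) + 0.96088 = (14.96088:ℝ) by norm_num] at h
      refine h.trans (Real.exp_le_exp.mpr ?_)
      have hmul : (3.141592 : ℝ) * 4.7622 ≤ Real.pi * a :=
        mul_le_mul hπ.le ha_lb (by norm_num) Real.pi_pos.le
      linarith
    have he14 : Real.exp (-Real.pi * a) ≤
        ((2.7182818283:ℝ) ^ 14 * (1 + 0.96088 + 0.96088^2/2 + 0.96088^3/6 + 0.96088^4/24))⁻¹ := by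
      have h := exp_neg_ub (by positivity) hE14
      rwa [← neg_mul] at h
    have hq : (1.352 : ℝ) * Real.exp (-Real.pi * 1) < 1 := by
      have := mul_le_mul_of_nonneg_left he3 (by norm_num : (0:ℝ) ≤ 1.352)
      refine lt_of_le_of_lt this ?_
      norm_num
    have key := tail_bound L hL a Real.pi 1 53.67 1.352 ha Real.pi_pos (by norm_num)
      (by norm_num) (hN_of ha (by norm_num) hρ hN₀) hq
    refine lt_of_le_of_lt key ?_
    have he1 : 1 - Real.exp (-Real.pi * 1) ≤ 1 := by
      have := Real.exp_pos (-Real.pi * 1); linarith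
    calc 53.67 * (1 - Real.exp (-Real.pi * 1)) * Real.exp (-Real.pi * a) /
          (1 - 1.352 * Real.exp (-Real.pi * 1))
        ≤ 53.67 * 1 *
            ((2.7182818283:ℝ) ^ 14 * (1 + 0.96088 + 0.96088^2/2 + 0.96088^3/6 + 0.96088^4/24))⁻¹ /
          (1 - 1.352 * ((2.7182818283:ℝ) ^ 3 *
            (1 + 0.141592 + 0.141592^2/2 + 0.141592^3/6 + 0.141592^4/24))⁻¹) := by
          apply div_le_div₀ (by norm_num) ?_ (by norm_num) ?_
          · apply mul_le_mul ?_ he14 (Real.exp_pos _).le (by norm_num)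
            linarith [Real.exp_pos (-Real.pi * 1)]
          · linarith [mul_le_mul_of_nonneg_left he3 (by norm_num : (0:ℝ) ≤ 1.352)]
      _ < 137.648 * 10 ^ (-(6 : ℤ)) := by norm_num
  · -- case (ii) : a = 10, c = π - 1/2, δ = 1, N₀ = 112.66, ρ = 1.1579
    have hc : (0:ℝ) < Real.pi - 1/2 := by linarith
    have hρ : Real.exp (3 * 1 / (2 * ((10:ℝ) + 1))) ≤ (1.1579 : ℝ) := by
      calc Real.exp (3 * 1 / (2 * ((10:ℝ) + 1))) = Real.exp (3/22) := by norm_num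
        _ ≤ (1 - 3/22)⁻¹ := exp_ub_inv_one_sub (by norm_num) (by norm_num)
        _ ≤ 1.1579 := by norm_num
    have hN₀ : (2 * Real.sqrt ((10:ℝ) + 1) / Real.sqrt 3 + 1) ^ 3 ≤ (112.66 : ℝ) := by
      apply N0_bound (u := 3.31663) ?_ (by norm_num) h3s (by norm_num)
      exact sqrt_ub (by norm_num) (by norm_num)
    have hE2 : (2.7182818283:ℝ) ^ 2 * (1 + 0.641592 + 0.641592^2/2 + 0.641592^3/6 + 0.641592^4/24)
        ≤ Real.exp 2.641592 := by
      have h := exp_lb 2 (t := 0.641592) (by norm_num)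
      rwa [show ((2:ℕ):ℝ) + 0.641592 = (2.641592:ℝ) by norm_num] at h
    have he2 : Real.exp (-(Real.pi - 1/2) * 1) ≤
        ((2.7182818283:ℝ) ^ 2 * (1 + 0.641592 + 0.641592^2/2 + 0.641592^3/6 + 0.641592^4/24))⁻¹ := by
      calc Real.exp (-(Real.pi - 1/2) * 1) ≤ Real.exp (-2.641592) := by
            apply Real.exp_le_exp.mpr; linarith
        _ ≤ _ := exp_neg_ub (by positivity) hE2
    have hE26 : (2.7182818283:ℝ) ^ 26 * (1 + 0.41592 + 0.41592^2/2 + 0.41592^3/6 + 0.41592^4/24)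
        ≤ Real.exp ((Real.pi - 1/2) * 10) := by
      have h := exp_lb 26 (t := 0.41592) (by norm_num)
      rw [show ((26:ℕ):ℝ) + 0.41592 = (26.41592:ℝ) by norm_num] at h
      refine h.trans (Real.exp_le_exp.mpr ?_)
      linarith
    have he26 : Real.exp (-(Real.pi - 1/2) * 10) ≤
        ((2.7182818283:ℝ) ^ 26 * (1 + 0.41592 + 0.41592^2/2 + 0.41592^3/6 + 0.41592^4/24))⁻¹ := by
      have h := exp_neg_ub (by positivity) hE26
      rwa [← neg_mul] at h
    have hq : (1.1579 : ℝ) * Real.exp (-(Real.pi - 1/2) * 1) < 1 := by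
      have := mul_le_mul_of_nonneg_left he2 (by norm_num : (0:ℝ) ≤ 1.1579)
      refine lt_of_le_of_lt this ?_
      norm_num
    have key := tail_bound L hL 10 (Real.pi - 1/2) 1 112.66 1.1579 (by norm_num) hc
      (by norm_num) (by norm_num) (hN_of (by norm_num) (by norm_num) hρ hN₀) hq
    refine lt_of_le_of_lt key ?_
    calc 112.66 * (1 - Real.exp (-(Real.pi - 1/2) * 1)) * Real.exp (-(Real.pi - 1/2) * 10) /
          (1 - 1.1579 * Real.exp (-(Real.pi - 1/2) * 1))
        ≤ 112.66 * 1 *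
            ((2.7182818283:ℝ) ^ 26 * (1 + 0.41592 + 0.41592^2/2 + 0.41592^3/6 + 0.41592^4/24))⁻¹ /
          (1 - 1.1579 * ((2.7182818283:ℝ) ^ 2 *
            (1 + 0.641592 + 0.641592^2/2 + 0.641592^3/6 + 0.641592^4/24))⁻¹) := by
          apply div_le_div₀ (by norm_num) ?_ (by norm_num) ?_
          · apply mul_le_mul ?_ he26 (Real.exp_pos _).le (by norm_num)
            linarith [Real.exp_pos (-(Real.pi - 1/2) * 1)]
          · linarith [mul_le_mul_of_nonneg_left he2 (by norm_num : (0:ℝ) ≤ 1.1579)]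
      _ < 0.001 * 10 ^ (-(6 : ℤ)) := by norm_num
  · -- case (iii) : a = 10, c = 1.568075, δ = 0.1, N₀ = 101.84, ρ = 1.01508
    have hρ : Real.exp (3 * 0.1 / (2 * ((10:ℝ) + 0.1))) ≤ (1.01508 : ℝ) := by
      calc Real.exp (3 * 0.1 / (2 * ((10:ℝ) + 0.1))) = Real.exp (3/202) := by norm_num
        _ ≤ (1 - 3/202)⁻¹ := exp_ub_inv_one_sub (by norm_num) (by norm_num)
        _ ≤ 1.01508 := by norm_num
    have hN₀ : (2 * Real.sqrt ((10:ℝ) + 0.1) / Real.sqrt 3 + 1) ^ 3 ≤ (101.84 : ℝ) := by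
      apply N0_bound (u := 3.1781) ?_ (by norm_num) h3s (by norm_num)
      exact sqrt_ub (by norm_num) (by norm_num)
    have hP : (1 + 0.1568075 + 0.1568075^2/2 + 0.1568075^3/6 + 0.1568075^4/24 : ℝ)
        ≤ Real.exp 0.1568075 := expPoly (by norm_num)
    have he3 : Real.exp (-(1.568075:ℝ) * 0.1) ≤
        ((1 + 0.1568075 + 0.1568075^2/2 + 0.1568075^3/6 + 0.1568075^4/24 : ℝ))⁻¹ := by
      have h := exp_neg_ub (by norm_num) hP
      rwa [show (-(0.1568075:ℝ)) = -1.568075 * 0.1 by norm_num] at h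
    have hE15 : (2.7182818283:ℝ) ^ 15 * (1 + 0.68075 + 0.68075^2/2 + 0.68075^3/6 + 0.68075^4/24)
        ≤ Real.exp 15.68075 := by
      have h := exp_lb 15 (t := 0.68075) (by norm_num)
      rwa [show ((15:ℕ):ℝ) + 0.68075 = (15.68075:ℝ) by norm_num] at h
    have he15 : Real.exp (-(1.568075:ℝ) * 10) ≤
        ((2.7182818283:ℝ) ^ 15 * (1 + 0.68075 + 0.68075^2/2 + 0.68075^3/6 + 0.68075^4/24))⁻¹ := by
      have h := exp_neg_ub (by positivity) hE15
      rwa [show (-(15.68075:ℝ)) = -1.568075 * 10 by norm_num] at h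
    have he1 : 1 - Real.exp (-(1.568075:ℝ) * 0.1) ≤ (0.1568075 : ℝ) := by
      have h := one_sub_exp_neg_le (0.1568075 : ℝ)
      rwa [show (-(0.1568075:ℝ)) = -1.568075 * 0.1 by norm_num] at h
    have hq : (1.01508 : ℝ) * Real.exp (-(1.568075:ℝ) * 0.1) < 1 := by
      have := mul_le_mul_of_nonneg_left he3 (by norm_num : (0:ℝ) ≤ 1.01508)
      refine lt_of_le_of_lt this ?_
      norm_num
    have key := tail_bound L hL 10 1.568075 0.1 101.84 1.01508 (by norm_num) (by norm_num)
      (by norm_num) (by norm_num) (hN_of (by norm_num) (by norm_num) hρ hN₀) hq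
    refine lt_of_le_of_lt key ?_
    calc 101.84 * (1 - Real.exp (-(1.568075:ℝ) * 0.1)) * Real.exp (-(1.568075:ℝ) * 10) /
          (1 - 1.01508 * Real.exp (-(1.568075:ℝ) * 0.1))
        ≤ 101.84 * 0.1568075 *
            ((2.7182818283:ℝ) ^ 15 * (1 + 0.68075 + 0.68075^2/2 + 0.68075^3/6 + 0.68075^4/24))⁻¹ /
          (1 - 1.01508 * ((1 + 0.1568075 + 0.1568075^2/2 + 0.1568075^3/6 + 0.1568075^4/24 : ℝ))⁻¹) := by
          apply div_le_div₀ (by norm_num) ?_ (by norm_num) ?_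
          · apply mul_le_mul ?_ he15 (Real.exp_pos _).le (by norm_num)
            linarith [Real.exp_pos (-(1.568075:ℝ) * 0.1)]
          · linarith [mul_le_mul_of_nonneg_left he3 (by norm_num : (0:ℝ) ≤ 1.01508)]
      _ < 23.399 * 10 ^ (-(6 : ℤ)) := by norm_num
end
end

section
/- Let F be a cyclic cubic field and let u = (u₀,u₁,u₂) ∈ (ℝ_{>0})³ with N(u) = u₀u₁u₂ = 1. If f ∈ O_F is nonzero and ‖uf‖² < 3·2^{2/3}, then f is a unit of O_F. Consequently, for a degree-zero divisor (O_F, u) with N(u) = 1, the sum S₁ = ∑_{f ∈ O_F∖{0}, ‖uf‖² < 3·2^{2/3}} e^{−π‖uf‖²} runs only over units of O_F. -/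
open NumberField
open scoped nonZeroDivisors

/-- If `N(u) = 1` and `f ∈ O_F` is nonzero with `‖uf‖² < 3·2^{2/3}`, then `f` is a
unit of `O_F`. -/
theorem isUnit_of_short_vector
    {F : Type*} [Field F] [NumberField F] [IsGalois ℚ F]
    (h3 : Module.finrank ℚ F = 3)
    (σ : F ≃ₐ[ℚ] F) (hσ : ∀ τ : F ≃ₐ[ℚ] F, τ ∈ Subgroup.zpowers σ)
    (ι : F →+* ℝ)
    (u : Fin 3 → ℝ) (hu : ∀ i, 0 < u i) (hN : u 0 * u 1 * u 2 = 1)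
    (f : 𝓞 F) (hf : f ≠ 0)
    (hshort : unorm2 σ ι u (f : F) < 3 * (2 : ℝ) ^ ((2 : ℝ)/3)) :
    IsUnit f := by
  classical
  by_contra hunit
  -- norm as an integer
  set n : ℤ := Algebra.norm ℤ f with hn
  have hqn : (n : ℚ) = Algebra.norm ℚ (f : F) := Algebra.coe_norm_int f
  have hnz : (n : ℚ) ≠ 0 := by
    rw [hqn]
    exact (Algebra.norm_ne_zero_iff).mpr (by simpa using hf)
  have hn0 : n ≠ 0 := by exact_mod_cast hnz
  -- |n| ≥ 2 since f is not a unit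
  have habs : ¬ |n| = 1 := by
    intro h
    apply hunit
    rw [NumberField.isUnit_iff_norm]
    have : (RingOfIntegers.norm ℚ f : ℚ) = Algebra.norm ℚ (f : F) := by
      simp [RingOfIntegers.coe_norm]
    rw [this, ← hqn]
    rw [← Rat.cast_intCast (α := ℚ) n] at *
    push_cast
    exact_mod_cast congrArg (fun z : ℤ => (z : ℚ)) h
  have h2 : 2 ≤ |n| := by
    have h1 : 1 < |n| := lt_of_le_of_ne (Int.one_le_abs hn0) (Ne.symm habs)
    exact h1
  -- the Galois group is {1, σ, σ²}
  have hcard : Fintype.card (F ≃ₐ[ℚ] F) = 3 := by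
    rw [← Nat.card_eq_fintype_card, IsGalois.card_aut_eq_finrank]; exact h3
  have hord : orderOf σ = 3 := by
    rw [orderOf_eq_card_of_forall_mem_zpowers hσ, Nat.card_eq_fintype_card, hcard]
  have hσ1 : σ ≠ 1 := by
    intro h; rw [h, orderOf_one] at hord; omega
  have hσ2 : σ * σ ≠ 1 := by
    intro h
    have h4 : orderOf σ ∣ 2 := orderOf_dvd_of_pow_eq_one (by rw [pow_two]; exact h)
    rw [hord] at h4
    norm_num at h4
  have hσ3 : σ * σ ≠ σ := by
    intro h; exact hσ1 (mul_right_cancel (by rw [h, one_mul]))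
  have huniv : (Finset.univ : Finset (F ≃ₐ[ℚ] F)) = {1, σ, σ * σ} := by
    symm
    apply Finset.eq_univ_of_card
    rw [hcard]
    rw [Finset.card_insert_of_notMem (by simp [hσ1.symm, hσ2.symm]),
      Finset.card_insert_of_notMem (by simp [hσ3.symm]), Finset.card_singleton]
  -- product formula for the norm
  have hprod : (n : ℝ) = ι (f : F) * ι (σ (f : F)) * ι (σ (σ (f : F))) := by
    have h1 : algebraMap ℚ F (Algebra.norm ℚ (f : F)) = ∏ τ : F ≃ₐ[ℚ] F, τ (f : F) :=
      Algebra.norm_eq_prod_automorphisms ℚ (f : F)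
    have h2 : ∏ τ : F ≃ₐ[ℚ] F, τ (f : F) = (f : F) * σ (f : F) * σ (σ (f : F)) := by
      rw [huniv, Finset.prod_insert (by simp [hσ1.symm, hσ2.symm]),
        Finset.prod_insert (by simp [hσ3.symm]), Finset.prod_singleton]
      simp [mul_assoc, AlgEquiv.mul_apply]
    have h3 : ι (algebraMap ℚ F (Algebra.norm ℚ (f : F))) = ((Algebra.norm ℚ (f : F) : ℚ) : ℝ) := by
      rw [show ι (algebraMap ℚ F (Algebra.norm ℚ (f : F)))
          = (ι.comp (algebraMap ℚ F)) (Algebra.norm ℚ (f : F)) from rfl,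
        eq_ratCast (ι.comp (algebraMap ℚ F))]
    calc (n : ℝ) = ((n : ℚ) : ℝ) := by push_cast; ring
    _ = ((Algebra.norm ℚ (f : F) : ℚ) : ℝ) := by rw [hqn]
    _ = ι (algebraMap ℚ F (Algebra.norm ℚ (f : F))) := h3.symm
    _ = ι ((f : F) * σ (f : F) * σ (σ (f : F))) := by rw [h1, h2]
    _ = _ := by simp [map_mul]
  -- AM-GM
  set p₁ : ℝ := (u 0 * ι (f : F)) ^ 2 with hp1
  set p₂ : ℝ := (u 1 * ι (σ (f : F))) ^ 2 with hp2
  set p₃ : ℝ := (u 2 * ι (σ (σ (f : F)))) ^ 2 with hp3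
  have hsum : unorm2 σ ι u (f : F) = p₁ + p₂ + p₃ := by
    simp only [unorm2, hp1, hp2, hp3]; ring
  have hprodp : p₁ * p₂ * p₃ = ((n : ℝ)) ^ 2 := by
    have key : p₁ * p₂ * p₃
        = (u 0 * u 1 * u 2) ^ 2 * (ι (f : F) * ι (σ (f : F)) * ι (σ (σ (f : F)))) ^ 2 := by
      rw [hp1, hp2, hp3]; ring
    rw [key, hN, hprod]; ring
  have hn4 : (4 : ℝ) ≤ p₁ * p₂ * p₃ := by
    rw [hprodp]
    have : (2 : ℝ) ≤ |(n : ℝ)| := by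
      rw [← Int.cast_abs]; exact_mod_cast h2
    nlinarith [abs_nonneg ((n : ℝ)), sq_abs ((n : ℝ))]
  have hgm := Real.geom_mean_le_arith_mean3_weighted
    (by norm_num : (0:ℝ) ≤ 1/3) (by norm_num : (0:ℝ) ≤ 1/3) (by norm_num : (0:ℝ) ≤ 1/3)
    (sq_nonneg _ : 0 ≤ p₁) (sq_nonneg _ : 0 ≤ p₂) (sq_nonneg _ : 0 ≤ p₃) (by norm_num)
  have hmul : p₁ ^ ((1:ℝ)/3) * p₂ ^ ((1:ℝ)/3) * p₃ ^ ((1:ℝ)/3)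
      = (p₁ * p₂ * p₃) ^ ((1:ℝ)/3) := by
    rw [Real.mul_rpow (by positivity) (sq_nonneg _), Real.mul_rpow (sq_nonneg _) (sq_nonneg _)]
  have hlow : (2 : ℝ) ^ ((2:ℝ)/3) ≤ (p₁ * p₂ * p₃) ^ ((1:ℝ)/3) := by
    have h4 : (4 : ℝ) ^ ((1:ℝ)/3) = (2 : ℝ) ^ ((2:ℝ)/3) := by
      rw [show (4:ℝ) = (2:ℝ) ^ (2:ℝ) by rw [Real.rpow_two]; norm_num,
        ← Real.rpow_mul (by norm_num)]
      norm_num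
    rw [← h4]
    exact Real.rpow_le_rpow (by norm_num) hn4 (by norm_num)
  have : 3 * (2 : ℝ) ^ ((2:ℝ)/3) ≤ p₁ + p₂ + p₃ := by
    have := hgm
    rw [hmul] at this
    nlinarith [hlow, this]
  rw [hsum] at hshort
  linarith
end

section
/- Let F be a cyclic cubic field with Galois group generated by σ. For every u = (u₀,u₁,u₂) ∈ (ℝ_{>0})³, one has the identity 3·( k⁰(O_F,u) − k⁰(O_F,(1,1,1)) ) = ∑_{f ∈ O_F} e^{−π‖f‖²} G₂(u,f), where G₂(u,f) = G₁(u,f) + G₁(u,σ(f)) + G₁(u,σ²(f)) and G₁(u,f) = exp(−π(‖uf‖² − ‖f‖²)) − 1. Consequently, for u ≠ (1,1,1), the inequality k⁰(O_F,u) < k⁰(O_F,(1,1,1)) is equivalent to ∑_{f ∈ O_F} e^{−π‖f‖²} G₂(u,f) < 0. -/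
open NumberField Module
open scoped nonZeroDivisors

/-- `G₁(u,f) = exp(−π(‖uf‖² − ‖f‖²)) − 1`. -/
noncomputable def G1 {F : Type*} [Field F] [Algebra ℚ F] (σ : F ≃ₐ[ℚ] F) (ι : F →+* ℝ)
    (u : Fin 3 → ℝ) (f : F) : ℝ :=
  Real.exp (-Real.pi * (unorm2 σ ι u f - fnorm2 σ ι f)) - 1

/-- `G₂(u,f) = G₁(u,f) + G₁(u,σf) + G₁(u,σ²f)`. -/
noncomputable def G2 {F : Type*} [Field F] [Algebra ℚ F] (σ : F ≃ₐ[ℚ] F) (ι : F →+* ℝ)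
    (u : Fin 3 → ℝ) (f : F) : ℝ :=
  G1 σ ι u f + G1 σ ι u (σ f) + G1 σ ι u (σ (σ f))

section
variable {F : Type*} [Field F] [NumberField F] (σ : F ≃ₐ[ℚ] F) (ι : F →+* ℝ)

/-- the three embeddings as ring homs -/
noncomputable def psi (i : Fin 3) : F →+* ℝ :=
  ι.comp ((σ ^ (i : ℕ)) : F ≃ₐ[ℚ] F).toAlgHom.toRingHom

lemma psi_apply (i : Fin 3) (f : F) : psi σ ι i f = ι ((σ ^ (i:ℕ)) f) := rfl

lemma psi_zero (f : F) : psi σ ι 0 f = ι f := by simp [psi_apply]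
lemma psi_one (f : F) : psi σ ι 1 f = ι (σ f) := by simp [psi_apply]
lemma psi_two (f : F) : psi σ ι 2 f = ι (σ (σ f)) := by
  show ι ((σ ^ (2:ℕ)) f) = _
  rw [sq, AlgEquiv.mul_apply]

lemma unorm2_eq (u : Fin 3 → ℝ) (f : F) :
    unorm2 σ ι u f = ∑ i, ((u i) * psi σ ι i f) ^ 2 := by
  rw [Fin.sum_univ_three, psi_zero, psi_one, psi_two, unorm2]
  ring

lemma psi_injective (hord : orderOf σ = 3) : Function.Injective (psi σ ι) := by
  intro i j h
  have hσ : (σ ^ (i:ℕ)) = (σ ^ (j:ℕ)) := by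
    apply AlgEquiv.ext
    intro f
    exact ι.injective (by rw [← psi_apply, ← psi_apply, h])
  have := pow_injOn_Iio_orderOf (x := σ) (by rw [hord]; exact i.2) (by rw [hord]; exact j.2) hσ
  exact Fin.ext this

lemma psi_linearIndependent (hord : orderOf σ = 3) :
    LinearIndependent ℝ (fun i : Fin 3 => ((psi σ ι i : F →* ℝ) : F → ℝ)) := by
  have h := (linearIndependent_monoidHom F ℝ).comp
    (fun i : Fin 3 => (psi σ ι i : F →* ℝ))
    (fun i j hij => psi_injective σ ι hord (by
      apply RingHom.ext; intro x; exact DFunLike.congr_fun hij x))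
  exact h
end

section
variable {F : Type*} [Field F] [NumberField F] (σ : F ≃ₐ[ℚ] F) (ι : F →+* ℝ)

lemma det_ne_zero (hord : orderOf σ = 3) {κ : Type*} [Fintype κ] [DecidableEq κ]
    (B : Basis κ ℚ F) (e : κ ≃ Fin 3) :
    (Matrix.of (fun i j => psi σ ι i (B (e.symm j)))).det ≠ 0 := by
  intro hdet
  obtain ⟨v, hv0, hv⟩ := Matrix.exists_vecMul_eq_zero_iff.mpr hdet
  -- the linear functional ∑ i, v i * psi i
  let L : F →ₗ[ℚ] ℝ :=
    { toFun := fun f => ∑ i, v i * psi σ ι i f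
      map_add' := by intros; simp [map_add, mul_add, Finset.sum_add_distrib]
      map_smul' := by
        intro c x
        have h : ∀ i : Fin 3, psi σ ι i ((c : F) * x) = (c : ℝ) * psi σ ι i x := fun i => by
          rw [map_mul, map_ratCast]
        simp only [h, RingHom.id_apply, Rat.smul_def, Finset.mul_sum]
        exact Finset.sum_congr rfl fun i _ => by ring }
  have hLB : ∀ j, L (B j) = 0 := by
    intro j
    have := congr_fun hv (e j)
    simp only [Matrix.vecMul, dotProduct, Matrix.of_apply, Pi.zero_apply,
      Matrix.transpose_apply] at this ⊢
    show ∑ i, v i * psi σ ι i (B j) = 0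
    simpa [Equiv.symm_apply_apply] using this
  have hL : L = 0 := B.ext (fun j => by rw [hLB]; rfl)
  have hall : ∀ f : F, ∑ i, v i * psi σ ι i f = 0 := fun f => by
    exact LinearMap.congr_fun hL f
  have := Fintype.linearIndependent_iff.mp (psi_linearIndependent σ ι hord) v ?_
  · exact hv0 (funext this)
  · funext f
    simpa [Finset.sum_apply, smul_eq_mul] using hall f
end

lemma sumZ' {a : ℝ} (ha : 0 < a) : Summable fun n : ℤ => Real.exp (-a * (n : ℝ) ^ 2) := by
  have key : Summable fun n : ℕ => Real.exp (-a * (n : ℝ) ^ 2) := by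
    apply Summable.of_nonneg_of_le (fun n => (Real.exp_pos _).le)
      (g := fun n : ℕ => Real.exp (-a * (n:ℝ)^2)) (f := fun n : ℕ => Real.exp (-a) ^ n)
    · intro n
      rw [← Real.exp_nat_mul]
      apply Real.exp_le_exp.mpr
      have h1 : (n : ℝ) ≤ (n : ℝ) ^ 2 := by
        exact_mod_cast Nat.cast_le.mpr (Nat.le_self_pow two_ne_zero n)
      nlinarith
    · exact summable_geometric_of_lt_one (Real.exp_pos _).le
        (Real.exp_lt_one_iff.mpr (by linarith))
  apply Summable.of_nat_of_neg <;> simpa using key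

def e3 : (Fin 3 → ℤ) ≃ ℤ × ℤ × ℤ where
  toFun n := (n 0, n 1, n 2)
  invFun p := ![p.1, p.2.1, p.2.2]
  left_inv n := by funext i; fin_cases i <;> rfl
  right_inv p := rfl

lemma sumPi3 {a : ℝ} (ha : 0 < a) :
    Summable fun n : Fin 3 → ℤ => Real.exp (-a * ∑ j, ((n j : ℝ)) ^ 2) := by
  rw [← e3.symm.summable_iff]
  have h1 := sumZ' ha
  have h := Summable.mul_of_nonneg h1 (Summable.mul_of_nonneg h1 h1
    (fun n => (Real.exp_pos _).le) (fun n => (Real.exp_pos _).le))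
    (fun n => (Real.exp_pos _).le)
    (fun p => mul_nonneg (Real.exp_pos _).le (Real.exp_pos _).le)
  convert h using 1
  funext p
  show Real.exp (-a * ∑ j, ((e3.symm p j : ℝ)) ^ 2) = _
  have : ∀ j : Fin 3, e3.symm p j = ![p.1, p.2.1, p.2.2] j := fun _ => rfl
  simp only [this, Fin.sum_univ_three]
  rw [← Real.exp_add, ← Real.exp_add]
  congr 1
  simp [Matrix.cons_val_zero, Matrix.cons_val_one]
  ring

section
variable {F : Type*} [Field F] [NumberField F] (σ : F ≃ₐ[ℚ] F) (ι : F →+* ℝ)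

lemma summable_k0 (hord : orderOf σ = 3) (h3 : finrank ℚ F = 3)
    (u : Fin 3 → ℝ) (hu : ∀ i, 0 < u i) :
    Summable fun g : (Set.range (algebraMap (𝓞 F) F)) =>
      Real.exp (-Real.pi * unorm2 σ ι u (g : F)) := by
  classical
  have hcard : Fintype.card (Free.ChooseBasisIndex ℤ (𝓞 F)) = 3 := by
    rw [← finrank_eq_card_chooseBasisIndex, RingOfIntegers.rank, h3]
  let e : Free.ChooseBasisIndex ℤ (𝓞 F) ≃ Fin 3 := Fintype.equivFinOfCardEq hcard
  let BZ : Basis (Fin 3) ℤ (𝓞 F) := (RingOfIntegers.basis F).reindex e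
  let BQ : Basis (Fin 3) ℚ F := (integralBasis F).reindex e
  have hBQ : ∀ j, BQ j = algebraMap (𝓞 F) F (BZ j) := by
    intro j
    simp [BQ, BZ, Basis.reindex_apply, integralBasis_apply]
  let N : Matrix (Fin 3) (Fin 3) ℝ := Matrix.of fun i j => psi σ ι i (BQ j)
  have hdetN : N.det ≠ 0 := by
    have := det_ne_zero σ ι hord BQ (Equiv.refl _)
    simpa [N] using this
  let M : Matrix (Fin 3) (Fin 3) ℝ := Matrix.of fun i j => u i * N i j
  let T := Matrix.toEuclideanLin M
  have hker : LinearMap.ker T = ⊥ := by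
    rw [LinearMap.ker_eq_bot']
    intro x hx
    have hmv : M.mulVec (WithLp.equiv 2 (Fin 3 → ℝ) x) = 0 := by
      have := congrArg (WithLp.equiv 2 (Fin 3 → ℝ)) hx
      exact this
    have hNv : N.mulVec (WithLp.equiv 2 (Fin 3 → ℝ) x) = 0 := by
      funext i
      have h1 := congr_fun hmv i
      have h2 : (M.mulVec (WithLp.equiv 2 (Fin 3 → ℝ) x)) i
          = u i * (N.mulVec (WithLp.equiv 2 (Fin 3 → ℝ) x)) i := by
        simp only [Matrix.mulVec, dotProduct, M, Matrix.of_apply, Finset.mul_sum]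
        exact Finset.sum_congr rfl fun j _ => by ring
      rw [h2] at h1
      simpa using (mul_eq_zero.mp h1).resolve_left (ne_of_gt (hu i))
    by_contra hx0
    have hy0 : WithLp.equiv 2 (Fin 3 → ℝ) x ≠ 0 := by
      intro h
      exact hx0 (by simpa using congrArg (WithLp.equiv 2 (Fin 3 → ℝ)).symm h)
    exact hdetN (Matrix.exists_mulVec_eq_zero_iff.mp ⟨_, hy0, hNv⟩)
  obtain ⟨K, hK, hanti⟩ := T.exists_antilipschitzWith hker
  have hπ := Real.pi_pos
  have hK' : (0:ℝ) < K := hK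
  set a : ℝ := Real.pi / (K:ℝ)^2 with ha_def
  have ha : 0 < a := div_pos hπ (by positivity)
  have inj : Function.Injective (algebraMap (𝓞 F) F) := IsFractionRing.injective (𝓞 F) F
  let eS : (Fin 3 → ℤ) ≃ (Set.range (algebraMap (𝓞 F) F)) :=
    (BZ.equivFun.toEquiv.symm).trans (Equiv.ofInjective _ inj)
  rw [← Equiv.summable_iff eS]
  have hcoe : ∀ n, ((eS n : F)) = algebraMap (𝓞 F) F (BZ.equivFun.symm n) := fun n => rfl
  let nE : (Fin 3 → ℤ) → EuclideanSpace ℝ (Fin 3) :=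
    fun n => (WithLp.equiv 2 (Fin 3 → ℝ)).symm (fun j => (n j : ℝ))
  have hval : ∀ n i, psi σ ι i ((eS n : F)) = ∑ j, (n j : ℝ) * N i j := by
    intro n i
    rw [hcoe]
    show ((psi σ ι i).comp (algebraMap (𝓞 F) F)) (BZ.equivFun.symm n) = _
    rw [Basis.equivFun_symm_apply, map_sum]
    refine Finset.sum_congr rfl fun j _ => ?_
    rw [map_zsmul, zsmul_eq_mul]
    congr 1
    show psi σ ι i (algebraMap (𝓞 F) F (BZ j)) = N i j
    rw [← hBQ]
    rfl
  have hnormsq : ∀ y : EuclideanSpace ℝ (Fin 3), ‖y‖^2 = ∑ i, (y i)^2 := by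
    intro y
    rw [EuclideanSpace.norm_eq, Real.sq_sqrt (by positivity)]
    simp [Real.norm_eq_abs, sq_abs]
  have hq : ∀ n, unorm2 σ ι u ((eS n : F)) = ‖T (nE n)‖^2 := by
    intro n
    rw [unorm2_eq, hnormsq]
    refine Finset.sum_congr rfl fun i _ => ?_
    congr 1
    rw [hval]
    show _ = (T ((WithLp.equiv 2 (Fin 3 → ℝ)).symm (fun j => (n j : ℝ)))) i
    show _ = M.mulVec (fun j => (n j : ℝ)) i
    simp only [Matrix.mulVec, dotProduct, M, Matrix.of_apply, Finset.mul_sum]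
    exact Finset.sum_congr rfl fun j _ => by ring
  apply Summable.of_nonneg_of_le (fun n => (Real.exp_pos _).le)
    (g := fun n => Real.exp (-Real.pi * unorm2 σ ι u ((eS n : F))))
    (f := fun n => Real.exp (-a * ∑ j, ((n j : ℝ))^2)) _ (sumPi3 ha)
  intro n
  rw [Real.exp_le_exp, hq]
  have hb : ‖nE n‖ ≤ K * ‖T (nE n)‖ := by
    have := hanti.le_mul_dist (nE n) 0
    simpa [dist_zero_right, map_zero] using this
  have hsum : ∑ j, ((n j : ℝ))^2 = ‖nE n‖^2 := by
    rw [hnormsq]; rfl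
  rw [hsum]
  have h1 : ‖nE n‖^2 ≤ (K:ℝ)^2 * ‖T (nE n)‖^2 := by nlinarith [norm_nonneg (nE n), norm_nonneg (T (nE n))]
  have h2 : a * ((K:ℝ)^2 * ‖T (nE n)‖^2) = Real.pi * ‖T (nE n)‖^2 := by
    rw [ha_def, div_mul_eq_mul_div, div_eq_iff (by positivity)]
    ring
  nlinarith [mul_le_mul_of_nonneg_left h1 ha.le]
end

section
variable {F : Type*} [Field F] [Algebra ℚ F] (σ : F ≃ₐ[ℚ] F) (ι : F →+* ℝ)

lemma term_eq (u : Fin 3 → ℝ) (f : F) (hf3 : σ (σ (σ f)) = f) :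
    Real.exp (-Real.pi * fnorm2 σ ι f) * G2 σ ι u f
      = (Real.exp (-Real.pi * unorm2 σ ι u f) - Real.exp (-Real.pi * unorm2 σ ι 1 f))
        + ((Real.exp (-Real.pi * unorm2 σ ι u (σ f)) - Real.exp (-Real.pi * unorm2 σ ι 1 (σ f)))
        + (Real.exp (-Real.pi * unorm2 σ ι u (σ (σ f)))
            - Real.exp (-Real.pi * unorm2 σ ι 1 (σ (σ f))))) := by
  have hone : ∀ g : F, unorm2 σ ι 1 g = fnorm2 σ ι g := by
    intro g; simp [unorm2, fnorm2]
  have h1 : fnorm2 σ ι (σ f) = fnorm2 σ ι f := by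
    unfold fnorm2; rw [hf3]; ring
  have h2 : fnorm2 σ ι (σ (σ f)) = fnorm2 σ ι f := by
    unfold fnorm2; rw [hf3]; ring
  have e1 : ∀ A B : ℝ, Real.exp (-Real.pi * B) * (Real.exp (-Real.pi * (A - B)) - 1)
      = Real.exp (-Real.pi * A) - Real.exp (-Real.pi * B) := by
    intro A B
    rw [mul_sub, mul_one, ← Real.exp_add]
    have : -Real.pi * B + -Real.pi * (A - B) = -Real.pi * A := by ring
    rw [this]
  simp only [G2, G1, hone, h1, h2]
  rw [mul_add, mul_add, e1, e1, e1]
  ring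
end

set_option maxHeartbeats 1000000 in
/-- The fundamental identity `3(k⁰(O_F,u) − k⁰(O_F,1)) = ∑_{f∈O_F} e^{−π‖f‖²} G₂(u,f)`,
and the resulting equivalence for `u ≠ (1,1,1)`. -/
theorem k0_diff_eq_G2_sum
    {F : Type*} [Field F] [NumberField F] [IsGalois ℚ F]
    (h3 : Module.finrank ℚ F = 3)
    (σ : F ≃ₐ[ℚ] F) (hσ : ∀ τ : F ≃ₐ[ℚ] F, τ ∈ Subgroup.zpowers σ)
    (ι : F →+* ℝ)
    (u : Fin 3 → ℝ) (hu : ∀ i, 0 < u i) :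
    3 * (k0 σ ι (Set.range (algebraMap (𝓞 F) F)) u -
        k0 σ ι (Set.range (algebraMap (𝓞 F) F)) 1) =
      (∑' f : Set.range (algebraMap (𝓞 F) F),
        Real.exp (-Real.pi * fnorm2 σ ι (f : F)) * G2 σ ι u (f : F)) ∧
    (u ≠ 1 →
      (k0 σ ι (Set.range (algebraMap (𝓞 F) F)) u <
          k0 σ ι (Set.range (algebraMap (𝓞 F) F)) 1 ↔
        (∑' f : Set.range (algebraMap (𝓞 F) F),
          Real.exp (-Real.pi * fnorm2 σ ι (f : F)) * G2 σ ι u (f : F)) < 0)) := by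
  classical
  set S : Set F := Set.range (algebraMap (𝓞 F) F) with hS
  have hcardG : Fintype.card (F ≃ₐ[ℚ] F) = 3 := by
    rw [← Nat.card_eq_fintype_card, IsGalois.card_aut_eq_finrank, h3]
  have htop : Subgroup.zpowers σ = ⊤ := (Subgroup.eq_top_iff' _).mpr hσ
  have hord : orderOf σ = 3 := by
    have h := Nat.card_zpowers σ
    rw [htop] at h
    rw [← h, Subgroup.card_top, Nat.card_eq_fintype_card, hcardG]
  have hσ3 : ∀ f : F, σ (σ (σ f)) = f := by
    intro f
    have h := pow_orderOf_eq_one σ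
    rw [hord] at h
    have h2 : (σ ^ 3) f = σ (σ (σ f)) := by
      rw [pow_succ, pow_succ, pow_one, AlgEquiv.mul_apply, AlgEquiv.mul_apply]
    rw [← h2, h]
    rfl
  have hmapS : ∀ f : F, f ∈ S → σ f ∈ S := by
    rintro _ ⟨x, rfl⟩
    have hx : IsIntegral ℤ ((algebraMap (𝓞 F) F x)) := RingOfIntegers.isIntegral_coe x
    have hint : IsIntegral ℤ (σ (algebraMap (𝓞 F) F x)) :=
      hx.map (σ.toAlgHom.restrictScalars ℤ)
    exact ⟨⟨_, hint⟩, rfl⟩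
  have hmem : ∀ g : S, σ (g : F) ∈ S := fun g => hmapS _ g.2
  let eSig : S ≃ S :=
    { toFun := fun g => ⟨σ (g : F), hmem g⟩
      invFun := fun g => ⟨σ (σ (g : F)), hmapS _ (hmem g)⟩
      left_inv := fun g => Subtype.ext (hσ3 (g : F))
      right_inv := fun g => Subtype.ext (hσ3 (g : F)) }
  have hu1 : ∀ i, (0:ℝ) < (1 : Fin 3 → ℝ) i := fun i => by norm_num
  have hSu : Summable fun g : S => Real.exp (-Real.pi * unorm2 σ ι u (g : F)) :=
    summable_k0 σ ι hord h3 u hu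
  have hS1 : Summable fun g : S => Real.exp (-Real.pi * unorm2 σ ι 1 (g : F)) :=
    summable_k0 σ ι hord h3 1 hu1
  have hSuσ : Summable fun g : S => Real.exp (-Real.pi * unorm2 σ ι u (σ (g : F))) :=
    (Equiv.summable_iff eSig).mpr hSu
  have hS1σ : Summable fun g : S => Real.exp (-Real.pi * unorm2 σ ι 1 (σ (g : F))) :=
    (Equiv.summable_iff eSig).mpr hS1
  have hSuσ2 : Summable fun g : S => Real.exp (-Real.pi * unorm2 σ ι u (σ (σ (g : F)))) :=
    (Equiv.summable_iff (eSig.trans eSig)).mpr hSu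
  have hS1σ2 : Summable fun g : S => Real.exp (-Real.pi * unorm2 σ ι 1 (σ (σ (g : F)))) :=
    (Equiv.summable_iff (eSig.trans eSig)).mpr hS1
  have htσu : ∑' g : S, Real.exp (-Real.pi * unorm2 σ ι u (σ (g : F)))
      = ∑' g : S, Real.exp (-Real.pi * unorm2 σ ι u (g : F)) :=
    Equiv.tsum_eq eSig (fun g : S => Real.exp (-Real.pi * unorm2 σ ι u (g : F)))
  have htσ1 : ∑' g : S, Real.exp (-Real.pi * unorm2 σ ι 1 (σ (g : F)))
      = ∑' g : S, Real.exp (-Real.pi * unorm2 σ ι 1 (g : F)) :=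
    Equiv.tsum_eq eSig (fun g : S => Real.exp (-Real.pi * unorm2 σ ι 1 (g : F)))
  have htσ2u : ∑' g : S, Real.exp (-Real.pi * unorm2 σ ι u (σ (σ (g : F))))
      = ∑' g : S, Real.exp (-Real.pi * unorm2 σ ι u (g : F)) :=
    Equiv.tsum_eq (eSig.trans eSig) (fun g : S => Real.exp (-Real.pi * unorm2 σ ι u (g : F)))
  have htσ21 : ∑' g : S, Real.exp (-Real.pi * unorm2 σ ι 1 (σ (σ (g : F))))
      = ∑' g : S, Real.exp (-Real.pi * unorm2 σ ι 1 (g : F)) :=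
    Equiv.tsum_eq (eSig.trans eSig) (fun g : S => Real.exp (-Real.pi * unorm2 σ ι 1 (g : F)))
  have hmain : 3 * (k0 σ ι S u - k0 σ ι S 1)
      = ∑' f : S, Real.exp (-Real.pi * fnorm2 σ ι (f : F)) * G2 σ ι u (f : F) := by
    have hcongr : (fun g : S => Real.exp (-Real.pi * fnorm2 σ ι (g : F)) * G2 σ ι u (g : F))
        = fun g : S =>
          (Real.exp (-Real.pi * unorm2 σ ι u (g : F))
              - Real.exp (-Real.pi * unorm2 σ ι 1 (g : F)))
          + ((Real.exp (-Real.pi * unorm2 σ ι u (σ (g : F)))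
              - Real.exp (-Real.pi * unorm2 σ ι 1 (σ (g : F))))
          + (Real.exp (-Real.pi * unorm2 σ ι u (σ (σ (g : F))))
              - Real.exp (-Real.pi * unorm2 σ ι 1 (σ (σ (g : F)))))) := by
      funext g
      exact term_eq σ ι u (g : F) (hσ3 (g : F))
    rw [hcongr, Summable.tsum_add (hSu.sub hS1) ((hSuσ.sub hS1σ).add (hSuσ2.sub hS1σ2)),
      Summable.tsum_add (hSuσ.sub hS1σ) (hSuσ2.sub hS1σ2),
      Summable.tsum_sub hSu hS1, Summable.tsum_sub hSuσ hS1σ, Summable.tsum_sub hSuσ2 hS1σ2,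
      htσu, htσ1, htσ2u, htσ21]
    show 3 * (k0 σ ι S u - k0 σ ι S 1) = (k0 σ ι S u - k0 σ ι S 1)
      + ((k0 σ ι S u - k0 σ ι S 1) + (k0 σ ι S u - k0 σ ι S 1))
    ring
  refine ⟨hmain, fun _ => ⟨fun h => by linarith, fun h => by linarith⟩⟩
end
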